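/- arXiv:1811.01111 — 9 statements merged into one kernel-verified Lean document; each statement's English description precedes it below -/
import Mathlib

section
/- Suppose F ⊆ 2^[n] is shifted and r-wise t-intersecting (with r ≥ 2, t ≥ 1). Then the family F(1̄) := {F ∈ F : 1 ∉ F} is r-wise (t + r − 1)-intersecting. -/
open Finset

/-- The `(i ← j)` shift of a single set. -/
def shiftSet (i j : ℕ) (A : Finset ℕ) : Finset ℕ :=
  if j ∈ A ∧ i ∉ A then insert i (A.erase j) else A

/-- The `(i ← j)` shift of a family. -/
def shiftFam (i j : ℕ) (𝒜 : Finset (Finset ℕ)) : Finset (Finset ℕ) :=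
  𝒜.image (shiftSet i j) ∪ 𝒜.filter (fun A => shiftSet i j A ∈ 𝒜)

/-- A family of subsets of `[n]` is shifted if it is invariant under all
`(i ← j)` shifts with `1 ≤ i < j ≤ n`. -/
def IsShifted (n : ℕ) (𝒜 : Finset (Finset ℕ)) : Prop :=
  ∀ i j : ℕ, 1 ≤ i → i < j → j ≤ n → shiftFam i j 𝒜 = 𝒜

/-- A family is `r`-wise `t`-intersecting if any `r` of its members
(with repetition) have at least `t` common elements. -/
def RWiseIntersecting (r t : ℕ) (F : Finset (Finset ℕ)) : Prop :=
  ∀ f : Fin r → Finset ℕ, (∀ i, f i ∈ F) → t ≤ (⋂ i, ((f i : Finset ℕ) : Set ℕ)).ncard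

theorem stmt_5 (n r t : ℕ) (hr : 2 ≤ r) (ht : 1 ≤ t)
    (𝒜 : Finset (Finset ℕ)) (h𝒜 : ∀ A ∈ 𝒜, A ⊆ Finset.Icc 1 n)
    (hshift : IsShifted n 𝒜) (hint : RWiseIntersecting r t 𝒜) :
    RWiseIntersecting r (t + r - 1) (𝒜.filter fun A => 1 ∉ A) := by
  classical
  intro f hf
  have hr0 : 0 < r := by omega
  have hfA : ∀ i, f i ∈ 𝒜 := fun i => (mem_filter.mp (hf i)).1
  have hf1 : ∀ i, (1 : ℕ) ∉ f i := fun i => (mem_filter.mp (hf i)).2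
  set i0 : Fin r := ⟨0, hr0⟩ with hi0
  set T : Finset ℕ := (f i0).filter (fun x => ∀ i, x ∈ f i) with hT
  have hmemT : ∀ x, x ∈ T ↔ ∀ i, x ∈ f i := fun x =>
    ⟨fun h => (mem_filter.mp h).2, fun h => mem_filter.mpr ⟨h i0, h⟩⟩
  have hcoe : (⋂ i, ((f i : Finset ℕ) : Set ℕ)) = ↑T := by
    ext x
    simp only [Set.mem_iInter, Finset.mem_coe, hmemT]
  rw [hcoe, Set.ncard_coe_finset]
  by_contra hlt
  push_neg at hlt
  have ht_le : t ≤ T.card := by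
    have := hint f hfA
    rwa [hcoe, Set.ncard_coe_finset] at this
  set s := T.card with hs
  set k := s - t + 1 with hk
  have hk_le : k ≤ r - 1 := by omega
  have hk_le_s : k ≤ s := by omega
  obtain ⟨J, hJT, hJcard⟩ := Finset.exists_subset_card_eq hk_le_s
  have e : {x // x ∈ J} ≃ Fin k := J.equivFinOfCardEq hJcard
  set j : Fin k → ℕ := fun m => ((e.symm m : {x // x ∈ J}) : ℕ) with hj
  have hjJ : ∀ m, j m ∈ J := fun m => (e.symm m).2
  have hjT : ∀ m, j m ∈ T := fun m => hJT (hjJ m)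
  have hj2 : ∀ m, 2 ≤ j m := by
    intro m
    have h1 : j m ∈ f i0 := (hmemT _).mp (hjT m) i0
    have h2 : j m ∈ Finset.Icc 1 n := h𝒜 _ (hfA i0) h1
    have h3 : j m ≠ 1 := fun h => hf1 i0 (h ▸ h1)
    have := (Finset.mem_Icc.mp h2).1
    omega
  have hjn : ∀ m, j m ≤ n := by
    intro m
    have h1 : j m ∈ f i0 := (hmemT _).mp (hjT m) i0
    exact (Finset.mem_Icc.mp (h𝒜 _ (hfA i0) h1)).2
  set g : Fin r → Finset ℕ := fun i =>
    if h : (i : ℕ) < k then shiftSet 1 (j ⟨i, h⟩) (f i) else f i with hg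
  have hgA : ∀ i, g i ∈ 𝒜 := by
    intro i
    rw [hg]
    dsimp only
    split
    · rename_i h
      have hsh := hshift 1 (j ⟨i, h⟩) le_rfl (hj2 _) (hjn _)
      rw [← hsh, shiftFam]
      exact Finset.mem_union_left _ (Finset.mem_image_of_mem _ (hfA i))
    · exact hfA i
  -- the shift condition holds for each shifted index
  have hcond : ∀ (i : Fin r) (h : (i : ℕ) < k),
      shiftSet 1 (j ⟨i, h⟩) (f i) = insert 1 ((f i).erase (j ⟨i, h⟩)) := by
    intro i h
    rw [shiftSet, if_pos]
    exact ⟨(hmemT _).mp (hjT _) i, hf1 i⟩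
  have hTg := hint g hgA
  set T' : Finset ℕ := (g i0).filter (fun x => ∀ i, x ∈ g i) with hT'
  have hmemT' : ∀ x, x ∈ T' ↔ ∀ i, x ∈ g i := fun x =>
    ⟨fun h => (mem_filter.mp h).2, fun h => mem_filter.mpr ⟨h i0, h⟩⟩
  have hcoe' : (⋂ i, ((g i : Finset ℕ) : Set ℕ)) = ↑T' := by
    ext x
    simp only [Set.mem_iInter, Finset.mem_coe, hmemT']
  rw [hcoe', Set.ncard_coe_finset] at hTg
  -- T' ⊆ T \ J
  have hsub : T' ⊆ T \ J := by
    intro x hx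
    have hxall : ∀ i, x ∈ g i := (hmemT' x).mp hx
    have hilast : (⟨r - 1, by omega⟩ : Fin r) = ⟨r - 1, by omega⟩ := rfl
    have hxne1 : x ≠ 1 := by
      have hlast := hxall ⟨r - 1, by omega⟩
      rw [hg] at hlast
      dsimp only at hlast
      rw [dif_neg (by simpa using by omega : ¬ (r - 1 < k))] at hlast
      exact fun h => hf1 _ (h ▸ hlast)
    have hxf : ∀ (i : Fin r), x ∈ f i ∧ ∀ (h : (i : ℕ) < k), x ≠ j ⟨i, h⟩ := by
      intro i
      have hxi := hxall i
      rw [hg] at hxi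
      dsimp only at hxi
      by_cases h : (i : ℕ) < k
      · rw [dif_pos h, hcond i h, Finset.mem_insert] at hxi
        rcases hxi with h1 | h2
        · exact absurd h1 hxne1
        · exact ⟨Finset.mem_of_mem_erase h2, fun _ => Finset.ne_of_mem_erase h2⟩
      · rw [dif_neg h] at hxi
        exact ⟨hxi, fun h' => absurd h' h⟩
    have hxT : x ∈ T := (hmemT x).mpr fun i => (hxf i).1
    have hxJ : x ∉ J := by
      intro hxJ
      set m : Fin k := e ⟨x, hxJ⟩ with hm
      have hjm : j m = x := by
        show ((e.symm (e ⟨x, hxJ⟩) : {y // y ∈ J}) : ℕ) = x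
        rw [Equiv.symm_apply_apply]
      have hmr : (m : ℕ) < r := by omega
      have := (hxf ⟨m, hmr⟩).2 m.2
      apply this
      rw [← hjm]
    exact Finset.mem_sdiff.mpr ⟨hxT, hxJ⟩
  have hcard : (T \ J).card = s - k := by
    rw [Finset.card_sdiff_of_subset hJT, hJcard]
  have := Finset.card_le_card hsub
  omega
end

section
/- Let F_1, F_2 ⊆ ([n] choose k) both be shifted families. Then |F_1 ∩ F_2| ≥ |F_1|·|F_2| / C(n,k); that is, any two shifted k-uniform families are positively correlated. -/
open Finset

lemma isShifted_iff {n : ℕ} {F : Finset (Finset ℕ)} :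
    IsShifted n F ↔ ∀ i j, 1 ≤ i → i < j → j ≤ n → ∀ A ∈ F, shiftSet i j A ∈ F := by
  constructor
  · intro h i j hi hij hj A hA
    have hh := h i j hi hij hj
    rw [← hh]
    exact mem_union_left _ (mem_image_of_mem _ hA)
  · intro h i j hi hij hj
    apply Subset.antisymm
    · intro A hA
      rw [shiftFam, mem_union] at hA
      rcases hA with hA | hA
      · obtain ⟨B, hB, rfl⟩ := mem_image.1 hA
        exact h i j hi hij hj B hB
      · exact (mem_filter.1 hA).1
    · intro A hA
      exact mem_union_right _ (mem_filter.2 ⟨hA, h i j hi hij hj A hA⟩)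

/-- The subfamily of sets avoiding `n`. -/
def famDel (n : ℕ) (F : Finset (Finset ℕ)) : Finset (Finset ℕ) :=
  F.filter (fun A => n ∉ A)

/-- The link: sets containing `n`, with `n` removed. -/
def famLink (n : ℕ) (F : Finset (Finset ℕ)) : Finset (Finset ℕ) :=
  (F.filter (fun A => n ∈ A)).image (fun A => A.erase n)

lemma mem_famLink {n : ℕ} {F : Finset (Finset ℕ)} {B : Finset ℕ} :
    B ∈ famLink n F ↔ n ∉ B ∧ insert n B ∈ F := by
  constructor
  · intro h
    obtain ⟨A, hA, rfl⟩ := mem_image.1 h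
    have hA' := mem_filter.1 hA
    refine ⟨notMem_erase _ _, ?_⟩
    rw [insert_erase hA'.2]
    exact hA'.1
  · intro ⟨h1, h2⟩
    refine mem_image.2 ⟨insert n B, mem_filter.2 ⟨h2, mem_insert_self _ _⟩, ?_⟩
    rw [erase_insert h1]

lemma card_famLink (n : ℕ) (F : Finset (Finset ℕ)) :
    (famLink n F).card = (F.filter (fun A => n ∈ A)).card := by
  apply card_image_of_injOn
  intro A hA B hB hAB
  have hA' := (mem_filter.1 hA).2
  have hB' := (mem_filter.1 hB).2
  have hAB' : A.erase n = B.erase n := hAB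
  rw [← insert_erase hA', hAB', insert_erase hB']

lemma card_split (n : ℕ) (F : Finset (Finset ℕ)) :
    F.card = (famDel n F).card + (famLink n F).card := by
  rw [card_famLink, famDel, add_comm]
  exact (card_filter_add_card_filter_not (fun A => n ∈ A)).symm

lemma famDel_inter (n : ℕ) (F₁ F₂ : Finset (Finset ℕ)) :
    famDel n (F₁ ∩ F₂) = famDel n F₁ ∩ famDel n F₂ := by
  ext A; simp [famDel, mem_filter, mem_inter]; tauto

lemma famLink_inter (n : ℕ) (F₁ F₂ : Finset (Finset ℕ)) :
    famLink n (F₁ ∩ F₂) = famLink n F₁ ∩ famLink n F₂ := by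
  ext B; simp [mem_famLink, mem_inter]; tauto

lemma famDel_subset {n k : ℕ} {F : Finset (Finset ℕ)}
    (h : F ⊆ (Icc 1 (n+1)).powersetCard k) :
    famDel (n+1) F ⊆ (Icc 1 n).powersetCard k := by
  intro A hA
  have h1 := mem_filter.1 hA
  have h2 := mem_powersetCard.1 (h h1.1)
  refine mem_powersetCard.2 ⟨?_, h2.2⟩
  intro x hx
  have := mem_Icc.1 (h2.1 hx)
  have hxn : x ≠ n + 1 := fun he => h1.2 (he ▸ hx)
  exact mem_Icc.2 ⟨this.1, by omega⟩

lemma famLink_subset {n k : ℕ} {F : Finset (Finset ℕ)}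
    (h : F ⊆ (Icc 1 (n+1)).powersetCard (k+1)) :
    famLink (n+1) F ⊆ (Icc 1 n).powersetCard k := by
  intro B hB
  obtain ⟨h1, h2⟩ := mem_famLink.1 hB
  have h3 := mem_powersetCard.1 (h h2)
  refine mem_powersetCard.2 ⟨?_, ?_⟩
  · intro x hx
    have hx' : x ∈ insert (n+1) B := mem_insert_of_mem hx
    have := mem_Icc.1 (h3.1 hx')
    have hxn : x ≠ n + 1 := fun he => h1 (he ▸ hx)
    exact mem_Icc.2 ⟨this.1, by omega⟩
  · have := h3.2
    rw [card_insert_of_notMem h1] at this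
    omega

lemma not_mem_shiftSet {i j m : ℕ} {A : Finset ℕ} (hi : i ≠ m) (hm : m ∉ A) :
    m ∉ shiftSet i j A := by
  unfold shiftSet
  split
  · intro h
    rcases mem_insert.1 h with h | h
    · exact hi h.symm
    · exact hm (mem_of_mem_erase h)
  · exact hm

lemma shiftSet_insert {i j m : ℕ} (hi : i ≠ m) (hj : j ≠ m) (B : Finset ℕ) (hB : m ∉ B) :
    shiftSet i j (insert m B) = insert m (shiftSet i j B) := by
  by_cases hc : j ∈ B ∧ i ∉ B
  · have hc' : j ∈ insert m B ∧ i ∉ insert m B := by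
      refine ⟨mem_insert_of_mem hc.1, ?_⟩
      intro h
      rcases mem_insert.1 h with h | h
      · exact hi h
      · exact hc.2 h
    rw [shiftSet, if_pos hc', shiftSet, if_pos hc, erase_insert_of_ne hj.symm .. ,
      Finset.insert_comm]
  · have hc' : ¬ (j ∈ insert m B ∧ i ∉ insert m B) := by
      intro ⟨ha, hb⟩
      apply hc
      refine ⟨?_, fun h => hb (mem_insert_of_mem h)⟩
      rcases mem_insert.1 ha with h | h
      · exact absurd h hj
      · exact h
    rw [shiftSet, if_neg hc', shiftSet, if_neg hc]

lemma famDel_shifted {n : ℕ} {F : Finset (Finset ℕ)} (hs : IsShifted (n+1) F) :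
    IsShifted n (famDel (n+1) F) := by
  rw [isShifted_iff]
  intro i j hi hij hj A hA
  have h1 := mem_filter.1 hA
  refine mem_filter.2 ⟨isShifted_iff.1 hs i j hi hij (by omega) A h1.1, ?_⟩
  exact not_mem_shiftSet (by omega) h1.2

lemma famLink_shifted {n : ℕ} {F : Finset (Finset ℕ)} (hs : IsShifted (n+1) F) :
    IsShifted n (famLink (n+1) F) := by
  rw [isShifted_iff]
  intro i j hi hij hj B hB
  obtain ⟨h1, h2⟩ := mem_famLink.1 hB
  refine mem_famLink.2 ⟨not_mem_shiftSet (by omega) h1, ?_⟩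
  rw [← shiftSet_insert (by omega : i ≠ n+1) (by omega : j ≠ n+1) B h1]
  exact isShifted_iff.1 hs i j hi hij (by omega) _ h2

lemma density {n k : ℕ} {F : Finset (Finset ℕ)}
    (hF : F ⊆ (Icc 1 (n+1)).powersetCard (k+1)) (hs : IsShifted (n+1) F) :
    (famLink (n+1) F).card * (n - k) ≤ (famDel (n+1) F).card * (k+1) := by
  classical
  apply card_mul_le_card_mul (fun B A => ∃ i ∈ Icc 1 n, i ∉ B ∧ A = insert i B)
  · -- lower bound on degrees from link side
    intro B hB
    obtain ⟨h1, h2⟩ := mem_famLink.1 hB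
    have hBsub := mem_powersetCard.1 (famLink_subset hF hB)
    have hcard : (Icc 1 n \ B).card = n - k := by
      rw [card_sdiff_of_subset hBsub.1, Nat.card_Icc, hBsub.2]
      omega
    rw [← hcard]
    apply card_le_card_of_injOn (fun i => insert i B)
    · intro i hi
      have hi' := mem_sdiff.1 hi
      have hi2 := mem_Icc.1 hi'.1
      refine (mem_bipartiteAbove _).2 ⟨?_, ⟨i, hi'.1, hi'.2, rfl⟩⟩
      have hkey : insert i B = shiftSet i (n+1) (insert (n+1) B) := by
        have hcond : (n+1) ∈ insert (n+1) B ∧ i ∉ insert (n+1) B := by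
          refine ⟨mem_insert_self _ _, fun h => ?_⟩
          rcases mem_insert.1 h with h | h
          · omega
          · exact hi'.2 h
        rw [shiftSet, if_pos hcond, erase_insert h1]
      refine mem_filter.2 ⟨?_, ?_⟩
      · beta_reduce
        rw [hkey]
        exact isShifted_iff.1 hs i (n+1) hi2.1 (by omega) le_rfl _ h2
      · intro h
        rcases mem_insert.1 h with h | h
        · omega
        · exact h1 h
    · intro i hi i' hi' he
      have hi1 := (mem_sdiff.1 hi).2
      have hi2 := (mem_sdiff.1 hi').2
      have he' : insert i B = insert i' B := he
      have : i ∈ insert i' B := he' ▸ mem_insert_self i B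
      rcases mem_insert.1 this with h | h
      · exact h
      · exact absurd h hi1
  · -- upper bound on degrees from del side
    intro A hA
    have hAcard : A.card = k + 1 := (mem_powersetCard.1 (hF (mem_filter.1 hA).1)).2
    calc (bipartiteBelow (fun B A => ∃ i ∈ Icc 1 n, i ∉ B ∧ A = insert i B)
            (famLink (n+1) F) A).card
        ≤ (A.image (fun i => A.erase i)).card := by
          apply card_le_card
          intro B hB
          obtain ⟨_, i, _, hiB, rfl⟩ := (mem_bipartiteBelow _).1 hB
          refine mem_image.2 ⟨i, mem_insert_self _ _, ?_⟩
          rw [erase_insert hiB]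
      _ ≤ A.card := card_image_le
      _ = k + 1 := hAcard

lemma cheb (u₁ v₁ u₂ v₂ : ℕ) (h₁ : v₁ ≤ u₁) (h₂ : v₂ ≤ u₂) :
    u₁*v₂ + v₁*u₂ ≤ u₁*u₂ + v₁*v₂ := by
  obtain ⟨d₁, rfl⟩ := Nat.exists_eq_add_of_le h₁
  obtain ⟨d₂, rfl⟩ := Nat.exists_eq_add_of_le h₂
  nlinarith

lemma singleton_case {F₁ F₂ : Finset (Finset ℕ)} (s : Finset ℕ)
    (h₁ : F₁ ⊆ {s}) (h₂ : F₂ ⊆ {s}) :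
    F₁.card * F₂.card ≤ (F₁ ∩ F₂).card := by
  rcases subset_singleton_iff.1 h₁ with rfl | rfl <;>
    rcases subset_singleton_iff.1 h₂ with rfl | rfl <;> simp

theorem main_nat : ∀ n k : ℕ, ∀ F₁ F₂ : Finset (Finset ℕ),
    F₁ ⊆ (Icc 1 n).powersetCard k → F₂ ⊆ (Icc 1 n).powersetCard k →
    IsShifted n F₁ → IsShifted n F₂ →
    F₁.card * F₂.card ≤ (F₁ ∩ F₂).card * n.choose k := by
  intro n
  induction n with
  | zero =>
    intro k F₁ F₂ h₁ h₂ _ _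
    match k with
    | 0 =>
      simp only [powersetCard_zero] at h₁ h₂
      simpa using singleton_case ∅ h₁ h₂
    | k+1 =>
      rw [powersetCard_eq_empty.2 (by simp)] at h₁
      rw [subset_empty.1 h₁]
      simp
  | succ n ih =>
    intro k F₁ F₂ h₁ h₂ hs₁ hs₂
    match k with
    | 0 =>
      simp only [powersetCard_zero] at h₁ h₂
      simpa using singleton_case ∅ h₁ h₂
    | k+1 =>
      have hIcc : (Icc 1 (n+1)).card = n + 1 := by rw [Nat.card_Icc]; omega
      rcases lt_trichotomy (k+1) (n+1) with hk | hk | hk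
      · -- main case: k + 1 ≤ n
        have hkn : k + 1 ≤ n := by omega
        set a₁ := (famDel (n+1) F₁).card
        set b₁ := (famLink (n+1) F₁).card
        set a₂ := (famDel (n+1) F₂).card
        set b₂ := (famLink (n+1) F₂).card
        set p := n.choose (k+1)
        set q := n.choose k
        have hp : 0 < p := Nat.choose_pos hkn
        have hq : 0 < q := Nat.choose_pos (by omega)
        have hchoose : (n+1).choose (k+1) = q + p := Nat.choose_succ_succ n k
        -- induction hypotheses
        have hX : a₁ * a₂ ≤ (famDel (n+1) F₁ ∩ famDel (n+1) F₂).card * p :=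
          ih (k+1) _ _ (famDel_subset h₁) (famDel_subset h₂)
            (famDel_shifted hs₁) (famDel_shifted hs₂)
        have hY : b₁ * b₂ ≤ (famLink (n+1) F₁ ∩ famLink (n+1) F₂).card * q :=
          ih k _ _ (famLink_subset h₁) (famLink_subset h₂)
            (famLink_shifted hs₁) (famLink_shifted hs₂)
        set X := (famDel (n+1) F₁ ∩ famDel (n+1) F₂).card
        set Y := (famLink (n+1) F₁ ∩ famLink (n+1) F₂).card
        -- density
        have hid : p * (k+1) = q * (n - k) := Nat.choose_succ_right_eq n k
        have hd : ∀ (F : Finset (Finset ℕ)), F ⊆ (Icc 1 (n+1)).powersetCard (k+1) →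
            IsShifted (n+1) F →
            (famLink (n+1) F).card * p ≤ (famDel (n+1) F).card * q := by
          intro F hF hs
          have h := density hF hs
          have h2 : (famLink (n+1) F).card * p * (k+1) ≤ (famDel (n+1) F).card * q * (k+1) := by
            calc (famLink (n+1) F).card * p * (k+1)
                = (famLink (n+1) F).card * (n - k) * q := by rw [mul_assoc, hid]; ring
              _ ≤ (famDel (n+1) F).card * (k+1) * q := Nat.mul_le_mul_right q h
              _ = (famDel (n+1) F).card * q * (k+1) := by ring
          exact Nat.le_of_mul_le_mul_right h2 (by omega)
        have hd₁ : b₁ * p ≤ a₁ * q := hd F₁ h₁ hs₁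
        have hd₂ : b₂ * p ≤ a₂ * q := hd F₂ h₂ hs₂
        -- card splits
        have hc₁ : F₁.card = a₁ + b₁ := card_split (n+1) F₁
        have hc₂ : F₂.card = a₂ + b₂ := card_split (n+1) F₂
        have hcI : (F₁ ∩ F₂).card = X + Y := by
          rw [card_split (n+1) (F₁ ∩ F₂), famDel_inter, famLink_inter]
        rw [hc₁, hc₂, hcI, hchoose]
        -- numeric combination
        refine Nat.le_of_mul_le_mul_right (c := p * q) ?_ (Nat.mul_pos hp hq)
        have hcheb : (a₁*q)*(b₂*p) + (b₁*p)*(a₂*q) ≤ (a₁*q)*(a₂*q) + (b₁*p)*(b₂*p) :=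
          cheb _ _ _ _ hd₁ hd₂
        have hX' : a₁*a₂*(q*(p+q)) ≤ X*p*(q*(p+q)) := Nat.mul_le_mul_right _ hX
        have hY' : b₁*b₂*(p*(p+q)) ≤ Y*q*(p*(p+q)) := Nat.mul_le_mul_right _ hY
        nlinarith [hcheb, hX', hY']
      · -- k + 1 = n + 1
        rw [← hIcc] at hk
        rw [hk, powersetCard_self] at h₁ h₂
        rw [hk, hIcc, Nat.choose_self, mul_one]
        exact singleton_case _ h₁ h₂
      · -- k + 1 > n + 1 : families empty
        rw [powersetCard_eq_empty.2 (by omega)] at h₁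
        rw [subset_empty.1 h₁]
        simp

theorem stmt_8 (n k : ℕ) (F₁ F₂ : Finset (Finset ℕ))
    (h₁ : F₁ ⊆ (Finset.Icc 1 n).powersetCard k)
    (h₂ : F₂ ⊆ (Finset.Icc 1 n).powersetCard k)
    (hs₁ : IsShifted n F₁) (hs₂ : IsShifted n F₂) :
    (F₁.card : ℝ) * (F₂.card : ℝ) / (n.choose k : ℝ) ≤ ((F₁ ∩ F₂).card : ℝ) := by
  by_cases hk : k ≤ n
  · have hc : (0:ℝ) < n.choose k := by exact_mod_cast Nat.choose_pos hk
    rw [div_le_iff₀ hc]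
    exact_mod_cast main_nat n k F₁ F₂ h₁ h₂ hs₁ hs₂
  · have : (Icc 1 n).powersetCard k = ∅ := by
      apply powersetCard_eq_empty.2
      rw [Nat.card_Icc]
      omega
    rw [this] at h₁
    rw [subset_empty.1 h₁]
    simp
end

section
/- Let n ≥ a + b. If A ⊆ ([n] choose a) and B ⊆ ([n] choose b) are cross-intersecting and |A| ≥ C(x, n-a) for some real number x with n − a ≤ x ≤ n, then |B| ≤ C(n, b) − C(x, b). -/
open Finset

/-- Generalized binomial coefficient `C(x,k)` for real `x`. -/
noncomputable def genBinom (x : ℝ) (k : ℕ) : ℝ :=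
  if (k : ℝ) ≤ x then (∏ i ∈ Finset.range k, (x - (i : ℝ))) / (Nat.factorial k : ℝ) else 0


section KKAux

open Finset UV
open scoped FinsetFamily
open Finset UV
open scoped FinsetFamily
namespace MyKK


/-- untruncated generalized binomial -/
noncomputable def PP (x : ℝ) (k : ℕ) : ℝ :=
  (∏ i ∈ Finset.range k, (x - (i : ℝ))) / (Nat.factorial k : ℝ)

lemma PP_zero (x : ℝ) : PP x 0 = 1 := by simp [PP]

lemma PP_one (x : ℝ) : PP x 1 = x := by simp [PP]

lemma PP_nonneg {x : ℝ} {k : ℕ} (h : (k : ℝ) - 1 ≤ x) : 0 ≤ PP x k := by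
  apply div_nonneg _ (by positivity)
  apply Finset.prod_nonneg
  intro i hi
  rw [Finset.mem_range] at hi
  have : (i : ℝ) + 1 ≤ k := by exact_mod_cast hi
  linarith

lemma PP_mono {x y : ℝ} {k : ℕ} (h : (k : ℝ) - 1 ≤ x) (hxy : x ≤ y) : PP x k ≤ PP y k := by
  unfold PP
  rw [div_le_div_iff_of_pos_right (by positivity)]
  apply Finset.prod_le_prod
  · intro i hi
    rw [Finset.mem_range] at hi
    have : (i : ℝ) + 1 ≤ k := by exact_mod_cast hi
    linarith
  · intro i _
    linarith

lemma PP_pascal (x : ℝ) (m : ℕ) : PP x (m + 1) = PP (x - 1) m + PP (x - 1) (m + 1) := by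
  have h1 : ∏ i ∈ Finset.range (m + 1), (x - (i : ℝ))
      = x * ∏ i ∈ Finset.range m, (x - 1 - (i : ℝ)) := by
    rw [Finset.prod_range_succ']
    simp only [Nat.cast_zero, sub_zero]
    rw [mul_comm]
    congr 1
    apply Finset.prod_congr rfl
    intro i _
    push_cast
    ring
  have h2 : ∏ i ∈ Finset.range (m + 1), (x - 1 - (i : ℝ))
      = (∏ i ∈ Finset.range m, (x - 1 - (i : ℝ))) * (x - 1 - m) :=
    Finset.prod_range_succ _ _
  simp only [PP, h1, h2, Nat.factorial_succ]
  have hm : (Nat.factorial m : ℝ) ≠ 0 := by positivity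
  have hm1 : ((m : ℝ) + 1) ≠ 0 := by positivity
  push_cast
  field_simp
  ring

lemma PP_nat (m k : ℕ) : PP (m : ℝ) k = (m.choose k : ℝ) := by
  rcases lt_or_ge m k with h | h
  · rw [Nat.choose_eq_zero_of_lt h]
    unfold PP
    rw [Finset.prod_eq_zero (Finset.mem_range.2 h) (by simp), zero_div]
    simp
  · have hprod : ∏ i ∈ Finset.range k, ((m : ℝ) - (i : ℝ)) = (m.descFactorial k : ℝ) := by
      rw [Nat.descFactorial_eq_prod_range, Nat.cast_prod]
      apply Finset.prod_congr rfl
      intro i hi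
      rw [Finset.mem_range] at hi
      rw [Nat.cast_sub (le_of_lt (lt_of_lt_of_le hi h))]
    unfold PP
    rw [hprod, Nat.descFactorial_eq_factorial_mul_choose]
    push_cast
    rw [mul_comm, mul_div_assoc, div_self (by positivity), mul_one]

lemma PP_self (r : ℕ) : PP (r : ℝ) r = 1 := by rw [PP_nat, Nat.choose_self, Nat.cast_one]

lemma one_le_PP {x : ℝ} {r : ℕ} (h : (r : ℝ) ≤ x) : 1 ≤ PP x r := by
  have := PP_mono (x := (r : ℝ)) (k := r) (by linarith) h
  rw [PP_self] at this
  exact this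



/-- Measure of a family: sum over sets of sum of 2^a. -/
def fm (𝒜 : Finset (Finset ℕ)) : ℕ := ∑ A ∈ 𝒜, ∑ a ∈ A, 2 ^ a

lemma fm_compression_lt {i j : ℕ} (hij : i < j) {𝒜 : Finset (Finset ℕ)}
    (h : 𝓒 {i} {j} 𝒜 ≠ 𝒜) : fm (𝓒 {i} {j} 𝒜) < fm 𝒜 := by
  classical
  have hU : ({i} : Finset ℕ).Nonempty := singleton_nonempty _
  have hV : ({j} : Finset ℕ).Nonempty := singleton_nonempty _
  have hmax : Finset.max' {i} hU < Finset.max' {j} hV := by simpa using hij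
  rw [UV.compression] at h ⊢
  have q : ∀ Q ∈ {A ∈ 𝒜 | compress {i} {j} A ∉ 𝒜}, compress {i} {j} Q ≠ Q := by
    simp_rw [mem_filter]
    intro Q hQ hQ'
    rw [hQ'] at hQ
    exact hQ.2 hQ.1
  have uA : {A ∈ 𝒜 | compress {i} {j} A ∈ 𝒜} ∪ {A ∈ 𝒜 | compress {i} {j} A ∉ 𝒜} = 𝒜 :=
    filter_union_filter_not_eq _ _
  have ne₂ : {A ∈ 𝒜 | compress {i} {j} A ∉ 𝒜}.Nonempty := by
    refine nonempty_iff_ne_empty.2 fun z ↦ h ?_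
    rw [filter_image, z, image_empty, union_empty]
    rwa [z, union_empty] at uA
  rw [fm, fm, sum_union compress_disjoint]
  conv_rhs => rw [← uA]
  rw [sum_union (disjoint_filter_filter_not _ _ _), add_lt_add_iff_left, filter_image,
    sum_image compress_injOn]
  refine sum_lt_sum_of_nonempty ne₂ fun A hA ↦ ?_
  rw [geomSum_lt_geomSum_iff_toColex_lt_toColex le_rfl]
  exact toColex_compress_lt_toColex hmax (q _ hA)

/-- we can fully compress a family without increasing its shadow -/
lemma exists_compressed (r : ℕ) (𝒜 : Finset (Finset ℕ)) (h : ∀ A ∈ 𝒜, A.card = r) :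
    ∃ ℬ : Finset (Finset ℕ), #ℬ = #𝒜 ∧ #(∂ ℬ) ≤ #(∂ 𝒜) ∧ (∀ B ∈ ℬ, B.card = r) ∧
      ∀ i j : ℕ, i < j → IsCompressed {i} {j} ℬ := by
  classical
  by_cases hfull : ∀ i j : ℕ, i < j → IsCompressed {i} {j} 𝒜
  · exact ⟨𝒜, rfl, le_rfl, h, hfull⟩
  · push_neg at hfull
    obtain ⟨i, j, hij, hnc⟩ := hfull
    have hlt := fm_compression_lt hij hnc
    have hsized : ∀ A ∈ 𝓒 {i} {j} 𝒜, A.card = r := by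
      have := (Set.Sized.uvCompression (u := ({i} : Finset ℕ)) (v := {j})
        (by simp) (fun A hA => h A hA))
      intro A hA
      exact this hA
    obtain ⟨ℬ, h1, h2, h3, h4⟩ := exists_compressed r (𝓒 {i} {j} 𝒜) hsized
    refine ⟨ℬ, h1.trans (card_compression _ _ _), h2.trans ?_, h3, h4⟩
    exact card_shadow_compression_le _ _ (by
      intro x hx
      rw [mem_singleton] at hx
      subst hx
      refine ⟨j, mem_singleton_self _, ?_⟩
      simp only [erase_singleton]
      exact isCompressed_self _ _)
termination_by fm 𝒜
decreasing_by exact hlt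




variable {k r : ℕ} {𝒟 : Finset (Finset ℕ)}

/-- The link of `𝒟` at `k`. -/
def link (k : ℕ) (𝒟 : Finset (Finset ℕ)) : Finset (Finset ℕ) :=
  (𝒟.filter (fun D => k ∈ D)).image (fun D => D.erase k)

/-- Part of `𝒟` avoiding `k`. -/
def rest (k : ℕ) (𝒟 : Finset (Finset ℕ)) : Finset (Finset ℕ) :=
  𝒟.filter (fun D => k ∉ D)

/-- `𝒟` is shifted on ground `{k, k+1, ...}`. -/
def Shifted (k : ℕ) (𝒟 : Finset (Finset ℕ)) : Prop :=
  ∀ i j D, k ≤ i → i < j → D ∈ 𝒟 → j ∈ D → i ∉ D → insert i (D.erase j) ∈ 𝒟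

lemma mem_link {D' : Finset ℕ} : D' ∈ link k 𝒟 ↔ k ∉ D' ∧ insert k D' ∈ 𝒟 := by
  constructor
  · rintro h
    rw [link, mem_image] at h
    obtain ⟨D, hD, rfl⟩ := h
    rw [mem_filter] at hD
    exact ⟨notMem_erase _ _, by rw [insert_erase hD.2]; exact hD.1⟩
  · rintro ⟨h1, h2⟩
    rw [link, mem_image]
    exact ⟨insert k D', mem_filter.2 ⟨h2, mem_insert_self _ _⟩, by rw [erase_insert h1]⟩

lemma link_injOn : Set.InjOn (fun D => Finset.erase D k) (𝒟.filter (fun D => k ∈ D)) := by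
  intro D1 h1 D2 h2 h
  simp only [coe_filter, Set.mem_setOf_eq] at h1 h2
  rw [← insert_erase h1.2, ← insert_erase h2.2]
  simp only at h
  rw [h]

lemma card_eq_rest_add_link : #𝒟 = #(rest k 𝒟) + #(link k 𝒟) := by
  rw [rest, link, card_image_of_injOn link_injOn, add_comm]
  exact (Finset.card_filter_add_card_filter_not (fun D => k ∈ D)).symm

lemma link_sized (h : ∀ D ∈ 𝒟, #D = r) : ∀ D' ∈ link k 𝒟, #D' = r - 1 := by
  intro D' hD'
  obtain ⟨h1, h2⟩ := mem_link.1 hD'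
  have := h _ h2
  rw [card_insert_of_notMem h1] at this
  omega

lemma rest_sized (h : ∀ D ∈ 𝒟, #D = r) : ∀ D ∈ rest k 𝒟, #D = r :=
  fun D hD => h D (mem_filter.1 hD).1

lemma link_ground (h : ∀ D ∈ 𝒟, ∀ a ∈ D, k ≤ a) :
    ∀ D' ∈ link k 𝒟, ∀ a ∈ D', k + 1 ≤ a := by
  intro D' hD' a ha
  obtain ⟨h1, h2⟩ := mem_link.1 hD'
  have := h _ h2 a (mem_insert_of_mem ha)
  have : a ≠ k := fun hak => h1 (hak ▸ ha)
  omega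

lemma rest_ground (h : ∀ D ∈ 𝒟, ∀ a ∈ D, k ≤ a) :
    ∀ D ∈ rest k 𝒟, ∀ a ∈ D, k + 1 ≤ a := by
  intro D hD a ha
  rw [rest, mem_filter] at hD
  have := h _ hD.1 a ha
  have : a ≠ k := fun hak => hD.2 (hak ▸ ha)
  omega

lemma link_shifted (hs : Shifted k 𝒟) : Shifted (k + 1) (link k 𝒟) := by
  intro i j D' hki hij hD' hjD' hiD'
  obtain ⟨hkD', hD⟩ := mem_link.1 hD'
  have hjk : j ≠ k := by omega
  have hik : i ≠ k := by omega
  have h1 : insert i ((insert k D').erase j) ∈ 𝒟 :=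
    hs i j _ (by omega) hij hD (mem_insert_of_mem hjD')
      (by simp [mem_insert, hik, hiD'])
  have heq : insert i ((insert k D').erase j) = insert k (insert i (D'.erase j)) := by
    rw [erase_insert_of_ne (Ne.symm hjk)]
    exact Finset.insert_comm _ _ _
  rw [heq] at h1
  exact mem_link.2 ⟨by simp [mem_insert, hik.symm, notMem_erase, hkD'], h1⟩

lemma rest_shifted (hs : Shifted k 𝒟) : Shifted (k + 1) (rest k 𝒟) := by
  intro i j D hki hij hD hjD hiD
  rw [rest, mem_filter] at hD ⊢
  refine ⟨hs i j D (by omega) hij hD.1 hjD hiD, ?_⟩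
  simp only [mem_insert]
  push_neg
  exact ⟨by omega, fun hk => hD.2 (mem_of_mem_erase hk)⟩

lemma shadow_rest_subset_link (hs : Shifted k 𝒟)
    (hg : ∀ D ∈ 𝒟, ∀ a ∈ D, k ≤ a) : ∂ (rest k 𝒟) ⊆ link k 𝒟 := by
  intro E hE
  rw [mem_shadow_iff] at hE
  obtain ⟨D, hD, j, hjD, rfl⟩ := hE
  rw [rest, mem_filter] at hD
  have hkD : k ∉ D := hD.2
  have hkj : k < j := by
    have := hg D hD.1 j hjD
    have : j ≠ k := fun h => hkD (h ▸ hjD)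
    omega
  have := hs k j D le_rfl hkj hD.1 hjD hkD
  exact mem_link.2 ⟨fun h => hkD (mem_of_mem_erase h), this⟩

lemma card_shadow_ge (hg : ∀ D ∈ 𝒟, ∀ a ∈ D, k ≤ a) :
    #(link k 𝒟) + #(∂ (link k 𝒟)) ≤ #(∂ 𝒟) := by
  classical
  have hsub1 : link k 𝒟 ⊆ ∂ 𝒟 := by
    intro D' hD'
    obtain ⟨h1, h2⟩ := mem_link.1 hD'
    rw [mem_shadow_iff]
    exact ⟨insert k D', h2, k, mem_insert_self _ _, erase_insert h1⟩
  have hsub2 : (∂ (link k 𝒟)).image (insert k) ⊆ ∂ 𝒟 := by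
    intro E hE
    rw [mem_image] at hE
    obtain ⟨E', hE', rfl⟩ := hE
    rw [mem_shadow_iff] at hE' ⊢
    obtain ⟨D', hD', e, heD', rfl⟩ := hE'
    obtain ⟨h1, h2⟩ := mem_link.1 hD'
    have hek : e ≠ k := fun h => h1 (h ▸ heD')
    exact ⟨insert k D', h2, e, mem_insert_of_mem heD',
      by rw [erase_insert_of_ne (Ne.symm hek)]⟩
  have hnok : ∀ E ∈ ∂ (link k 𝒟), k ∉ E := by
    intro E hE
    rw [mem_shadow_iff] at hE
    obtain ⟨D', hD', e, heD', rfl⟩ := hE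
    exact fun h => (mem_link.1 hD').1 (mem_of_mem_erase h)
  have hdisj : Disjoint (link k 𝒟) ((∂ (link k 𝒟)).image (insert k)) := by
    rw [disjoint_left]
    intro D' hD' hD''
    rw [mem_image] at hD''
    obtain ⟨E, hE, rfl⟩ := hD''
    exact (mem_link.1 hD').1 (mem_insert_self _ _)
  have hcard : #((∂ (link k 𝒟)).image (insert k)) = #(∂ (link k 𝒟)) := by
    apply card_image_of_injOn
    intro E1 h1 E2 h2 h
    have h1' := hnok E1 (by simpa using h1)
    have h2' := hnok E2 (by simpa using h2)
    rw [← erase_insert h1', ← erase_insert h2', h]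
  calc #(link k 𝒟) + #(∂ (link k 𝒟))
      = #(link k 𝒟 ∪ (∂ (link k 𝒟)).image (insert k)) := by
        rw [card_union_of_disjoint hdisj, hcard]
    _ ≤ #(∂ 𝒟) := card_le_card (union_subset hsub1 hsub2)

lemma link_nonempty (hr : 1 ≤ r) (hsized : ∀ D ∈ 𝒟, #D = r) (hs : Shifted k 𝒟)
    (hg : ∀ D ∈ 𝒟, ∀ a ∈ D, k ≤ a) (hne : 𝒟.Nonempty) : (link k 𝒟).Nonempty := by
  obtain ⟨D, hD⟩ := hne
  by_cases hk : k ∈ D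
  · exact ⟨D.erase k, mem_link.2 ⟨notMem_erase _ _, by rwa [insert_erase hk]⟩⟩
  · have hDne : D.Nonempty := by
      rw [← card_pos, hsized D hD]; omega
    obtain ⟨j, hj⟩ := hDne
    have hkj : k < j := by
      have := hg D hD j hj
      have : j ≠ k := fun h => hk (h ▸ hj)
      omega
    have := hs k j D le_rfl hkj hD hj hk
    exact ⟨(insert k (D.erase j)).erase k, mem_link.2 ⟨notMem_erase _ _,
      by rwa [insert_erase (mem_insert_self _ _)]⟩⟩

lemma r_le_card_link (hsized : ∀ D ∈ 𝒟, #D = r) (hs : Shifted k 𝒟)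
    (hg : ∀ D ∈ 𝒟, ∀ a ∈ D, k ≤ a) (hne : (rest k 𝒟).Nonempty) :
    r ≤ #(link k 𝒟) := by
  classical
  obtain ⟨D, hD⟩ := hne
  have hsub : D.image (fun e => D.erase e) ⊆ link k 𝒟 := by
    intro E hE
    rw [mem_image] at hE
    obtain ⟨e, he, rfl⟩ := hE
    apply shadow_rest_subset_link hs hg
    rw [mem_shadow_iff]
    exact ⟨D, hD, e, he, rfl⟩
  have hcard : #(D.image (fun e => D.erase e)) = r := by
    rw [card_image_of_injOn, rest_sized hsized D hD]
    intro e1 h1 e2 h2 h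
    simp only at h
    by_contra hne'
    have : e1 ∉ D.erase e2 := by rw [← h]; exact notMem_erase _ _
    exact this (mem_erase.2 ⟨hne', h1⟩)
  rw [← hcard]
  exact card_le_card hsub

end MyKK
namespace MyKK

theorem lovasz_shifted (r : ℕ) : ∀ (N k : ℕ) (𝒟 : Finset (Finset ℕ)), 1 ≤ r → #𝒟 ≤ N →
    (∀ D ∈ 𝒟, #D = r) → (∀ D ∈ 𝒟, ∀ a ∈ D, k ≤ a) → Shifted k 𝒟 →
    ∀ x : ℝ, (r : ℝ) ≤ x → PP x r ≤ (#𝒟 : ℝ) → PP x (r - 1) ≤ (#(∂ 𝒟) : ℝ) := by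
  induction r with
  | zero => intro N k 𝒟 hr; omega
  | succ r ihr =>
    intro N
    induction N with
    | zero =>
      intro k 𝒟 _ hN hsized hg hs x hx hcard
      exfalso
      have h1 : (1 : ℝ) ≤ PP x (r + 1) := one_le_PP (by exact_mod_cast hx)
      have : #𝒟 = 0 := by omega
      rw [this] at hcard
      simp at hcard
      linarith
    | succ N ihN =>
      intro k 𝒟 _ hN hsized hg hs x hx hcard
      have hx' : ((r : ℝ)) + 1 ≤ x := by exact_mod_cast hx
      have hDne : 𝒟.Nonempty := by
        rw [← card_pos]
        by_contra h
        have : #𝒟 = 0 := by omega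
        rw [this] at hcard
        have h1 : (1 : ℝ) ≤ PP x (r + 1) := one_le_PP (by exact_mod_cast hx)
        simp at hcard
        linarith
      have hLne : (link k 𝒟).Nonempty :=
        link_nonempty (by omega) hsized hs hg hDne
      have hcards : #𝒟 = #(rest k 𝒟) + #(link k 𝒟) := card_eq_rest_add_link
      have hshadow : #(link k 𝒟) + #(∂ (link k 𝒟)) ≤ #(∂ 𝒟) := card_shadow_ge hg
      have hLsized := link_sized (k := k) hsized
      have hLground := link_ground (k := k) hg
      have hLshift := link_shifted hs
      rcases le_or_gt (PP (x - 1) r) (#(link k 𝒟) : ℝ) with hL | hL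
      · -- Case 1
        rcases Nat.eq_zero_or_pos r with rfl | hr1
        · -- r + 1 = 1
          simp only [Nat.add_sub_cancel]
          rw [PP_zero]
          have : 1 ≤ #(∂ 𝒟) := by
            have := hLne.card_pos
            omega
          exact_mod_cast this
        · have hxr : ((r : ℝ)) ≤ x - 1 := by linarith
          have hind := ihr (#(link k 𝒟)) (k + 1) (link k 𝒟) hr1 le_rfl
            (by simpa using hLsized) hLground hLshift (x - 1) hxr hL
          have hps : PP x r = PP (x - 1) (r - 1) + PP (x - 1) r := by
            obtain ⟨m, rfl⟩ : ∃ m, r = m + 1 := ⟨r - 1, by omega⟩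
            simpa using PP_pascal x m
          simp only [Nat.add_sub_cancel]
          rw [hps]
          have : (#(link k 𝒟) : ℝ) + (#(∂ (link k 𝒟)) : ℝ) ≤ (#(∂ 𝒟) : ℝ) := by
            exact_mod_cast hshadow
          linarith
      · -- Case 2: derive a contradiction
        exfalso
        have hps : PP x (r + 1) = PP (x - 1) r + PP (x - 1) (r + 1) := PP_pascal x r
        have hRcard : PP (x - 1) (r + 1) ≤ (#(rest k 𝒟) : ℝ) := by
          have : (#𝒟 : ℝ) = (#(rest k 𝒟) : ℝ) + (#(link k 𝒟) : ℝ) := by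
            exact_mod_cast hcards
          nlinarith [hcard, hps, hL]
        rcases le_or_gt ((r : ℝ) + 2) x with hx2 | hx2
        · -- x ≥ r + 2 : recurse on rest
          have hRle : #(rest k 𝒟) ≤ N := by
            have := hLne.card_pos
            omega
          have hind := ihN (k + 1) (rest k 𝒟) (by omega) hRle (rest_sized hsized)
            (rest_ground hg) (rest_shifted hs) (x - 1) (by push_cast; linarith) hRcard
          simp only [Nat.add_sub_cancel] at hind
          have hsub := shadow_rest_subset_link (𝒟 := 𝒟) hs hg
          have : (#(∂ (rest k 𝒟)) : ℝ) ≤ (#(link k 𝒟) : ℝ) := by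
            exact_mod_cast card_le_card hsub
          linarith
        · -- r + 1 ≤ x < r + 2
          rcases (rest k 𝒟).eq_empty_or_nonempty with hR | hR
          · rw [hR] at hcards
            simp only [card_empty, zero_add] at hcards
            have hnn : 0 ≤ PP (x - 1) (r + 1) := PP_nonneg (by push_cast; linarith)
            rw [hcards] at hcard
            linarith
          · have hrL : r + 1 ≤ #(link k 𝒟) :=
              r_le_card_link hsized hs hg hR
            have hub : PP (x - 1) r ≤ ((r : ℝ) + 1) := by
              have h1 : PP (x - 1) r ≤ PP ((r + 1 : ℕ) : ℝ) r := by
                apply PP_mono (by push_cast; linarith) (by push_cast; linarith)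
              rw [PP_nat, Nat.choose_succ_self_right] at h1
              push_cast at h1
              linarith
            have : ((r : ℝ) + 1) ≤ (#(link k 𝒟) : ℝ) := by exact_mod_cast hrL
            linarith

end MyKK
namespace MyKK

lemma shifted_of_compressed {ℬ : Finset (Finset ℕ)}
    (h : ∀ i j : ℕ, i < j → UV.IsCompressed {i} {j} ℬ) : Shifted 0 ℬ := by
  intro i j D _ hij hD hjD hiD
  have hc : UV.compress {i} {j} D = insert i (D.erase j) := by
    rw [UV.compress, if_pos ⟨by simpa using hiD, by simpa using hjD⟩]
    ext a
    simp only [sup_eq_union, sdiff_singleton_eq_erase, mem_erase, mem_union, mem_singleton,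
      mem_insert]
    constructor
    · rintro ⟨ha, h1 | h1⟩
      · exact Or.inr ⟨ha, h1⟩
      · exact Or.inl h1
    · rintro (rfl | ⟨ha, h1⟩)
      · exact ⟨by omega, Or.inr rfl⟩
      · exact ⟨ha, Or.inl h1⟩
  have := UV.compress_mem_compression (u := ({i} : Finset ℕ)) (v := {j}) hD
  rw [(h i j hij).eq, hc] at this
  exact this

/-- Lovász form of Kruskal–Katona, single step. -/
theorem lovasz_general {r : ℕ} (hr : 1 ≤ r) {𝒟 : Finset (Finset ℕ)}
    (hsized : ∀ D ∈ 𝒟, #D = r) {x : ℝ} (hx : (r : ℝ) ≤ x)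
    (hcard : PP x r ≤ (#𝒟 : ℝ)) : PP x (r - 1) ≤ (#(∂ 𝒟) : ℝ) := by
  obtain ⟨ℬ, h1, h2, h3, h4⟩ := exists_compressed r 𝒟 hsized
  have hsh : Shifted 0 ℬ := shifted_of_compressed h4
  have := lovasz_shifted r (#ℬ) 0 ℬ hr le_rfl h3 (fun D _ a _ => Nat.zero_le a) hsh x hx
    (by rw [h1]; exact hcard)
  calc PP x (r - 1) ≤ (#(∂ ℬ) : ℝ) := this
    _ ≤ (#(∂ 𝒟) : ℝ) := by exact_mod_cast h2

/-- Iterated Lovász form. -/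
theorem lovasz_iter (r : ℕ) {𝒟 : Finset (Finset ℕ)}
    (hsized : ∀ D ∈ 𝒟, #D = r) {x : ℝ} (hx : (r : ℝ) ≤ x)
    (hcard : PP x r ≤ (#𝒟 : ℝ)) :
    ∀ j, j ≤ r → PP x (r - j) ≤ (#(∂^[j] 𝒟) : ℝ) := by
  intro j
  induction j with
  | zero => intro _; simpa using hcard
  | succ j ih =>
    intro hj
    have hsizedj : ∀ D ∈ ∂^[j] 𝒟, #D = r - j := by
      have : ((∂^[j] 𝒟 : Finset (Finset ℕ)) : Set (Finset ℕ)).Sized (r - j) :=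
        Set.Sized.shadow_iterate (fun D hD => hsized D hD)
      intro D hD
      exact this (by exact_mod_cast hD)
    have h1 : 1 ≤ r - j := by omega
    have hxj : ((r - j : ℕ) : ℝ) ≤ x := by
      have : ((r - j : ℕ) : ℝ) ≤ (r : ℝ) := by
        exact_mod_cast Nat.sub_le r j
      linarith
    have := lovasz_general h1 hsizedj hxj (ih (by omega))
    rw [Function.iterate_succ_apply']
    have heq : r - j - 1 = r - (j + 1) := by omega
    rwa [heq] at this

end MyKK


open scoped FinsetFamily

lemma genBinom_eq_PP {x : ℝ} {k : ℕ} (h : (k : ℝ) ≤ x) : genBinom x k = MyKK.PP x k := by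
  rw [genBinom, if_pos h, MyKK.PP]


end KKAux

open scoped FinsetFamily in
theorem stmt_9 (a b n : ℕ) (hn : a + b ≤ n)
    (𝒜 ℬ : Finset (Finset ℕ))
    (h𝒜 : 𝒜 ⊆ (Finset.Icc 1 n).powersetCard a)
    (hℬ : ℬ ⊆ (Finset.Icc 1 n).powersetCard b)
    (hcross : ∀ A ∈ 𝒜, ∀ B ∈ ℬ, (A ∩ B).Nonempty)
    (x : ℝ) (hx1 : (n : ℝ) - a ≤ x) (hx2 : x ≤ (n : ℝ))
    (hA : genBinom x (n - a) ≤ (𝒜.card : ℝ)) :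
    (ℬ.card : ℝ) ≤ (n.choose b : ℝ) - genBinom x b := by
  classical
  have han : a ≤ n := by omega
  have hbna : b ≤ n - a := by omega
  have hcastna : ((n - a : ℕ) : ℝ) = (n : ℝ) - a := by
    push_cast [Nat.cast_sub han]
    ring
  have hxna : ((n - a : ℕ) : ℝ) ≤ x := by rw [hcastna]; exact hx1
  have hxb : ((b : ℕ) : ℝ) ≤ x := by
    have : ((b : ℕ) : ℝ) ≤ ((n - a : ℕ) : ℝ) := by exact_mod_cast hbna
    linarith
  have hIcc : #(Finset.Icc 1 n) = n := by
    rw [Nat.card_Icc]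
    omega
  -- the complement family
  set 𝒟 : Finset (Finset ℕ) := 𝒜.image (fun A => Finset.Icc 1 n \ A) with h𝒟
  have hsubIcc : ∀ A ∈ 𝒜, A ⊆ Finset.Icc 1 n ∧ #A = a := by
    intro A hA'
    have := h𝒜 hA'
    rw [Finset.mem_powersetCard] at this
    exact this
  have hDcard : #𝒟 = #𝒜 := by
    rw [h𝒟]
    apply Finset.card_image_of_injOn
    intro A1 h1 A2 h2 h
    have e1 := Finset.sdiff_sdiff_eq_self (hsubIcc A1 h1).1
    have e2 := Finset.sdiff_sdiff_eq_self (hsubIcc A2 h2).1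
    simp only at h
    rw [← e1, ← e2, h]
  have hDsized : ∀ D ∈ 𝒟, #D = n - a := by
    intro D hD
    rw [h𝒟, Finset.mem_image] at hD
    obtain ⟨A, hA', rfl⟩ := hD
    rw [Finset.card_sdiff_of_subset (hsubIcc A hA').1, hIcc, (hsubIcc A hA').2]
  have hDsub : ∀ D ∈ 𝒟, D ⊆ Finset.Icc 1 n := by
    intro D hD
    rw [h𝒟, Finset.mem_image] at hD
    obtain ⟨A, _, rfl⟩ := hD
    exact Finset.sdiff_subset
  -- the forbidden sets
  set 𝒮 : Finset (Finset ℕ) := ∂^[n - a - b] 𝒟 with h𝒮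
  have hScard : MyKK.PP x b ≤ (#𝒮 : ℝ) := by
    have := MyKK.lovasz_iter (n - a) hDsized hxna
      (by rw [hDcard]; rwa [genBinom_eq_PP hxna] at hA) (n - a - b) (by omega)
    rwa [show n - a - (n - a - b) = b by omega] at this
  have hSsubD : ∀ S ∈ 𝒮, ∃ D ∈ 𝒟, S ⊆ D := by
    intro S hS
    rw [h𝒮, Finset.mem_shadow_iterate_iff_exists_sdiff] at hS
    obtain ⟨D, hD, hSD, _⟩ := hS
    exact ⟨D, hD, hSD⟩
  have hSsized : ∀ S ∈ 𝒮, #S = b := by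
    have : ((𝒮 : Finset (Finset ℕ)) : Set (Finset ℕ)).Sized (n - a - (n - a - b)) :=
      Set.Sized.shadow_iterate (fun D hD => hDsized D hD)
    intro S hS
    have := this (by exact_mod_cast hS)
    rwa [show n - a - (n - a - b) = b by omega] at this
  have hSsub : 𝒮 ⊆ (Finset.Icc 1 n).powersetCard b := by
    intro S hS
    rw [Finset.mem_powersetCard]
    obtain ⟨D, hD, hSD⟩ := hSsubD S hS
    exact ⟨hSD.trans (hDsub D hD), hSsized S hS⟩
  have hdisj : Disjoint ℬ 𝒮 := by
    rw [Finset.disjoint_left]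
    intro B hB hB'
    obtain ⟨D, hD, hBD⟩ := hSsubD B hB'
    rw [h𝒟, Finset.mem_image] at hD
    obtain ⟨A, hA', rfl⟩ := hD
    obtain ⟨e, he⟩ := hcross A hA' B hB
    rw [Finset.mem_inter] at he
    have := hBD he.2
    rw [Finset.mem_sdiff] at this
    exact this.2 he.1
  have hunion : #ℬ + #𝒮 ≤ n.choose b := by
    have h1 : ℬ ∪ 𝒮 ⊆ (Finset.Icc 1 n).powersetCard b := Finset.union_subset hℬ hSsub
    have h2 := Finset.card_le_card h1
    rw [Finset.card_union_of_disjoint hdisj] at h2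
    rwa [Finset.card_powersetCard, hIcc] at h2
  have hfin : (#ℬ : ℝ) + (#𝒮 : ℝ) ≤ (n.choose b : ℝ) := by exact_mod_cast hunion
  rw [genBinom_eq_PP hxb]
  linarith
end

section
/- Let n ≥ a + b and assume A ⊆ ([n] choose a) and B ⊆ ([n] choose b) are cross-intersecting. Then the initial segments L([n], |A|, a) and L([n], |B|, b) of the lexicographic order are also cross-intersecting. -/
open Finset
open scoped FinsetFamily symmDiff
attribute [-instance] instDecidableEqFin

/-- `A` strictly precedes `B` in the lexicographic order: the smallest element
of the symmetric difference `A △ B` belongs to `A`. -/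
def LexLT (A B : Finset ℕ) : Prop :=
  ∃ m ∈ A, m ∉ B ∧ ∀ x < m, (x ∈ A ↔ x ∈ B)

/-- `L` is an initial segment of the lexicographic order on `k`-element
subsets of `[n]`. (The family `L([n], |L|, k)` of the first `|L|` such sets.) -/
def IsLexInitSeg (n k : ℕ) (L : Finset (Finset ℕ)) : Prop :=
  L ⊆ (Finset.Icc 1 n).powersetCard k ∧
  ∀ A ∈ L, ∀ B ∈ (Finset.Icc 1 n).powersetCard k, LexLT B A → B ∈ L



namespace CrossAux

variable {n : ℕ}

/-- Transfer `Finset (Fin n)` to a subset of `Icc 1 n` via `i ↦ n - i`. -/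
def up (T : Finset (Fin n)) : Finset ℕ := T.image (fun i : Fin n => n - (i : ℕ))

/-- Transfer a subset of `Icc 1 n` to `Finset (Fin n)`. -/
def dn (n : ℕ) (S : Finset ℕ) : Finset (Fin n) := Finset.univ.filter (fun i => n - (i : ℕ) ∈ S)

lemma sub_injective : Function.Injective (fun i : Fin n => n - (i : ℕ)) := by
  intro i j h
  have hi := i.isLt; have hj := j.isLt
  simp only at h
  exact Fin.ext (by omega)

@[simp] lemma mem_dn {S : Finset ℕ} {i : Fin n} : i ∈ dn n S ↔ n - (i : ℕ) ∈ S := by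
  simp [dn]

lemma mem_up {T : Finset (Fin n)} {x : ℕ} : x ∈ up T ↔ ∃ i ∈ T, n - (i : ℕ) = x := by
  simp [up]

@[simp] lemma mem_up' {T : Finset (Fin n)} {i : Fin n} : n - (i : ℕ) ∈ up T ↔ i ∈ T := by
  constructor
  · rintro h
    obtain ⟨j, hj, hji⟩ := mem_up.1 h
    rwa [← sub_injective hji]
  · intro h; exact mem_up.2 ⟨i, h, rfl⟩

lemma up_subset {T : Finset (Fin n)} : up T ⊆ Finset.Icc 1 n := by
  intro x hx
  obtain ⟨i, hi, rfl⟩ := mem_up.1 hx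
  have := i.isLt
  simp only [Finset.mem_Icc]; omega

@[simp] lemma card_up {T : Finset (Fin n)} : (up T).card = T.card :=
  Finset.card_image_of_injective _ sub_injective

lemma up_dn {S : Finset ℕ} (hS : S ⊆ Finset.Icc 1 n) : up (dn n S) = S := by
  ext x
  constructor
  · intro hx
    obtain ⟨i, hi, rfl⟩ := mem_up.1 hx
    exact mem_dn.1 hi
  · intro hx
    have hx' := hS hx
    rw [Finset.mem_Icc] at hx'
    have hlt : n - x < n := by omega
    have : n - ((⟨n - x, hlt⟩ : Fin n) : ℕ) = x := by simp; omega
    rw [← this]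
    rw [mem_up']
    rw [mem_dn, this]
    exact hx

@[simp] lemma dn_up {T : Finset (Fin n)} : dn n (up T) = T := by
  ext i; simp

lemma card_dn {S : Finset ℕ} (hS : S ⊆ Finset.Icc 1 n) : (dn n S).card = S.card := by
  conv_rhs => rw [← up_dn hS]
  rw [card_up]

lemma sub_lt_sub {i j : Fin n} : n - (j : ℕ) < n - (i : ℕ) ↔ i < j := by
  have hi := i.isLt; have hj := j.isLt
  rw [Fin.lt_def]; omega

/-- The key transfer lemma: lex order on `up`-images is reverse colex order. -/
lemma lexLT_up_iff {T T' : Finset (Fin n)} :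
    LexLT (up T) (up T') ↔ toColex T' < toColex T := by
  rw [Finset.Colex.toColex_lt_toColex_iff_max'_mem]
  constructor
  · rintro ⟨m, hmT, hmT', hlow⟩
    obtain ⟨i, hiT, rfl⟩ := mem_up.1 hmT
    have hiT' : i ∉ T' := fun h => hmT' (mem_up'.2 h)
    have hne : T' ≠ T := fun h => hiT' (h ▸ hiT)
    refine ⟨hne, ?_⟩
    have himem : i ∈ T' ∆ T := Finset.mem_symmDiff.2 (Or.inr ⟨hiT, hiT'⟩)
    have hkey : ∀ j ∈ T' ∆ T, j ≤ i := by
      intro j hj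
      by_contra hji
      push_neg at hji
      have hx : n - (j : ℕ) < n - (i : ℕ) := sub_lt_sub.2 hji
      have := hlow _ hx
      rw [mem_up', mem_up'] at this
      rw [Finset.mem_symmDiff] at hj
      tauto
    have hmax : (T' ∆ T).max' (Finset.symmDiff_nonempty.2 hne) = i :=
      le_antisymm (hkey _ (Finset.max'_mem _ _)) (Finset.le_max' _ _ himem)
    rw [hmax]; exact hiT
  · rintro ⟨hne, hmax⟩
    set i := (T' ∆ T).max' (Finset.symmDiff_nonempty.2 hne) with hidef
    have hiT : i ∈ T := hmax
    have hiT' : i ∉ T' := by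
      have := Finset.max'_mem (T' ∆ T) (Finset.symmDiff_nonempty.2 hne)
      rw [Finset.mem_symmDiff] at this
      tauto
    have hiff : ∀ j : Fin n, i < j → (j ∈ T ↔ j ∈ T') := by
      intro j hij
      have : j ∉ T' ∆ T := fun hmem => (Finset.le_max' _ j hmem).not_gt hij
      rw [Finset.mem_symmDiff] at this
      tauto
    refine ⟨n - (i : ℕ), mem_up'.2 hiT, fun h => hiT' (mem_up'.1 h), ?_⟩
    intro x hx
    constructor
    · intro hxT
      obtain ⟨j, hj, rfl⟩ := mem_up.1 hxT
      have hij : i < j := sub_lt_sub.1 hx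
      exact mem_up'.2 ((hiff j hij).1 hj)
    · intro hxT'
      obtain ⟨j, hj, rfl⟩ := mem_up.1 hxT'
      have hij : i < j := sub_lt_sub.1 hx
      exact mem_up'.2 ((hiff j hij).2 hj)

/-- Colex is reversed by complementation. -/
lemma colex_compl_lt {s t : Finset (Fin n)} (h : toColex t < toColex s) :
    toColex sᶜ < toColex tᶜ := by
  rw [Finset.Colex.toColex_lt_toColex_iff_max'_mem] at h
  obtain ⟨hne, hmax⟩ := h
  set m := (t ∆ s).max' (Finset.symmDiff_nonempty.2 hne) with hm
  have hms : m ∈ s := hmax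
  have hmt : m ∉ t := by
    have := Finset.max'_mem (t ∆ s) (Finset.symmDiff_nonempty.2 hne)
    rw [Finset.mem_symmDiff] at this; tauto
  rw [Finset.Colex.toColex_lt_toColex_iff_exists_forall_lt]
  refine ⟨m, by simpa using hmt, by simpa using hms, ?_⟩
  intro b hbs hbt
  simp only [Finset.mem_compl, not_not] at hbs hbt
  have hb : b ∈ t ∆ s := Finset.mem_symmDiff.2 (Or.inl ⟨hbt, hbs⟩)
  exact (Finset.le_max' _ _ hb).lt_of_ne (ne_of_mem_of_not_mem hbt hmt)

lemma isInitSeg_shadow_iterate {𝒜 : Finset (Finset (Fin n))} {r k : ℕ}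
    (h : Finset.Colex.IsInitSeg 𝒜 r) : Finset.Colex.IsInitSeg (∂^[k] 𝒜) (r - k) := by
  induction k with
  | zero => simpa using h
  | succ k ih =>
    rw [Function.iterate_succ_apply']
    have := ih.shadow
    simpa [Nat.sub_sub] using this

end CrossAux

open CrossAux
theorem stmt_10 (a b n : ℕ) (hn : a + b ≤ n)
    (𝒜 ℬ : Finset (Finset ℕ))
    (h𝒜 : 𝒜 ⊆ (Finset.Icc 1 n).powersetCard a)
    (hℬ : ℬ ⊆ (Finset.Icc 1 n).powersetCard b)
    (hcross : ∀ A ∈ 𝒜, ∀ B ∈ ℬ, (A ∩ B).Nonempty)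
    (L𝒜 Lℬ : Finset (Finset ℕ))
    (hLA : IsLexInitSeg n a L𝒜) (hLAcard : L𝒜.card = 𝒜.card)
    (hLB : IsLexInitSeg n b Lℬ) (hLBcard : Lℬ.card = ℬ.card) :
    ∀ A ∈ L𝒜, ∀ B ∈ Lℬ, (A ∩ B).Nonempty := by
  classical
  intro A hA B hB
  by_contra hcon
  rw [Finset.not_nonempty_iff_eq_empty] at hcon
  set k := n - a - b with hk
  -- basic membership facts
  have memIcc : ∀ {S : Finset ℕ} {r : ℕ}, S ∈ (Finset.Icc 1 n).powersetCard r →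
      S ⊆ Finset.Icc 1 n ∧ S.card = r := by
    intro S r hS
    exact Finset.mem_powersetCard.1 hS
  -- the complementation map
  set cmp : Finset ℕ → Finset (Fin n) := fun S => (dn n S)ᶜ with hcmp
  -- key subset correspondence
  have subset_iff : ∀ {S T : Finset ℕ}, T ⊆ Finset.Icc 1 n →
      (S ∩ T = ∅ ↔ dn n T ⊆ cmp S) := by
    intro S T hT
    constructor
    · intro hST i hi
      rw [mem_dn] at hi
      rw [Finset.mem_compl, mem_dn]
      intro hmem
      have : n - (i : ℕ) ∈ S ∩ T := Finset.mem_inter.2 ⟨hmem, hi⟩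
      simp [hST] at this
    · intro hsub
      rw [Finset.eq_empty_iff_forall_notMem]
      intro x hx
      rw [Finset.mem_inter] at hx
      have hxI := hT hx.2
      rw [Finset.mem_Icc] at hxI
      have hlt : n - x < n := by omega
      have hval : n - ((⟨n - x, hlt⟩ : Fin n) : ℕ) = x := by simp; omega
      have hidn : (⟨n - x, hlt⟩ : Fin n) ∈ dn n T := by rw [mem_dn, hval]; exact hx.2
      have := hsub hidn
      rw [Finset.mem_compl, mem_dn, hval] at this
      exact this hx.1
  -- injectivity of cmp on subsets of Icc 1 n
  have cmp_inj : ∀ {S S' : Finset ℕ}, S ⊆ Finset.Icc 1 n → S' ⊆ Finset.Icc 1 n →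
      cmp S = cmp S' → S = S' := by
    intro S S' hS hS' h
    have : dn n S = dn n S' := compl_injective h
    rw [← up_dn hS, ← up_dn hS', this]
  -- families in the Fin n world
  set 𝒞 : Finset (Finset (Fin n)) := L𝒜.image cmp with h𝒞
  set 𝒞₀ : Finset (Finset (Fin n)) := 𝒜.image cmp with h𝒞₀
  set 𝒟 : Finset (Finset (Fin n)) := Lℬ.image (dn n) with h𝒟
  set 𝒟₀ : Finset (Finset (Fin n)) := ℬ.image (dn n) with h𝒟₀
  -- cards
  have hC : 𝒞.card = L𝒜.card :=
    Finset.card_image_of_injOn (fun S hS S' hS' h =>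
      cmp_inj (memIcc (hLA.1 hS)).1 (memIcc (hLA.1 hS')).1 h)
  have hC₀ : 𝒞₀.card = 𝒜.card :=
    Finset.card_image_of_injOn (fun S hS S' hS' h =>
      cmp_inj (memIcc (h𝒜 hS)).1 (memIcc (h𝒜 hS')).1 h)
  have dn_injOn : ∀ {S S' : Finset ℕ}, S ⊆ Finset.Icc 1 n → S' ⊆ Finset.Icc 1 n →
      dn n S = dn n S' → S = S' := by
    intro S S' hS hS' h
    rw [← up_dn hS, ← up_dn hS', h]
  have hD : 𝒟.card = Lℬ.card :=
    Finset.card_image_of_injOn (fun S hS S' hS' h =>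
      dn_injOn (memIcc (hLB.1 hS)).1 (memIcc (hLB.1 hS')).1 h)
  have hD₀ : 𝒟₀.card = ℬ.card :=
    Finset.card_image_of_injOn (fun S hS S' hS' h =>
      dn_injOn (memIcc (hℬ hS)).1 (memIcc (hℬ hS')).1 h)
  -- sized facts
  have card_cmp : ∀ {S : Finset ℕ}, S ∈ (Finset.Icc 1 n).powersetCard a → (cmp S).card = n - a := by
    intro S hS
    obtain ⟨hsub, hcard⟩ := memIcc hS
    rw [hcmp]
    simp only [Finset.card_compl, Fintype.card_fin, card_dn hsub, hcard]
  have sized𝒞 : (↑𝒞 : Set (Finset (Fin n))).Sized (n - a) := by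
    intro s hs
    rw [Finset.mem_coe, h𝒞, Finset.mem_image] at hs
    obtain ⟨S, hS, rfl⟩ := hs
    exact card_cmp (hLA.1 hS)
  have sized𝒞₀ : (↑𝒞₀ : Set (Finset (Fin n))).Sized (n - a) := by
    intro s hs
    rw [Finset.mem_coe, h𝒞₀, Finset.mem_image] at hs
    obtain ⟨S, hS, rfl⟩ := hs
    exact card_cmp (h𝒜 hS)
  -- 𝒞 is an initial segment of colex on (n-a)-sets
  have init𝒞 : Finset.Colex.IsInitSeg 𝒞 (n - a) := by
    refine ⟨sized𝒞, ?_⟩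
    intro s t hs ⟨hts, htcard⟩
    rw [h𝒞, Finset.mem_image] at hs ⊢
    obtain ⟨A', hA', rfl⟩ := hs
    obtain ⟨hA'sub, hA'card⟩ := memIcc (hLA.1 hA')
    set B' : Finset ℕ := up tᶜ with hB'
    have hB'sub : B' ⊆ Finset.Icc 1 n := up_subset
    have hB'card : B'.card = a := by
      rw [hB', card_up, Finset.card_compl, Fintype.card_fin, htcard]
      omega
    have hdnB' : dn n B' = tᶜ := by rw [hB', dn_up]
    have htc : t = cmp B' := by rw [hcmp]; simp [hdnB']
    have hlex : LexLT B' A' := by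
      have hA'up : A' = up (dn n A') := (up_dn hA'sub).symm
      rw [hA'up, hB', lexLT_up_iff]
      -- need : toColex (dn n A') < toColex tᶜ
      have := colex_compl_lt hts
      rw [hcmp] at this
      simpa using this
    have hB'mem : B' ∈ (Finset.Icc 1 n).powersetCard a :=
      Finset.mem_powersetCard.2 ⟨hB'sub, hB'card⟩
    exact ⟨B', hLA.2 A' hA' B' hB'mem hlex, htc.symm⟩
  -- ℰ is an initial segment of colex on b-sets
  set ℰ : Finset (Finset (Fin n)) :=
    (Finset.univ : Finset (Fin n)).powersetCard b \ 𝒟 with hℰ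
  have initℰ : Finset.Colex.IsInitSeg ℰ b := by
    constructor
    · intro s hs
      rw [Finset.mem_coe, hℰ, Finset.mem_sdiff, Finset.mem_powersetCard] at hs
      exact hs.1.2
    · intro s t hs ⟨hts, htcard⟩
      rw [hℰ, Finset.mem_sdiff] at hs ⊢
      refine ⟨Finset.mem_powersetCard.2 ⟨Finset.subset_univ _, htcard⟩, ?_⟩
      intro htD
      rw [h𝒟, Finset.mem_image] at htD
      obtain ⟨B', hB', rfl⟩ := htD
      obtain ⟨hB'sub, hB'card⟩ := memIcc (hLB.1 hB')
      have hupE : up s ∈ (Finset.Icc 1 n).powersetCard b := by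
        refine Finset.mem_powersetCard.2 ⟨up_subset, ?_⟩
        rw [card_up]
        exact (Finset.mem_powersetCard.1 hs.1).2
      have hlex : LexLT (up s) B' := by
        have : LexLT (up s) (up (dn n B')) := lexLT_up_iff.2 hts
        rwa [up_dn hB'sub] at this
      have : up s ∈ Lℬ := hLB.2 B' hB' (up s) hupE hlex
      have : dn n (up s) ∈ 𝒟 := Finset.mem_image_of_mem _ this
      rw [dn_up] at this
      exact hs.2 this
  -- the iterated shadow of 𝒞₀ is disjoint from 𝒟₀
  have hbn : b ≤ n - a := by omega
  have hkk : (n - a) - k = b := by omega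
  have hdisj₀ : ∀ D ∈ ∂^[k] 𝒞₀, D ∉ 𝒟₀ := by
    intro D hD hD𝒟
    rw [h𝒟₀, Finset.mem_image] at hD𝒟
    obtain ⟨B', hB', rfl⟩ := hD𝒟
    rw [Finset.mem_shadow_iterate_iff_exists_sdiff] at hD
    obtain ⟨s, hs, hsub, _⟩ := hD
    rw [h𝒞₀, Finset.mem_image] at hs
    obtain ⟨A', hA', rfl⟩ := hs
    have : A' ∩ B' = ∅ := (subset_iff (memIcc (hℬ hB')).1).2 hsub
    have hne := hcross A' hA' B' hB'
    rw [this] at hne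
    simp at hne
  -- card chase
  have h1 : (∂^[k] 𝒞).card ≤ (∂^[k] 𝒞₀).card := by
    apply Finset.iterated_kk sized𝒞₀ _ init𝒞
    rw [hC, hC₀, hLAcard]
  have hshadow_sub : ∂^[k] 𝒞₀ ⊆ (Finset.univ : Finset (Fin n)).powersetCard b \ 𝒟₀ := by
    intro D hD
    rw [Finset.mem_sdiff]
    refine ⟨Finset.mem_powersetCard.2 ⟨Finset.subset_univ _, ?_⟩, hdisj₀ D hD⟩
    have := sized𝒞₀.shadow_iterate (𝒜 := 𝒞₀) (k := k) hD
    rwa [hkk] at this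
  have h𝒟₀sub : 𝒟₀ ⊆ (Finset.univ : Finset (Fin n)).powersetCard b := by
    intro D hD
    rw [h𝒟₀, Finset.mem_image] at hD
    obtain ⟨B', hB', rfl⟩ := hD
    obtain ⟨hB'sub, hB'card⟩ := memIcc (hℬ hB')
    exact Finset.mem_powersetCard.2 ⟨Finset.subset_univ _, by rw [card_dn hB'sub, hB'card]⟩
  have h𝒟sub : 𝒟 ⊆ (Finset.univ : Finset (Fin n)).powersetCard b := by
    intro D hD
    rw [h𝒟, Finset.mem_image] at hD
    obtain ⟨B', hB', rfl⟩ := hD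
    obtain ⟨hB'sub, hB'card⟩ := memIcc (hLB.1 hB')
    exact Finset.mem_powersetCard.2 ⟨Finset.subset_univ _, by rw [card_dn hB'sub, hB'card]⟩
  have h2 : (∂^[k] 𝒞₀).card ≤ ℰ.card := by
    have := Finset.card_le_card hshadow_sub
    rw [Finset.card_sdiff_of_subset h𝒟₀sub] at this
    rw [hℰ, Finset.card_sdiff_of_subset h𝒟sub]
    have hcards : 𝒟.card = 𝒟₀.card := by rw [hD, hD₀, hLBcard]
    omega
  have init_sh : Finset.Colex.IsInitSeg (∂^[k] 𝒞) b := by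
    have := isInitSeg_shadow_iterate (k := k) init𝒞
    rwa [hkk] at this
  have hsubℰ : ∂^[k] 𝒞 ⊆ ℰ := by
    obtain h | h := init_sh.total initℰ
    · exact h
    · have := Finset.eq_of_subset_of_card_le h (h1.trans h2)
      rw [this]
  -- final contradiction
  have hAB : dn n B ⊆ cmp A := (subset_iff (memIcc (hLB.1 hB)).1).1 hcon
  have hmem_sh : dn n B ∈ ∂^[k] 𝒞 := by
    rw [Finset.mem_shadow_iterate_iff_exists_sdiff]
    refine ⟨cmp A, Finset.mem_image_of_mem _ hA, hAB, ?_⟩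
    rw [Finset.card_sdiff_of_subset hAB, card_cmp (hLA.1 hA), card_dn (memIcc (hLB.1 hB)).1,
      (memIcc (hLB.1 hB)).2]
  have : dn n B ∈ ℰ := hsubℰ hmem_sh
  rw [hℰ, Finset.mem_sdiff] at this
  exact this.2 (Finset.mem_image_of_mem _ hB)
end

section
/- Let n ≥ a + b and let A ⊆ ([n] choose a) and B ⊆ ([n] choose b) be cross-intersecting families. Let U, V ⊆ [n] be disjoint sets with |U| = |V| ≥ 1. Suppose that for every proper subset Ṽ ⊊ V, taking Ũ to be the set consisting of the |Ṽ| smallest elements of U, both families are invariant under the corresponding shift: S_{Ũ,Ṽ}(A) = A and S_{Ũ,Ṽ}(B) = B. Then S_{U,V}(A) and S_{U,V}(B) are also cross-intersecting. -/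
open Finset

/-- The `(U ← V)` shift of a single set:
`(F ∖ V) ∪ U` if `F ∩ (U ∪ V) = V`, and `F` otherwise. -/
def shiftUVSet (U V F : Finset ℕ) : Finset ℕ :=
  if F ∩ (U ∪ V) = V then (F \ V) ∪ U else F

/-- The `(U ← V)` shift of a family. -/
def shiftUVFam (U V : Finset ℕ) (𝒜 : Finset (Finset ℕ)) : Finset (Finset ℕ) :=
  𝒜.image (shiftUVSet U V) ∪ 𝒜.filter (fun F => shiftUVSet U V F ∈ 𝒜)

/-- Characterize membership in the shifted family. -/
lemma mem_shiftUVFam {U V A : Finset ℕ} {𝒜 : Finset (Finset ℕ)}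
    (hA : A ∈ shiftUVFam U V 𝒜) :
    (A ∈ 𝒜 ∧ (A ∩ (U ∪ V) = V → (A \ V) ∪ U ∈ 𝒜)) ∨
      (∃ A₀ ∈ 𝒜, A₀ ∩ (U ∪ V) = V ∧ A = (A₀ \ V) ∪ U) := by
  rw [shiftUVFam, mem_union] at hA
  rcases hA with hA | hA
  · obtain ⟨A₀, hA₀, rfl⟩ := mem_image.mp hA
    by_cases h : A₀ ∩ (U ∪ V) = V
    · exact Or.inr ⟨A₀, hA₀, h, by rw [shiftUVSet, if_pos h]⟩
    · rw [shiftUVSet, if_neg h]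
      exact Or.inl ⟨hA₀, fun hc => absurd hc h⟩
  · obtain ⟨hA₀, hsh⟩ := mem_filter.mp hA
    refine Or.inl ⟨hA₀, fun hc => ?_⟩
    rwa [shiftUVSet, if_pos hc] at hsh

/-- Existence of the set of the `k` smallest elements of `U`. -/
lemma exists_smallest (U : Finset ℕ) (k : ℕ) (hk : k ≤ U.card) :
    ∃ U' : Finset ℕ, U' ⊆ U ∧ U'.card = k ∧ ∀ x ∈ U', ∀ y ∈ U \ U', x < y := by
  classical
  set l := U.sort (· ≤ ·) with hl
  have hnodup : l.Nodup := U.sort_nodup _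
  have hlen : l.length = U.card := U.length_sort _
  have hsorted : l.Pairwise (· < ·) := U.sortedLT_sort.pairwise
  refine ⟨(l.take k).toFinset, ?_, ?_, ?_⟩
  · intro x hx
    rw [List.mem_toFinset] at hx
    have := List.mem_of_mem_take hx
    rwa [Finset.mem_sort] at this
  · rw [List.toFinset_card_of_nodup (hnodup.sublist (List.take_sublist _ _)),
      List.length_take, hlen]
    exact min_eq_left hk
  · intro x hx y hy
    rw [List.mem_toFinset] at hx
    rw [Finset.mem_sdiff, List.mem_toFinset] at hy
    have hyl : y ∈ l := (Finset.mem_sort _).mpr hy.1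
    have hyd : y ∈ l.drop k := by
      have hyl2 : y ∈ l.take k ++ l.drop k := by
        rw [List.take_append_drop]; exact hyl
      rcases List.mem_append.mp hyl2 with h | h
      · exact absurd h hy.2
      · exact h
    have hpw : List.Pairwise (· < ·) (l.take k ++ l.drop k) := by
      rw [List.take_append_drop]; exact hsorted
    exact (List.pairwise_append.mp hpw).2.2 x hx y hyd

/-- Key lemma: the hard case of the cross-intersection proof. -/
lemma key_lemma (𝒜 ℬ : Finset (Finset ℕ))
    (hcross : ∀ A ∈ 𝒜, ∀ B ∈ ℬ, (A ∩ B).Nonempty)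
    (U V : Finset ℕ) (hdisj : Disjoint U V) (hcard : U.card = V.card)
    (hinvB : ∀ V' : Finset ℕ, V' ⊂ V → ∀ U' : Finset ℕ, U' ⊆ U →
      U'.card = V'.card → (∀ x ∈ U', ∀ y ∈ U \ U', x < y) →
      shiftUVFam U' V' ℬ = ℬ)
    (A₀ : Finset ℕ) (hA₀ : A₀ ∈ 𝒜) (hA₀V : A₀ ∩ (U ∪ V) = V)
    (B : Finset ℕ) (hB : B ∈ ℬ) (hBU : B ∩ U = ∅)
    (hP : B ∩ (U ∪ V) = V → (B \ V) ∪ U ∈ ℬ) :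
    (((A₀ \ V) ∪ U) ∩ B).Nonempty := by
  classical
  have hA₀U : A₀ ∩ U = ∅ := by
    rw [← Finset.subset_empty]
    intro x hx
    rw [mem_inter] at hx
    have hxV : x ∈ V := by
      rw [← hA₀V, mem_inter, mem_union]; exact ⟨hx.1, Or.inl hx.2⟩
    exact absurd hxV (Finset.disjoint_left.mp hdisj hx.2)
  by_cases hsub : A₀ ∩ B ⊆ V
  · exfalso
    by_cases hV' : B ∩ V = V
    · -- B contains V; then (B \ V) ∪ U ∈ ℬ is disjoint from A₀
      have hBUV : B ∩ (U ∪ V) = V := by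
        rw [Finset.inter_union_distrib_left, hBU, hV', Finset.empty_union]
      have hB' := hP hBUV
      obtain ⟨x, hx⟩ := hcross A₀ hA₀ _ hB'
      rw [mem_inter, mem_union, Finset.mem_sdiff] at hx
      rcases hx.2 with ⟨hxB, hxV⟩ | hxU
      · exact hxV (hsub (mem_inter.mpr ⟨hx.1, hxB⟩))
      · have : x ∈ A₀ ∩ U := mem_inter.mpr ⟨hx.1, hxU⟩
        rw [hA₀U] at this; exact absurd this (Finset.notMem_empty x)
    · -- V' := B ∩ V is a proper subset of V; shift B by (U', V')
      set V' := B ∩ V with hV'def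
      have hV'ss : V' ⊂ V :=
        lt_of_le_of_ne Finset.inter_subset_right hV'
      have hkle : V'.card ≤ U.card := hcard ▸ Finset.card_le_card hV'ss.subset
      obtain ⟨U', hU'U, hU'card, hU'min⟩ := exists_smallest U V'.card hkle
      have hfam := hinvB V' hV'ss U' hU'U hU'card hU'min
      have hBV' : B ∩ (U' ∪ V') = V' := by
        have h1 : B ∩ U' = ∅ := by
          rw [← Finset.subset_empty, ← hBU]
          exact Finset.inter_subset_inter le_rfl hU'U
        rw [Finset.inter_union_distrib_left, h1, Finset.empty_union, hV'def,
          ← Finset.inter_assoc, Finset.inter_self]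
      have hB' : (B \ V') ∪ U' ∈ ℬ := by
        rw [← hfam, shiftUVFam, mem_union]
        apply Or.inl
        refine mem_image.mpr ⟨B, hB, ?_⟩
        rw [shiftUVSet, if_pos hBV']
      obtain ⟨x, hx⟩ := hcross A₀ hA₀ _ hB'
      rw [mem_inter, mem_union, Finset.mem_sdiff] at hx
      rcases hx.2 with ⟨hxB, hxV'⟩ | hxU'
      · have : x ∈ V' := by
          rw [hV'def, mem_inter]
          exact ⟨hxB, hsub (mem_inter.mpr ⟨hx.1, hxB⟩)⟩
        exact hxV' this
      · have : x ∈ A₀ ∩ U := mem_inter.mpr ⟨hx.1, hU'U hxU'⟩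
        rw [hA₀U] at this; exact absurd this (Finset.notMem_empty x)
  · -- A₀ ∩ B has an element outside V, which survives the shift
    obtain ⟨x, hxAB, hxV⟩ := Finset.not_subset.mp hsub
    rw [mem_inter] at hxAB
    exact ⟨x, mem_inter.mpr ⟨mem_union.mpr (Or.inl (Finset.mem_sdiff.mpr
      ⟨hxAB.1, hxV⟩)), hxAB.2⟩⟩

theorem stmt_11 (a b n : ℕ) (hn : a + b ≤ n)
    (𝒜 ℬ : Finset (Finset ℕ))
    (h𝒜 : 𝒜 ⊆ (Finset.Icc 1 n).powersetCard a)
    (hℬ : ℬ ⊆ (Finset.Icc 1 n).powersetCard b)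
    (hcross : ∀ A ∈ 𝒜, ∀ B ∈ ℬ, (A ∩ B).Nonempty)
    (U V : Finset ℕ) (hU : U ⊆ Finset.Icc 1 n) (hV : V ⊆ Finset.Icc 1 n)
    (hdisj : Disjoint U V) (hcard : U.card = V.card) (hpos : 1 ≤ U.card)
    (hinv : ∀ V' : Finset ℕ, V' ⊂ V → ∀ U' : Finset ℕ, U' ⊆ U →
      U'.card = V'.card → (∀ x ∈ U', ∀ y ∈ U \ U', x < y) →
      shiftUVFam U' V' 𝒜 = 𝒜 ∧ shiftUVFam U' V' ℬ = ℬ) :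
    ∀ A ∈ shiftUVFam U V 𝒜, ∀ B ∈ shiftUVFam U V ℬ, (A ∩ B).Nonempty := by
  classical
  intro A hA B hB
  have hinvA : ∀ V' : Finset ℕ, V' ⊂ V → ∀ U' : Finset ℕ, U' ⊆ U →
      U'.card = V'.card → (∀ x ∈ U', ∀ y ∈ U \ U', x < y) →
      shiftUVFam U' V' 𝒜 = 𝒜 :=
    fun V' h1 U' h2 h3 h4 => (hinv V' h1 U' h2 h3 h4).1
  have hinvB : ∀ V' : Finset ℕ, V' ⊂ V → ∀ U' : Finset ℕ, U' ⊆ U →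
      U'.card = V'.card → (∀ x ∈ U', ∀ y ∈ U \ U', x < y) →
      shiftUVFam U' V' ℬ = ℬ :=
    fun V' h1 U' h2 h3 h4 => (hinv V' h1 U' h2 h3 h4).2
  rcases mem_shiftUVFam hA with ⟨hAmem, hAsh⟩ | ⟨A₀, hA₀, hA₀V, rfl⟩
  · rcases mem_shiftUVFam hB with ⟨hBmem, hBsh⟩ | ⟨B₀, hB₀, hB₀V, rfl⟩
    · exact hcross A hAmem B hBmem
    · -- B moved; use key lemma with roles swapped
      by_cases hAU : (A ∩ U).Nonempty
      · obtain ⟨x, hx⟩ := hAU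
        rw [mem_inter] at hx
        exact ⟨x, mem_inter.mpr ⟨hx.1, mem_union.mpr (Or.inr hx.2)⟩⟩
      · rw [Finset.not_nonempty_iff_eq_empty] at hAU
        have := key_lemma ℬ 𝒜 (fun B hB A hA => by
            rw [Finset.inter_comm]; exact hcross A hA B hB)
          U V hdisj hcard hinvA B₀ hB₀ hB₀V A hAmem hAU hAsh
        rwa [Finset.inter_comm]
  · by_cases hBU : (B ∩ U).Nonempty
    · obtain ⟨x, hx⟩ := hBU
      rw [mem_inter] at hx
      exact ⟨x, mem_inter.mpr ⟨mem_union.mpr (Or.inr hx.2), hx.1⟩⟩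
    · rw [Finset.not_nonempty_iff_eq_empty] at hBU
      rcases mem_shiftUVFam hB with ⟨hBmem, hBsh⟩ | ⟨B₀, hB₀, hB₀V, rfl⟩
      · exact key_lemma 𝒜 ℬ hcross U V hdisj hcard hinvB A₀ hA₀ hA₀V B hBmem hBU hBsh
      · -- both moved: both contain U, which is nonempty
        exfalso
        have : ((B₀ \ V) ∪ U) ∩ U = U := by
          rw [Finset.inter_eq_right]; exact Finset.subset_union_right
        rw [hBU] at this
        have := Finset.card_eq_zero.mpr this.symm
        omega
end

section
/- Fix integers s ≥ 2, t ≥ 2 and m ≥ s + t − 1, and define f(x) := C(x, t-1)·C(m-3, s-2)/C(m-3, t-2) − C(x, m-s). Then f is monotone non-decreasing on the interval m − s ≤ x ≤ m − 3, and if moreover m ≥ s + t, then f is strictly increasing on this interval. -/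
open Finset

/-- `f(x) = C(x, t-1)·C(m-3, s-2)/C(m-3, t-2) − C(x, m-s)`. -/
noncomputable def fKK (m s t : ℕ) (x : ℝ) : ℝ :=
  genBinom x (t - 1) * ((m - 3).choose (s - 2) : ℝ) / ((m - 3).choose (t - 2) : ℝ)
    - genBinom x (m - s)

lemma aux_one_add_sum_le_prod (s : Finset ℕ) (f : ℕ → ℝ) (hf : ∀ i ∈ s, 0 ≤ f i) :
    1 + ∑ i ∈ s, f i ≤ ∏ i ∈ s, (1 + f i) := by
  induction s using Finset.cons_induction with
  | empty => simp
  | cons a s ha ih =>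
    rw [prod_cons, sum_cons]
    have h1 : 0 ≤ f a := hf a (mem_cons_self a s)
    have h2 : ∀ i ∈ s, 0 ≤ f i := fun i hi => hf i (mem_cons_of_mem hi)
    have h3 := ih h2
    have h4 : 0 ≤ ∑ i ∈ s, f i := sum_nonneg h2
    nlinarith

lemma aux_prod_fac (n k : ℕ) : ∀ ℓ, k ≤ ℓ → ℓ ≤ n + 1 →
    (∏ i ∈ Ico k ℓ, (n + 1 - i)) * Nat.factorial (n + 1 - ℓ) = Nat.factorial (n + 1 - k) := by
  intro ℓ
  induction ℓ with
  | zero => intro h1 _; interval_cases k; simp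
  | succ ℓ ih =>
    intro h1 h2
    rcases Nat.lt_or_ge ℓ k with h | h
    · have : k = ℓ + 1 := by omega
      subst this; simp
    · rw [Finset.prod_Ico_succ_top h]
      have e1 : n + 1 - ℓ = (n + 1 - (ℓ + 1)) + 1 := by omega
      have := ih h (by omega)
      rw [e1, Nat.factorial_succ, ← e1] at this
      calc (∏ i ∈ Ico k ℓ, (n + 1 - i)) * (n + 1 - ℓ) * (n + 1 - (ℓ + 1)).factorial
          = (∏ i ∈ Ico k ℓ, (n + 1 - i)) * ((n + 1 - ℓ) * (n + 1 - (ℓ + 1)).factorial) := by ring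
        _ = Nat.factorial (n + 1 - k) := this

lemma aux_choose_id (n k ℓ : ℕ) (hk : 1 ≤ k) (hkl : k ≤ ℓ) (hln : ℓ ≤ n) :
    n.choose (ℓ-1) * ℓ.factorial * k = n.choose (k-1) * k.factorial * ℓ * ∏ i ∈ Ico k ℓ, (n+1-i) := by
  have h1 : n.choose (ℓ-1) * (ℓ-1).factorial * (n-(ℓ-1)).factorial = n.factorial :=
    Nat.choose_mul_factorial_mul_factorial (by omega)
  have h2 : n.choose (k-1) * (k-1).factorial * (n-(k-1)).factorial = n.factorial :=
    Nat.choose_mul_factorial_mul_factorial (by omega)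
  have h3 := aux_prod_fac n k ℓ hkl (by omega)
  have l1 : ℓ * (ℓ-1).factorial = ℓ.factorial := Nat.mul_factorial_pred (by omega)
  have l2 : k * (k-1).factorial = k.factorial := Nat.mul_factorial_pred (by omega)
  have e3 : n - (ℓ-1) = n+1-ℓ := by omega
  have e4 : n - (k-1) = n+1-k := by omega
  apply Nat.eq_of_mul_eq_mul_right (Nat.factorial_pos (n+1-ℓ))
  calc n.choose (ℓ-1) * ℓ.factorial * k * (n+1-ℓ).factorial
      = (n.choose (ℓ-1) * (ℓ-1).factorial * (n-(ℓ-1)).factorial) * (ℓ*k) := by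
        rw [e3, ← l1]; ring
    _ = (n.choose (k-1) * (k-1).factorial * (n-(k-1)).factorial) * (ℓ*k) := by rw [h1, h2]
    _ = n.choose (k-1) * (k * (k-1).factorial) * ℓ * ((n-(k-1)).factorial) := by ring
    _ = n.choose (k-1) * k.factorial * ℓ * ((∏ i ∈ Ico k ℓ, (n+1-i)) * (n+1-ℓ).factorial) := by
        rw [l2, e4, h3]
    _ = n.choose (k-1) * k.factorial * ℓ * (∏ i ∈ Ico k ℓ, (n+1-i)) * (n+1-ℓ).factorial := by
        ring

lemma aux_const_id (n k ℓ : ℕ) (hk : 1 ≤ k) (hkl : k ≤ ℓ) (hln : ℓ ≤ n) :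
    (n.choose (ℓ-1) : ℝ) * (Nat.factorial ℓ : ℝ) * k
      = (n.choose (k-1) : ℝ) * (Nat.factorial k : ℝ) * ℓ * ∏ i ∈ Ico k ℓ, ((n:ℝ) + 1 - i) := by
  have hcast : ∏ i ∈ Ico k ℓ, ((n:ℝ) + 1 - i) = ((∏ i ∈ Ico k ℓ, (n+1-i) : ℕ) : ℝ) := by
    rw [Nat.cast_prod]
    apply prod_congr rfl; intro i hi
    have hi' : i ≤ n := by have := (mem_Ico.1 hi).2; omega
    rw [Nat.cast_sub (by omega : i ≤ n+1)]; push_cast; ring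
  rw [hcast]
  exact_mod_cast congrArg (Nat.cast (R := ℝ)) (aux_choose_id n k ℓ hk hkl hln)

lemma aux_key (k ℓ n : ℕ) (hk : 1 ≤ k) (hkl : k < ℓ) (hln : ℓ ≤ n) (x : ℝ)
    (hx1 : (ℓ:ℝ) ≤ x) (hx2 : x ≤ n) :
    (k:ℝ) * ((∏ i ∈ Ico k ℓ, (x - i)) *
        ((∑ i ∈ range k, (x - i)⁻¹) + ∑ i ∈ Ico k ℓ, (x - i)⁻¹))
      < (ℓ:ℝ) * ((∏ i ∈ Ico k ℓ, ((n:ℝ) + 1 - i)) * ∑ i ∈ range k, (x - i)⁻¹) := by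
  have hl2 : (2:ℝ) ≤ (ℓ:ℝ) := by exact_mod_cast (by omega : 2 ≤ ℓ)
  have hx0 : 0 < x := lt_of_lt_of_le (by linarith) hx1
  have hpos : ∀ i : ℕ, i < ℓ → 0 < x - i := by
    intro i hi
    have : (i:ℝ) + 1 ≤ ℓ := by exact_mod_cast hi
    linarith
  set Sk := ∑ i ∈ range k, (x - i)⁻¹ with hSkdef
  set T := ∑ i ∈ Ico k ℓ, (x - i)⁻¹ with hTdef
  set Q := ∏ i ∈ Ico k ℓ, (x - i) with hQdef
  set N := ∏ i ∈ Ico k ℓ, ((n:ℝ) + 1 - i) with hNdef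
  set d := (n:ℝ) + 1 - x with hddef
  have hd1 : 1 ≤ d := by simp [hddef]; linarith
  have hQ0 : 0 < Q := prod_pos (fun i hi => hpos i (mem_Ico.1 hi).2)
  have hT0 : 0 < T := by
    apply sum_pos (fun i hi => inv_pos.2 (hpos i (mem_Ico.1 hi).2))
    exact Finset.nonempty_Ico.2 hkl
  have hSk0 : 0 < Sk := by
    apply sum_pos (fun i hi => inv_pos.2 (hpos i (lt_of_lt_of_le (mem_range.1 hi) hkl.le)))
    exact Finset.nonempty_range_iff.2 (by omega)
  -- Sk ≥ k / x
  have hSklb : (k:ℝ) * x⁻¹ ≤ Sk := by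
    have : ∀ i ∈ range k, x⁻¹ ≤ (x - i)⁻¹ := by
      intro i hi
      apply inv_anti₀ (hpos i (lt_of_lt_of_le (mem_range.1 hi) hkl.le))
      have : (0:ℝ) ≤ i := Nat.cast_nonneg i
      linarith
    calc (k:ℝ) * x⁻¹ = ∑ _i ∈ range k, x⁻¹ := by simp [mul_comm]
      _ ≤ Sk := sum_le_sum this
  -- T ≤ (ℓ - k) * (x - ℓ + 1)⁻¹
  have hxl1 : (0:ℝ) < x - ℓ + 1 := by linarith
  have hTub : T ≤ ((ℓ:ℝ) - k) * (x - (ℓ:ℝ) + 1)⁻¹ := by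
    have : ∀ i ∈ Ico k ℓ, (x - i)⁻¹ ≤ (x - (ℓ:ℝ) + 1)⁻¹ := by
      intro i hi
      apply inv_anti₀ hxl1
      have : (i:ℝ) + 1 ≤ ℓ := by exact_mod_cast (mem_Ico.1 hi).2
      linarith
    calc T ≤ ∑ _i ∈ Ico k ℓ, (x - (ℓ:ℝ) + 1)⁻¹ := sum_le_sum this
      _ = ((ℓ:ℝ) - k) * (x - (ℓ:ℝ) + 1)⁻¹ := by
          rw [Finset.sum_const, Nat.card_Ico, nsmul_eq_mul, Nat.cast_sub hkl.le]
  -- N ≥ Q * (1 + d * T)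
  have hQN : Q * (1 + d * T) ≤ N := by
    have hfac : ∀ i ∈ Ico k ℓ, (n:ℝ) + 1 - i = (x - i) * (1 + d * (x - i)⁻¹) := by
      intro i hi
      have h0 := hpos i (mem_Ico.1 hi).2
      field_simp
      ring
    have hprod : N = Q * ∏ i ∈ Ico k ℓ, (1 + d * (x - i)⁻¹) := by
      rw [hNdef, prod_congr rfl hfac, prod_mul_distrib]
    rw [hprod, hTdef, mul_sum]
    apply mul_le_mul_of_nonneg_left _ hQ0.le
    have := aux_one_add_sum_le_prod (Ico k ℓ) (fun i => d * (x - i)⁻¹)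
      (fun i hi => mul_nonneg (by linarith) (inv_pos.2 (hpos i (mem_Ico.1 hi).2)).le)
    simpa using this
  -- core : x * T < (ℓ - k) + ℓ * d * T
  have hlk1 : (1:ℝ) ≤ (ℓ:ℝ) - k := by
    have : (k:ℝ) + 1 ≤ ℓ := by exact_mod_cast hkl
    linarith
  have core : x * T < ((ℓ:ℝ) - k) + (ℓ:ℝ) * d * T := by
    rcases le_or_gt x ((ℓ:ℝ) * d) with h | h
    · nlinarith [mul_le_mul_of_nonneg_right h hT0.le]
    · have h1 : x - (ℓ:ℝ) * d < x - (ℓ:ℝ) + 1 := by nlinarith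
      have h2 : T * (x - (ℓ:ℝ) * d) < T * (x - (ℓ:ℝ) + 1) :=
        mul_lt_mul_of_pos_left h1 hT0
      have h3 : T * (x - (ℓ:ℝ) + 1) ≤ ((ℓ:ℝ) - k) := by
        calc T * (x - (ℓ:ℝ) + 1) ≤ (((ℓ:ℝ) - k) * (x - (ℓ:ℝ) + 1)⁻¹) * (x - (ℓ:ℝ) + 1) :=
              mul_le_mul_of_nonneg_right hTub hxl1.le
          _ = ((ℓ:ℝ) - k) := by field_simp
      have h4 : T * (x - (ℓ:ℝ) * d) < (ℓ:ℝ) - k := h2.trans_le h3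
      nlinarith [h4]
  -- main chain
  have hmain : (k:ℝ) * (Sk + T) < (ℓ:ℝ) * ((1 + d * T) * Sk) := by
    have hkT : (k:ℝ) * T < Sk * (((ℓ:ℝ) - k) + (ℓ:ℝ) * d * T) := by
      have hx' : (k:ℝ) * x⁻¹ * (x * T) < (k:ℝ) * x⁻¹ * (((ℓ:ℝ) - k) + (ℓ:ℝ) * d * T) := by
        apply mul_lt_mul_of_pos_left core
        positivity
      have hxx : (k:ℝ) * x⁻¹ * (x * T) = (k:ℝ) * T := by
        field_simp
      have hpos2 : 0 ≤ ((ℓ:ℝ) - k) + (ℓ:ℝ) * d * T := by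
        have h5 : 0 ≤ (ℓ:ℝ) * d * T :=
          mul_nonneg (mul_nonneg (Nat.cast_nonneg ℓ) (by linarith)) hT0.le
        linarith
      have h6 : (k:ℝ) * x⁻¹ * (((ℓ:ℝ) - k) + (ℓ:ℝ) * d * T)
          ≤ Sk * (((ℓ:ℝ) - k) + (ℓ:ℝ) * d * T) :=
        mul_le_mul_of_nonneg_right hSklb hpos2
      calc (k:ℝ) * T = (k:ℝ) * x⁻¹ * (x * T) := hxx.symm
        _ < (k:ℝ) * x⁻¹ * (((ℓ:ℝ) - k) + (ℓ:ℝ) * d * T) := hx'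
        _ ≤ Sk * (((ℓ:ℝ) - k) + (ℓ:ℝ) * d * T) := h6
    have expand : (ℓ:ℝ) * ((1 + d * T) * Sk)
        = (k:ℝ) * Sk + Sk * (((ℓ:ℝ) - k) + (ℓ:ℝ) * d * T) := by ring
    rw [expand]
    linarith
  calc (k:ℝ) * (Q * (Sk + T)) = Q * ((k:ℝ) * (Sk + T)) := by ring
    _ < Q * ((ℓ:ℝ) * ((1 + d * T) * Sk)) := mul_lt_mul_of_pos_left hmain hQ0
    _ = (ℓ:ℝ) * ((Q * (1 + d * T)) * Sk) := by ring
    _ ≤ (ℓ:ℝ) * (N * Sk) := by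
        apply mul_le_mul_of_nonneg_left _ (by positivity)
        exact mul_le_mul_of_nonneg_right hQN hSk0.le

lemma aux_sum_erase (j : ℕ) (x : ℝ) (hx : ∀ i : ℕ, i < j → x - (i:ℝ) ≠ 0) :
    ∑ jj ∈ range j, ∏ i ∈ (range j).erase jj, (x - (i:ℝ))
      = (∏ i ∈ range j, (x - (i:ℝ))) * ∑ jj ∈ range j, (x - (jj:ℝ))⁻¹ := by
  rw [mul_sum]
  apply sum_congr rfl
  intro jj hjj
  have h := hx jj (mem_range.1 hjj)
  rw [← Finset.prod_erase_mul (range j) _ hjj, mul_assoc, mul_inv_cancel₀ h, mul_one]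

lemma aux_hasDeriv (c₁ c₂ : ℝ) (k ℓ : ℕ) (x : ℝ) :
    HasDerivAt (fun y => c₁ * ∏ i ∈ range k, (y - (i:ℝ)) - c₂ * ∏ i ∈ range ℓ, (y - (i:ℝ)))
      (c₁ * ∑ jj ∈ range k, ∏ i ∈ (range k).erase jj, (x - (i:ℝ))
        - c₂ * ∑ jj ∈ range ℓ, ∏ i ∈ (range ℓ).erase jj, (x - (i:ℝ))) x := by
  have h : ∀ j : ℕ, HasDerivAt (fun y => ∏ i ∈ range j, (y - (i:ℝ)))
      (∑ jj ∈ range j, ∏ i ∈ (range j).erase jj, (x - (i:ℝ))) x := by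
    intro j
    have := HasDerivAt.fun_finsetProd (𝕜 := ℝ) (u := range j) (f := fun i y => y - (i:ℝ))
      (f' := fun _ => 1) (x := x) (fun i _ => (hasDerivAt_id x).sub_const _)
    simpa using this
  exact ((h k).const_mul c₁).sub ((h ℓ).const_mul c₂)

lemma fKK_strictMono (s t m : ℕ) (ht : 2 ≤ t) (hs : 4 ≤ s) (hm : s + t ≤ m) :
    StrictMonoOn (fKK m s t) (Set.Icc ((m:ℝ) - s) ((m:ℝ) - 3)) := by
  have hk1 : 1 ≤ t - 1 := by omega
  have hkl : t - 1 < m - s := by omega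
  have hln : m - s ≤ m - 3 := by omega
  set k := t - 1 with hkdef
  set ℓ := m - s with hldef
  set n := m - 3 with hndef
  have hcastl : ((ℓ:ℕ):ℝ) = (m:ℝ) - s := by
    rw [hldef, Nat.cast_sub (by omega)]
  have hcastn : ((n:ℕ):ℝ) = (m:ℝ) - 3 := by
    rw [hndef, Nat.cast_sub (by omega)]; norm_num
  have hAeq : n.choose (s-2) = n.choose (ℓ-1) := by
    rw [← Nat.choose_symm (show s-2 ≤ n by omega)]
    congr 1; omega
  have hkeq : t - 2 = k - 1 := by omega
  set A := (n.choose (ℓ-1) : ℝ) with hAdef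
  set B := (n.choose (k-1) : ℝ) with hBdef
  have hB0 : 0 < B := by
    rw [hBdef]; exact_mod_cast Nat.choose_pos (show k-1 ≤ n by omega)
  have hfk0 : (0:ℝ) < (k.factorial : ℝ) := by exact_mod_cast k.factorial_pos
  have hfl0 : (0:ℝ) < (ℓ.factorial : ℝ) := by exact_mod_cast ℓ.factorial_pos
  set c₁ := A / ((k.factorial : ℝ) * B) with hc1
  set c₂ := ((ℓ.factorial : ℝ))⁻¹ with hc2
  set g := fun y : ℝ => c₁ * ∏ i ∈ range k, (y - (i:ℝ)) - c₂ * ∏ i ∈ range ℓ, (y - (i:ℝ))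
    with hgdef
  have hfg : ∀ y ∈ Set.Icc ((m:ℝ) - s) ((m:ℝ) - 3), fKK m s t y = g y := by
    intro y hy
    have hyl : ((ℓ:ℕ):ℝ) ≤ y := by rw [hcastl]; exact hy.1
    have hyk : ((k:ℕ):ℝ) ≤ y := le_trans (by exact_mod_cast hkl.le) hyl
    rw [hgdef]
    unfold fKK genBinom
    rw [if_pos hyk, if_pos hyl, hAeq, hkeq]
    rw [hc1, hc2]
    have halg : ∀ P L : ℝ, P / (k.factorial:ℝ) * A / B - L / (ℓ.factorial:ℝ)
        = A / ((k.factorial:ℝ) * B) * P - ((ℓ.factorial:ℝ))⁻¹ * L := by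
      intro P L
      field_simp
      all_goals exact Or.inl (mul_comm P A)
    exact halg _ _
  have hstrict : StrictMonoOn g (Set.Icc ((m:ℝ) - s) ((m:ℝ) - 3)) := by
    apply strictMonoOn_of_deriv_pos (convex_Icc _ _)
    · apply Continuous.continuousOn
      apply Continuous.sub
      · exact continuous_const.mul (continuous_finset_prod _
          (fun i _ => continuous_id.sub continuous_const))
      · exact continuous_const.mul (continuous_finset_prod _
          (fun i _ => continuous_id.sub continuous_const))
    · intro y hy
      rw [interior_Icc] at hy
      have hy1 : ((ℓ:ℕ):ℝ) ≤ y := by rw [hcastl]; exact hy.1.le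
      have hy2 : y ≤ ((n:ℕ):ℝ) := by rw [hcastn]; exact hy.2.le
      have hpos : ∀ i : ℕ, i < ℓ → 0 < y - (i:ℝ) := by
        intro i hi
        have h1 : (i:ℝ) + 1 ≤ (ℓ:ℝ) := by exact_mod_cast hi
        linarith
      have hDg : deriv g y
          = c₁ * ∑ jj ∈ range k, ∏ i ∈ (range k).erase jj, (y - (i:ℝ))
            - c₂ * ∑ jj ∈ range ℓ, ∏ i ∈ (range ℓ).erase jj, (y - (i:ℝ)) :=
        (aux_hasDeriv c₁ c₂ k ℓ y).deriv
      rw [hDg,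
        aux_sum_erase k y (fun i hi => (hpos i (lt_trans hi hkl)).ne'),
        aux_sum_erase ℓ y (fun i hi => (hpos i hi).ne'),
        ← Finset.prod_range_mul_prod_Ico _ hkl.le,
        ← Finset.sum_range_add_sum_Ico _ hkl.le]
      set Pk := ∏ i ∈ range k, (y - (i:ℝ)) with hPkdef
      set Q := ∏ i ∈ Ico k ℓ, (y - (i:ℝ)) with hQdef
      set Sk := ∑ i ∈ range k, (y - (i:ℝ))⁻¹ with hSkdef
      set T := ∑ i ∈ Ico k ℓ, (y - (i:ℝ))⁻¹ with hTdef
      set N := ∏ i ∈ Ico k ℓ, ((n:ℝ) + 1 - (i:ℝ)) with hNdef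
      have hPk0 : 0 < Pk :=
        prod_pos (fun i hi => hpos i (lt_trans (mem_range.1 hi) hkl))
      have hkey := aux_key k ℓ n hk1 hkl hln y hy1 hy2
      have hid := aux_const_id n k ℓ hk1 hkl.le hln
      rw [sub_pos]
      have hCpos : (0:ℝ) < (k.factorial : ℝ) * B * (ℓ.factorial : ℝ) * k := by
        have : (0:ℝ) < (k:ℝ) := by exact_mod_cast hk1
        positivity
      rw [← mul_lt_mul_iff_of_pos_right hCpos]
      have e2 : c₂ * (Pk * Q * (Sk + T)) * ((k.factorial : ℝ) * B * (ℓ.factorial : ℝ) * k)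
          = (B * (k.factorial : ℝ) * Pk) * ((k:ℝ) * (Q * (Sk + T))) := by
        rw [hc2]; field_simp
      have e1 : c₁ * (Pk * Sk) * ((k.factorial : ℝ) * B * (ℓ.factorial : ℝ) * k)
          = (B * (k.factorial : ℝ) * Pk) * ((ℓ:ℝ) * (N * Sk)) := by
        rw [hc1]
        rw [div_mul_eq_mul_div, div_mul_eq_mul_div, div_eq_iff (by positivity : ((k.factorial : ℝ) * B) ≠ 0)]
        calc A * (Pk * Sk) * ((k.factorial : ℝ) * B * (ℓ.factorial : ℝ) * k)
            = (A * (ℓ.factorial : ℝ) * (k:ℝ)) * (Pk * Sk) * ((k.factorial : ℝ) * B) := by ring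
          _ = (B * (k.factorial : ℝ) * (ℓ:ℝ) * N) * (Pk * Sk) * ((k.factorial : ℝ) * B) := by
              rw [hid]
          _ = (B * (k.factorial : ℝ) * Pk) * ((ℓ:ℝ) * (N * Sk)) * ((k.factorial : ℝ) * B) := by
              ring
      rw [e1, e2]
      apply mul_lt_mul_of_pos_left hkey
      positivity
  intro x₁ hx₁ x₂ hx₂ hlt
  rw [hfg x₁ hx₁, hfg x₂ hx₂]
  exact hstrict hx₁ hx₂ hlt

lemma fKK_zero (s t m : ℕ) (hs : 2 ≤ s) (ht : 2 ≤ t) (hm : m = s + t - 1) (x : ℝ) :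
    fKK m s t x = 0 := by
  have h1 : m - s = t - 1 := by omega
  have h2 : (m - 3).choose (s - 2) = (m - 3).choose (t - 2) := by
    rw [← Nat.choose_symm (show s - 2 ≤ m - 3 by omega)]
    congr 1; omega
  have hB0 : ((m - 3).choose (t - 2) : ℝ) ≠ 0 := by
    have := Nat.choose_pos (show t - 2 ≤ m - 3 by omega)
    exact_mod_cast this.ne'
  unfold fKK
  rw [h1, h2, mul_div_assoc, div_self hB0, mul_one, sub_self]

theorem stmt_12 (s t m : ℕ) (hs : 2 ≤ s) (ht : 2 ≤ t) (hm : s + t - 1 ≤ m) :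
    (∀ x₁ x₂ : ℝ, (m : ℝ) - s ≤ x₁ → x₁ ≤ x₂ → x₂ ≤ (m : ℝ) - 3 →
      fKK m s t x₁ ≤ fKK m s t x₂) ∧
    (s + t ≤ m → ∀ x₁ x₂ : ℝ, (m : ℝ) - s ≤ x₁ → x₁ < x₂ → x₂ ≤ (m : ℝ) - 3 →
      fKK m s t x₁ < fKK m s t x₂) := by
  have hmain : ∀ (hc : s + t ≤ m) (x₁ x₂ : ℝ), (m : ℝ) - s ≤ x₁ → x₁ < x₂ → x₂ ≤ (m : ℝ) - 3 →
      fKK m s t x₁ < fKK m s t x₂ := by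
    intro hc x₁ x₂ h1 hlt h2
    have hs3 : (3:ℝ) < (s:ℝ) := by linarith
    have hs4 : 4 ≤ s := by
      have : (3:ℕ) < s := by exact_mod_cast hs3
      omega
    exact fKK_strictMono s t m ht hs4 hc
      ⟨h1, le_trans hlt.le h2⟩ ⟨le_trans h1 hlt.le, h2⟩ hlt
  constructor
  · intro x₁ x₂ h1 h12 h2
    rcases eq_or_lt_of_le h12 with rfl | hlt
    · exact le_refl _
    · rcases Nat.lt_or_ge m (s + t) with hc | hc
      · rw [fKK_zero s t m hs ht (by omega) x₁, fKK_zero s t m hs ht (by omega) x₂]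
      · exact (hmain hc x₁ x₂ h1 hlt h2).le
  · exact hmain
end

section
/- Fix integers s ≥ 2, t ≥ 2 and m ≥ s + t − 1, and define f(x) := C(x, t-1)·C(m-3, s-2)/C(m-3, t-2) − C(x, m-s). Then f(y) ≥ f(m-3) for every real y with m − 3 ≤ y ≤ m − 2. -/
open Finset

lemma interp_prod {ι : Type*} (s : Finset ι) (x z : ι → ℝ)
    (hx : ∀ i ∈ s, 0 ≤ x i) (hxy : ∀ i ∈ s, x i ≤ z i)
    {u : ℝ} (hu0 : 0 ≤ u) (hu1 : u ≤ 1) :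
    ∏ i ∈ s, ((1 - u) * x i + u * z i) ≤ (1 - u) * ∏ i ∈ s, x i + u * ∏ i ∈ s, z i := by
  induction s using Finset.cons_induction with
  | empty => simp
  | cons a s ha ih =>
    simp only [Finset.prod_cons]
    have hxa : 0 ≤ x a := hx a (Finset.mem_cons_self a s)
    have hza : x a ≤ z a := hxy a (Finset.mem_cons_self a s)
    have hx' : ∀ i ∈ s, 0 ≤ x i := fun i hi => hx i (Finset.mem_cons_of_mem hi)
    have hxy' : ∀ i ∈ s, x i ≤ z i := fun i hi => hxy i (Finset.mem_cons_of_mem hi)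
    have ih' := ih hx' hxy'
    have hPx : 0 ≤ ∏ i ∈ s, x i := Finset.prod_nonneg hx'
    have hPxz : ∏ i ∈ s, x i ≤ ∏ i ∈ s, z i := Finset.prod_le_prod hx' hxy'
    have hfa : 0 ≤ (1 - u) * x a + u * z a := by nlinarith
    calc ((1 - u) * x a + u * z a) * ∏ i ∈ s, ((1 - u) * x i + u * z i)
        ≤ ((1 - u) * x a + u * z a) * ((1 - u) * ∏ i ∈ s, x i + u * ∏ i ∈ s, z i) :=
          mul_le_mul_of_nonneg_left ih' hfa
      _ ≤ (1 - u) * (x a * ∏ i ∈ s, x i) + u * (z a * ∏ i ∈ s, z i) := by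
          nlinarith [mul_nonneg (mul_nonneg (mul_nonneg hu0 (by linarith : (0:ℝ) ≤ 1 - u))
            (by linarith : (0:ℝ) ≤ z a - x a))
            (by linarith : (0:ℝ) ≤ (∏ i ∈ s, z i) - ∏ i ∈ s, x i)]

lemma harm_prod {ι : Type*} (s : Finset ι) (α : ι → ℝ)
    (hα : ∀ i ∈ s, 0 ≤ α i) {u : ℝ} (hu0 : 0 ≤ u) (hu1 : u ≤ 1) :
    (∏ i ∈ s, α i) * (∏ i ∈ s, (1 + α i)) ≤
      (∏ i ∈ s, (u + α i)) * ((1 - u) * ∏ i ∈ s, (1 + α i) + u * ∏ i ∈ s, α i) := by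
  have h1 : ∏ i ∈ s, (α i * (1 + α i)) ≤ ∏ i ∈ s, ((u + α i) * (1 + α i - u)) := by
    apply Finset.prod_le_prod
    · intro i hi; have := hα i hi; nlinarith
    · intro i hi; have := hα i hi; nlinarith
  have h2 : ∏ i ∈ s, (1 + α i - u) ≤ (1 - u) * ∏ i ∈ s, (1 + α i) + u * ∏ i ∈ s, α i := by
    have h := interp_prod s α (fun i => 1 + α i) hα
      (fun i hi => by linarith [hα i hi]) (u := 1 - u) (by linarith) (by linarith)
    calc ∏ i ∈ s, (1 + α i - u) = ∏ i ∈ s, ((1 - (1-u)) * α i + (1-u) * (1 + α i)) := by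
          apply Finset.prod_congr rfl; intro i hi; ring
      _ ≤ (1 - (1-u)) * ∏ i ∈ s, α i + (1-u) * ∏ i ∈ s, (1 + α i) := h
      _ = (1 - u) * ∏ i ∈ s, (1 + α i) + u * ∏ i ∈ s, α i := by ring
  have hP : 0 ≤ ∏ i ∈ s, (u + α i) :=
    Finset.prod_nonneg (fun i hi => by have := hα i hi; linarith)
  calc (∏ i ∈ s, α i) * (∏ i ∈ s, (1 + α i)) = ∏ i ∈ s, (α i * (1 + α i)) := by
        rw [Finset.prod_mul_distrib]
    _ ≤ ∏ i ∈ s, ((u + α i) * (1 + α i - u)) := h1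
    _ = (∏ i ∈ s, (u + α i)) * ∏ i ∈ s, (1 + α i - u) := by rw [Finset.prod_mul_distrib]
    _ ≤ (∏ i ∈ s, (u + α i)) * ((1 - u) * ∏ i ∈ s, (1 + α i) + u * ∏ i ∈ s, α i) :=
        mul_le_mul_of_nonneg_left h2 hP

lemma prod_desc (N k : ℕ) (h : k ≤ N) :
    ∏ i ∈ Finset.range k, ((N : ℝ) - i) = (N.choose k : ℝ) * (k.factorial : ℝ) := by
  have h1 : ((N.descFactorial k : ℕ) : ℝ) = ∏ i ∈ Finset.range k, ((N : ℝ) - i) := by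
    rw [Nat.descFactorial_eq_prod_range, Nat.cast_prod]
    refine Finset.prod_congr rfl fun i hi => ?_
    exact_mod_cast Nat.cast_sub (le_trans (le_of_lt (Finset.mem_range.mp hi)) h) (R := ℝ)
  rw [← h1, Nat.descFactorial_eq_factorial_mul_choose]
  push_cast; ring

lemma genBinom_nat (N k : ℕ) : genBinom (N : ℝ) k = (N.choose k : ℝ) := by
  unfold genBinom
  split_ifs with h
  · have hk : k ≤ N := by exact_mod_cast h
    rw [prod_desc N k hk]
    field_simp
  · have hk : N < k := by by_contra hc; exact h (by exact_mod_cast Nat.cast_le.mpr (not_lt.mp hc))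
    rw [Nat.choose_eq_zero_of_lt hk]
    simp

lemma genBinom_nonneg (x : ℝ) (k : ℕ) : 0 ≤ genBinom x k := by
  unfold genBinom
  split_ifs with h
  · apply div_nonneg _ (by positivity)
    apply Finset.prod_nonneg
    intro i hi
    have : (i : ℝ) < k := by exact_mod_cast Finset.mem_range.mp hi
    linarith
  · exact le_refl 0

lemma genBinom_mono (k : ℕ) {x y : ℝ} (hxy : x ≤ y) : genBinom x k ≤ genBinom y k := by
  unfold genBinom
  split_ifs with h1 h2
  · have hprod : ∏ i ∈ Finset.range k, (x - i) ≤ ∏ i ∈ Finset.range k, (y - i) := by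
      apply Finset.prod_le_prod
      · intro i hi
        have : (i : ℝ) < k := by exact_mod_cast Finset.mem_range.mp hi
        linarith
      · intro i hi; linarith
    gcongr
  · exact absurd (le_trans h1 hxy) h2
  · apply div_nonneg _ (by positivity)
    apply Finset.prod_nonneg
    intro i hi
    have : (i : ℝ) < k := by exact_mod_cast Finset.mem_range.mp hi
    linarith
  · exact le_refl 0

lemma succ_choose (k n : ℕ) (h : k ≤ n) :
    (n + 1 - k) * (n + 1).choose k = (n + 1) * n.choose k := by
  have h1 := Nat.add_one_mul_choose_eq n (n - k)
  have h2 : n.choose (n - k) = n.choose k := Nat.choose_symm h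
  have h3 : (n + 1).choose (n + 1 - k) = (n + 1).choose k :=
    Nat.choose_symm (le_trans h (Nat.le_succ n))
  have h5 : n - k + 1 = n + 1 - k := by omega
  rw [h2, h5] at h1
  rw [h3] at h1
  rw [mul_comm, ← h1]

lemma core_X (a b n : ℕ) (C1 C2 : ℝ) (hab : a ≤ b) (hbn : b ≤ n)
    (hC2 : 0 ≤ C2) {u : ℝ} (hu0 : 0 ≤ u) (hu1 : u ≤ 1)
    (hX01 : C1 * ∏ i ∈ range a, ((n : ℝ) - i) - C2 * ∏ i ∈ range b, ((n : ℝ) - i)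
          = C1 * ∏ i ∈ range a, ((n : ℝ) + 1 - i) - C2 * ∏ i ∈ range b, ((n : ℝ) + 1 - i))
    (hX1 : 0 ≤ C1 * ∏ i ∈ range a, ((n : ℝ) + 1 - i) - C2 * ∏ i ∈ range b, ((n : ℝ) + 1 - i)) :
    C1 * ∏ i ∈ range a, ((n : ℝ) - i) - C2 * ∏ i ∈ range b, ((n : ℝ) - i)
      ≤ C1 * ∏ i ∈ range a, (u + (n : ℝ) - i) - C2 * ∏ i ∈ range b, (u + (n : ℝ) - i) := by
  have hb : b = a + (b - a) := by omega
  have hsy : ∏ i ∈ range b, (u + (n : ℝ) - i)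
      = (∏ i ∈ range a, (u + (n : ℝ) - i)) * ∏ j ∈ range (b - a), (u + (n : ℝ) - (↑(a + j))) := by
    conv_lhs => rw [hb]
    rw [Finset.prod_range_add]
  have hs0 : ∏ i ∈ range b, ((n : ℝ) - i)
      = (∏ i ∈ range a, ((n : ℝ) - i)) * ∏ j ∈ range (b - a), ((n : ℝ) - (↑(a + j))) := by
    conv_lhs => rw [hb]
    rw [Finset.prod_range_add]
  have hs1 : ∏ i ∈ range b, ((n : ℝ) + 1 - i)
      = (∏ i ∈ range a, ((n : ℝ) + 1 - i)) * ∏ j ∈ range (b - a), ((n : ℝ) + 1 - (↑(a + j))) := by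
    conv_lhs => rw [hb]
    rw [Finset.prod_range_add]
  rw [hsy, hs0]
  rw [hs0, hs1] at hX01
  rw [hs1] at hX1
  set Py := ∏ i ∈ range a, (u + (n : ℝ) - i) with hPydef
  set P0 := ∏ i ∈ range a, ((n : ℝ) - i) with hP0def
  set P1 := ∏ i ∈ range a, ((n : ℝ) + 1 - i) with hP1def
  set Gy := ∏ j ∈ range (b - a), (u + (n : ℝ) - (↑(a + j))) with hGydef
  set G0 := ∏ j ∈ range (b - a), ((n : ℝ) - (↑(a + j))) with hG0def
  set G1 := ∏ j ∈ range (b - a), ((n : ℝ) + 1 - (↑(a + j))) with hG1def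
  have hfac0 : ∀ i ∈ range a, (0:ℝ) < (n : ℝ) - i := by
    intro i hi
    have hin : i < n := lt_of_lt_of_le (Finset.mem_range.mp hi) (le_trans hab hbn)
    have : (i : ℝ) < n := by exact_mod_cast hin
    linarith
  have hP0pos : 0 < P0 := Finset.prod_pos hfac0
  have hP1pos : 0 < P1 := Finset.prod_pos (fun i hi => by have := hfac0 i hi; linarith)
  have hPy : 0 ≤ Py := Finset.prod_nonneg (fun i hi => by have := hfac0 i hi; linarith)
  have hGfac : ∀ j ∈ range (b - a), (0:ℝ) ≤ (n : ℝ) - (↑(a + j)) := by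
    intro j hj
    have hjn : a + j < b := by have := Finset.mem_range.mp hj; omega
    have : ((a + j : ℕ) : ℝ) < (n : ℝ) := by exact_mod_cast lt_of_lt_of_le hjn hbn
    linarith
  have hGy : Gy ≤ (1 - u) * G0 + u * G1 := by
    have h := interp_prod (range (b - a)) (fun j => (n : ℝ) - (↑(a + j)))
      (fun j => (n : ℝ) + 1 - (↑(a + j))) hGfac
      (fun j hj => by linarith) hu0 hu1
    calc Gy = ∏ j ∈ range (b - a), ((1 - u) * ((n : ℝ) - (↑(a + j))) + u * ((n : ℝ) + 1 - (↑(a + j)))) := by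
          rw [hGydef]; exact Finset.prod_congr rfl (fun j _ => by ring)
      _ ≤ (1 - u) * G0 + u * G1 := h
  have hharm : P0 * P1 ≤ Py * ((1 - u) * P1 + u * P0) := by
    have h := harm_prod (range a) (fun i => (n : ℝ) - i)
      (fun i hi => le_of_lt (hfac0 i hi)) hu0 hu1
    have e1 : ∏ i ∈ range a, (1 + ((n : ℝ) - i)) = P1 :=
      Finset.prod_congr rfl (fun i _ => by ring)
    have e2 : ∏ i ∈ range a, (u + ((n : ℝ) - i)) = Py :=
      Finset.prod_congr rfl (fun i _ => by ring)
    rw [e1, e2] at h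
    exact h
  have key1 : Py * ((1 - u) * (C1 - C2 * G0) + u * (C1 - C2 * G1))
      ≤ C1 * Py - C2 * (Py * Gy) := by
    nlinarith [mul_nonneg hPy (mul_nonneg hC2 (sub_nonneg.mpr hGy))]
  have hX1' : 0 ≤ C1 * P1 - C2 * (P1 * G1) := hX1
  have hX0' : 0 ≤ C1 * P0 - C2 * (P0 * G0) := hX01 ▸ hX1'
  have hm : (C1 * P0 - C2 * (P0 * G0)) * (P0 * P1)
      ≤ (Py * ((1 - u) * (C1 - C2 * G0) + u * (C1 - C2 * G1))) * (P0 * P1) := by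
    calc (C1 * P0 - C2 * (P0 * G0)) * (P0 * P1)
        ≤ (C1 * P0 - C2 * (P0 * G0)) * (Py * ((1 - u) * P1 + u * P0)) :=
          mul_le_mul_of_nonneg_left hharm hX0'
      _ = (Py * ((1 - u) * (C1 - C2 * G0) + u * (C1 - C2 * G1))) * (P0 * P1) := by
          linear_combination (u * Py * P0) * hX01
  have key2 : C1 * P0 - C2 * (P0 * G0)
      ≤ Py * ((1 - u) * (C1 - C2 * G0) + u * (C1 - C2 * G1)) :=
    le_of_mul_le_mul_right hm (mul_pos hP0pos hP1pos)
  linarith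

theorem stmt_13 (s t m : ℕ) (hs : 2 ≤ s) (ht : 2 ≤ t) (hm : s + t - 1 ≤ m) :
    ∀ y : ℝ, (m : ℝ) - 3 ≤ y → y ≤ (m : ℝ) - 2 →
      fKK m s t ((m : ℝ) - 3) ≤ fKK m s t y := by
  intro y hy1 hy2
  have hm3 : 3 ≤ m := by omega
  have hcast3 : ((m - 3 : ℕ) : ℝ) = (m : ℝ) - 3 := by
    have := Nat.cast_sub (R := ℝ) hm3; simpa using this
  rcases eq_or_lt_of_le hs with hs2 | hs3
  · -- s = 2
    subst hs2
    have hcast2 : ((m - 2 : ℕ) : ℝ) = (m : ℝ) - 2 := by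
      have := Nat.cast_sub (R := ℝ) (show 2 ≤ m by omega); simpa using this
    unfold fKK
    have hchoose0 : ((m - 3).choose (2 - 2) : ℝ) = 1 := by norm_num
    rw [hchoose0]
    have hg3 : genBinom ((m : ℝ) - 3) (m - 2) = 0 := by
      rw [← hcast3, genBinom_nat, Nat.choose_eq_zero_of_lt (by omega)]
      simp
    have hC2pos : (0:ℝ) < ((m - 3).choose (t - 2) : ℝ) := by
      exact_mod_cast Nat.choose_pos (show t - 2 ≤ m - 3 by omega)
    rcases eq_or_lt_of_le hy2 with hye | hylt
    · -- y = m - 2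
      rw [hye, hg3, ← hcast3, ← hcast2, genBinom_nat, genBinom_nat, genBinom_nat,
        Nat.choose_self]
      have hp : (m - 2).choose (t - 1) = (m - 3).choose (t - 2) + (m - 3).choose (t - 1) := by
        have h1 : m - 2 = (m - 3) + 1 := by omega
        have h2 : t - 1 = (t - 2) + 1 := by omega
        rw [h1, h2, Nat.choose_succ_succ]
      rw [hp]
      push_cast
      field_simp
      linarith
    · -- y < m - 2
      have hgy0 : genBinom y (m - 2) = 0 := by
        unfold genBinom
        rw [if_neg]
        rw [hcast2]
        linarith
      rw [hg3, hgy0]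
      have hmono := genBinom_mono (t - 1) hy1
      gcongr
  · -- 3 ≤ s
    have hs3' : 3 ≤ s := hs3
    have htm : t + 2 ≤ m := by omega
    have hsm : s + 1 ≤ m := by omega
    set n := m - 3 with hn
    set a := t - 1 with ha
    set b := m - s with hb
    set c1 := n.choose (s - 2) with hc1
    set c2 := n.choose (t - 2) with hc2
    have hab : a ≤ b := by omega
    have hbn : b ≤ n := by omega
    have han : a ≤ n := by omega
    have hc2pos : 0 < c2 := Nat.choose_pos (by omega)
    have hn1cast : ((n + 1 : ℕ) : ℝ) = (n : ℝ) + 1 := by push_cast; ring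
    -- Nat identity
    have hid : c1 * (n + 1).choose a + c2 * n.choose b = c2 * (n + 1).choose b + c1 * n.choose a := by
      have hpa : (n + 1).choose a = c2 + n.choose a := by
        have h2 : a = (t - 2) + 1 := by omega
        rw [h2, Nat.choose_succ_succ]
      have hpb : (n + 1).choose b = n.choose (b - 1) + n.choose b := by
        have h2 : b = (b - 1) + 1 := by omega
        conv_lhs => rw [h2]
        rw [Nat.choose_succ_succ, Nat.succ_eq_add_one, ← h2]
      have hsymm : n.choose (b - 1) = c1 := by
        have he : n - (s - 2) = b - 1 := by omega
        rw [← he, Nat.choose_symm (by omega)]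
      rw [hpa, hpb, hsymm]
      ring
    -- Nat inequality
    have hposnat : c2 * (n + 1).choose b ≤ c1 * (n + 1).choose a := by
      have h1 : (n + 1) * c2 = (n + 1).choose a * a := by
        have h := Nat.add_one_mul_choose_eq n (t - 2)
        rwa [show (t - 2) + 1 = a by omega] at h
      have h2 : (n + 1).choose b = (n + 1).choose (s - 2) := by
        have he : (n + 1) - b = s - 2 := by omega
        rw [← he, Nat.choose_symm (by omega)]
      have h3 : b * (n + 1).choose (s - 2) = (n + 1) * c1 := by
        have h := succ_choose (s - 2) n (by omega)
        rwa [show n + 1 - (s - 2) = b by omega] at h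
      apply Nat.le_of_mul_le_mul_left _ (show 0 < a by omega)
      calc a * (c2 * (n + 1).choose b) = c2 * (a * (n + 1).choose (s - 2)) := by rw [h2]; ring
        _ ≤ c2 * (b * (n + 1).choose (s - 2)) := by
            exact Nat.mul_le_mul_left _ (Nat.mul_le_mul_right _ hab)
        _ = c2 * ((n + 1) * c1) := by rw [h3]
        _ = c1 * ((n + 1) * c2) := by ring
        _ = c1 * ((n + 1).choose a * a) := by rw [h1]
        _ = a * (c1 * (n + 1).choose a) := by ring
    -- product/choose conversions
    have pd0a : ∏ i ∈ range a, ((n : ℝ) - i) = (n.choose a : ℝ) * (a.factorial : ℝ) :=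
      prod_desc n a han
    have pd0b : ∏ i ∈ range b, ((n : ℝ) - i) = (n.choose b : ℝ) * (b.factorial : ℝ) :=
      prod_desc n b hbn
    have pd1a : ∏ i ∈ range a, ((n : ℝ) + 1 - i) = ((n + 1).choose a : ℝ) * (a.factorial : ℝ) := by
      rw [← prod_desc (n + 1) a (by omega)]
      exact Finset.prod_congr rfl (fun i _ => by rw [hn1cast])
    have pd1b : ∏ i ∈ range b, ((n : ℝ) + 1 - i) = ((n + 1).choose b : ℝ) * (b.factorial : ℝ) := by
      rw [← prod_desc (n + 1) b (by omega)]
      exact Finset.prod_congr rfl (fun i _ => by rw [hn1cast])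
    set C1 : ℝ := (c1 : ℝ) * (b.factorial : ℝ) with hC1
    set C2 : ℝ := (c2 : ℝ) * (a.factorial : ℝ) with hC2
    have hidR : (c1 : ℝ) * ((n + 1).choose a : ℝ) + (c2 : ℝ) * (n.choose b : ℝ)
        = (c2 : ℝ) * ((n + 1).choose b : ℝ) + (c1 : ℝ) * (n.choose a : ℝ) := by
      exact_mod_cast congrArg (Nat.cast (R := ℝ)) hid
    have hposR : (c2 : ℝ) * ((n + 1).choose b : ℝ) ≤ (c1 : ℝ) * ((n + 1).choose a : ℝ) := by
      exact_mod_cast hposnat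
    have hX01 : C1 * ∏ i ∈ range a, ((n : ℝ) - i) - C2 * ∏ i ∈ range b, ((n : ℝ) - i)
          = C1 * ∏ i ∈ range a, ((n : ℝ) + 1 - i) - C2 * ∏ i ∈ range b, ((n : ℝ) + 1 - i) := by
      rw [pd0a, pd0b, pd1a, pd1b, hC1, hC2]
      linear_combination (-((a.factorial : ℝ) * (b.factorial : ℝ))) * hidR
    have hX1 : 0 ≤ C1 * ∏ i ∈ range a, ((n : ℝ) + 1 - i) - C2 * ∏ i ∈ range b, ((n : ℝ) + 1 - i) := by
      rw [pd1a, pd1b, hC1, hC2]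
      nlinarith [mul_le_mul_of_nonneg_right hposR
        (by positivity : (0:ℝ) ≤ (a.factorial : ℝ) * (b.factorial : ℝ))]
    have hu0 : (0:ℝ) ≤ y - ((m : ℝ) - 3) := by linarith
    have hu1 : y - ((m : ℝ) - 3) ≤ 1 := by linarith
    have hcore := core_X a b n C1 C2 hab hbn (by positivity) hu0 hu1 hX01 hX1
    -- unfold fKK
    have hna : (a : ℝ) ≤ (m : ℝ) - 3 := by
      rw [← hcast3]
      exact_mod_cast han
    have hnb : (b : ℝ) ≤ (m : ℝ) - 3 := by
      rw [← hcast3]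
      exact_mod_cast hbn
    have g1 : genBinom ((m : ℝ) - 3) a = (∏ i ∈ range a, ((n : ℝ) - i)) / (a.factorial : ℝ) := by
      unfold genBinom
      rw [if_pos hna]
      congr 1
      exact Finset.prod_congr rfl (fun i _ => by rw [hcast3])
    have g2 : genBinom ((m : ℝ) - 3) b = (∏ i ∈ range b, ((n : ℝ) - i)) / (b.factorial : ℝ) := by
      unfold genBinom
      rw [if_pos hnb]
      congr 1
      exact Finset.prod_congr rfl (fun i _ => by rw [hcast3])
    have g3 : genBinom y a = (∏ i ∈ range a, ((y - ((m : ℝ) - 3)) + (n : ℝ) - i)) / (a.factorial : ℝ) := by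
      unfold genBinom
      rw [if_pos (le_trans hna hy1)]
      congr 1
      refine Finset.prod_congr rfl (fun i _ => ?_)
      rw [show ((n : ℕ) : ℝ) = (m : ℝ) - 3 from hcast3]
      ring
    have g4 : genBinom y b = (∏ i ∈ range b, ((y - ((m : ℝ) - 3)) + (n : ℝ) - i)) / (b.factorial : ℝ) := by
      unfold genBinom
      rw [if_pos (le_trans hnb hy1)]
      congr 1
      refine Finset.prod_congr rfl (fun i _ => ?_)
      rw [show ((n : ℕ) : ℝ) = (m : ℝ) - 3 from hcast3]
      ring
    unfold fKK
    rw [g1, g2, g3, g4]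
    have hD : (0:ℝ) < (c2 : ℝ) * (a.factorial : ℝ) * (b.factorial : ℝ) := by
      have : (0:ℝ) < (c2 : ℝ) := by exact_mod_cast hc2pos
      positivity
    rw [show ((m - 3).choose (s - 2) : ℝ) = (c1 : ℝ) from rfl,
        show ((m - 3).choose (t - 2) : ℝ) = (c2 : ℝ) from rfl]
    have e1 : (∏ i ∈ range a, ((n : ℝ) - i)) / (a.factorial : ℝ) * (c1 : ℝ) / (c2 : ℝ)
          - (∏ i ∈ range b, ((n : ℝ) - i)) / (b.factorial : ℝ)
        = (C1 * ∏ i ∈ range a, ((n : ℝ) - i) - C2 * ∏ i ∈ range b, ((n : ℝ) - i))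
            / ((c2 : ℝ) * (a.factorial : ℝ) * (b.factorial : ℝ)) := by
      rw [hC1, hC2]
      field_simp
    have e2 : (∏ i ∈ range a, ((y - ((m : ℝ) - 3)) + (n : ℝ) - i)) / (a.factorial : ℝ) * (c1 : ℝ) / (c2 : ℝ)
          - (∏ i ∈ range b, ((y - ((m : ℝ) - 3)) + (n : ℝ) - i)) / (b.factorial : ℝ)
        = (C1 * ∏ i ∈ range a, ((y - ((m : ℝ) - 3)) + (n : ℝ) - i)
            - C2 * ∏ i ∈ range b, ((y - ((m : ℝ) - 3)) + (n : ℝ) - i))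
            / ((c2 : ℝ) * (a.factorial : ℝ) * (b.factorial : ℝ)) := by
      rw [hC1, hC2]
      field_simp
    rw [e1, e2]
    exact (div_le_div_iff_of_pos_right hD).mpr hcore
end

section
/- Let G be the edge set of a graph on n vertices with matching number ν(G) = s, where s ≥ 1, and with no isolated vertices. Then there exists an s-element vertex set R such that the number of edges of G disjoint from R is at most C(s+1, 2); moreover, if every s-element set R has at least C(s+1,2) edges of G disjoint from it (i.e., equality is attained in the minimum), then G is the edge set of a complete graph on 2s+1 vertices. -/
open Finset

/-- Matching number of a family: the largest number of pairwise disjoint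
members. -/
noncomputable def matchingNumber (F : Finset (Finset ℕ)) : ℕ :=
  sSup {s | ∃ M ⊆ F, M.card = s ∧ (M : Set (Finset ℕ)).PairwiseDisjoint id}


lemma mn_bdd (F : Finset (Finset ℕ)) :
    BddAbove {s | ∃ M ⊆ F, M.card = s ∧ (M : Set (Finset ℕ)).PairwiseDisjoint id} := by
  refine ⟨F.card, fun t ht => ?_⟩
  obtain ⟨M, hM, hc, -⟩ := ht
  exact hc ▸ Finset.card_le_card hM

lemma matching_le (F : Finset (Finset ℕ)) (M : Finset (Finset ℕ)) (h1 : M ⊆ F)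
    (h2 : (M : Set (Finset ℕ)).PairwiseDisjoint id) : M.card ≤ matchingNumber F :=
  le_csSup (mn_bdd F) ⟨M, h1, rfl, h2⟩

lemma matching_exists (F : Finset (Finset ℕ)) :
    ∃ M ⊆ F, M.card = matchingNumber F ∧ (M : Set (Finset ℕ)).PairwiseDisjoint id := by
  have : matchingNumber F ∈ {s | ∃ M ⊆ F, M.card = s ∧ (M : Set (Finset ℕ)).PairwiseDisjoint id} :=
    Nat.sSup_mem ⟨0, (∅ : Finset (Finset ℕ)), by simp⟩ (mn_bdd F)
  exact this

lemma pair_eq {e : Finset ℕ} {x u : ℕ} (hc : e.card = 2) (hx : x ∈ e) (hu : u ∈ e)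
    (hne : x ≠ u) : e = {x, u} := by
  have hsub : ({x, u} : Finset ℕ) ⊆ e := by
    intro z hz; simp at hz; rcases hz with rfl | rfl <;> assumption
  have hcard : ({x, u} : Finset ℕ).card = 2 := by
    rw [Finset.card_insert_of_notMem (by simpa using hne), Finset.card_singleton]
  exact (Finset.eq_of_subset_of_card_le hsub (by omega)).symm

theorem stmt_18 (n s : ℕ) (hs : 1 ≤ s)
    (G : Finset (Finset ℕ)) (hG : G ⊆ (Finset.Icc 1 n).powersetCard 2)
    (hν : matchingNumber G = s)
    (hiso : ∀ v ∈ Finset.Icc 1 n, ∃ e ∈ G, v ∈ e) :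
    (∃ R ⊆ Finset.Icc 1 n, R.card = s ∧
        (G.filter fun e => e ∩ R = ∅).card ≤ (s + 1).choose 2) ∧
    ((∀ R ⊆ Finset.Icc 1 n, R.card = s →
        (s + 1).choose 2 ≤ (G.filter fun e => e ∩ R = ∅).card) →
      ∃ W : Finset ℕ, W.card = 2 * s + 1 ∧ G = W.powersetCard 2) := by
  classical
  -- basic facts about edges
  have hedge : ∀ e ∈ G, e.card = 2 ∧ e ⊆ Finset.Icc 1 n := by
    intro e he
    have := hG he
    rw [Finset.mem_powersetCard] at this
    exact ⟨this.2, this.1⟩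
  -- maximum matching
  obtain ⟨M, hMG, hMcard, hMpd⟩ := matching_exists G
  rw [hν] at hMcard
  have hmle : ∀ M' : Finset (Finset ℕ), M' ⊆ G →
      (M' : Set (Finset ℕ)).PairwiseDisjoint id → M'.card ≤ s := by
    intro M' h1 h2; exact hν ▸ matching_le G M' h1 h2
  have hMdisj : ∀ m ∈ M, ∀ m' ∈ M, m ≠ m' → Disjoint m m' := by
    intro m hm m' hm' hne
    exact hMpd (Finset.mem_coe.2 hm) (Finset.mem_coe.2 hm') hne
  have hM2 : ∀ m ∈ M, m.card = 2 := fun m hm => (hedge m (hMG hm)).1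
  have hMsub : ∀ m ∈ M, m ⊆ Finset.Icc 1 n := fun m hm => (hedge m (hMG hm)).2
  -- vertex set of the matching
  set V : Finset ℕ := M.biUnion id with hV
  have hmemV : ∀ x, x ∈ V ↔ ∃ m ∈ M, x ∈ m := by
    intro x; simp [hV, Finset.mem_biUnion]
  have hVcard : V.card = 2 * s := by
    have h1 : V.card = ∑ m ∈ M, m.card := Finset.card_biUnion hMdisj
    rw [h1, Finset.sum_congr rfl (fun m hm => hM2 m hm), Finset.sum_const, hMcard]
    ring
  have hVsub : V ⊆ Finset.Icc 1 n := by
    intro x hx; rw [hmemV] at hx; obtain ⟨m, hm, hxm⟩ := hx; exact hMsub m hm hxm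
  -- every edge meets V
  have hmeet : ∀ e ∈ G, (e ∩ V).Nonempty := by
    intro e he
    by_contra hcon
    rw [Finset.not_nonempty_iff_eq_empty, ← Finset.disjoint_iff_inter_eq_empty] at hcon
    have heM : e ∉ M := by
      intro heM
      have hsub : e ⊆ V := fun x hx => (hmemV x).2 ⟨e, heM, hx⟩
      have hde : e = ∅ := disjoint_self.1 (hcon.mono_right hsub)
      have he2 := (hedge e he).1
      simp [hde] at he2
    have : (insert e M).card ≤ s :=
      hmle _ (Finset.insert_subset he hMG) (by
        rw [Finset.coe_insert]
        refine Set.PairwiseDisjoint.insert hMpd ?_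
        intro m hm hne
        have : m ⊆ V := fun x hx => (hmemV x).2 ⟨m, hm, hx⟩
        exact (hcon.mono_right this))
    rw [Finset.card_insert_of_notMem heM, hMcard] at this
    omega
  have hmV : ∀ m' ∈ M, m' ⊆ V := fun m' hm' x hx => (hmemV x).2 ⟨m', hm', hx⟩
  -- Claim A : no augmenting via two pendant edges
  have claimA : ∀ m ∈ M, ∀ x ∈ m, ∀ y ∈ m, x ≠ y → ∀ u v : ℕ, u ∉ V → v ∉ V → u ≠ v →
      ({x, u} : Finset ℕ) ∈ G → ({y, v} : Finset ℕ) ∈ G → False := by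
    intro m hm x hx y hy hxy u v huV hvV huv hxu hyv
    have hxV : x ∈ V := hmV m hm hx
    have hyV : y ∈ V := hmV m hm hy
    have h1 : ({y, v} : Finset ℕ) ∉ M.erase m := by
      intro hmem
      have hym' : y ∈ ({y, v} : Finset ℕ) := by simp
      exact (hMdisj _ (Finset.mem_of_mem_erase hmem) m hm (Finset.ne_of_mem_erase hmem)).forall_ne_finset hym' hy rfl
    have h2 : ({x, u} : Finset ℕ) ∉ insert ({y, v} : Finset ℕ) (M.erase m) := by
      simp only [Finset.mem_insert]
      rintro (heq | hmem)
      · have : x ∈ ({y, v} : Finset ℕ) := heq ▸ (by simp)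
        simp at this
        rcases this with rfl | rfl
        · exact hxy rfl
        · exact hvV hxV
      · have hxm' : x ∈ ({x, u} : Finset ℕ) := by simp
        exact (hMdisj _ (Finset.mem_of_mem_erase hmem) m hm (Finset.ne_of_mem_erase hmem)).forall_ne_finset hxm' hx rfl
    set M' : Finset (Finset ℕ) := insert ({x, u} : Finset ℕ) (insert ({y, v} : Finset ℕ) (M.erase m)) with hM'
    have hsubG : M' ⊆ G := by
      intro e he
      rw [hM'] at he
      simp only [Finset.mem_insert] at he
      rcases he with rfl | rfl | he
      · exact hxu
      · exact hyv
      · exact hMG (Finset.mem_of_mem_erase he)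
    have hpd' : (M' : Set (Finset ℕ)).PairwiseDisjoint id := by
      rw [hM', Finset.coe_insert, Finset.coe_insert]
      refine (Set.PairwiseDisjoint.insert ?_ ?_).insert ?_
      · exact hMpd.subset (by intro z hz; exact Finset.mem_coe.2 (Finset.mem_of_mem_erase (Finset.mem_coe.1 hz)))
      · intro m' hm' hne'
        rw [Finset.mem_coe] at hm'
        have : m' ≠ m := Finset.ne_of_mem_erase hm'
        rw [Finset.disjoint_left]
        intro a ha
        simp only [id_eq, Finset.mem_insert, Finset.mem_singleton] at ha
        rcases ha with rfl | rfl
        · exact fun hc => (hMdisj m hm m' (Finset.mem_of_mem_erase hm') (Ne.symm this)).forall_ne_finset hy hc rfl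
        · exact fun hc => hvV (hmV m' (Finset.mem_of_mem_erase hm') hc)
      · intro b hb hneb
        simp only [Set.mem_insert_iff, Finset.mem_coe] at hb
        rw [Finset.disjoint_left]
        intro a ha
        simp only [id_eq, Finset.mem_insert, Finset.mem_singleton] at ha
        rcases hb with rfl | hb
        · rcases ha with rfl | rfl
          · intro hc; simp only [id_eq, Finset.mem_insert, Finset.mem_singleton] at hc
            rcases hc with rfl | rfl
            · exact hxy rfl
            · exact hvV hxV
          · intro hc; simp only [id_eq, Finset.mem_insert, Finset.mem_singleton] at hc
            rcases hc with rfl | rfl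
            · exact huV hyV
            · exact huv rfl
        · rcases ha with rfl | rfl
          · exact fun hc => (hMdisj m hm b (Finset.mem_of_mem_erase hb) (Ne.symm (Finset.ne_of_mem_erase hb))).forall_ne_finset hx hc rfl
          · exact fun hc => huV (hmV b (Finset.mem_of_mem_erase hb) hc)
    have hcard' : M'.card = s + 1 := by
      rw [hM', Finset.card_insert_of_notMem h2, Finset.card_insert_of_notMem h1,
        Finset.card_erase_of_mem hm, hMcard]
      omega
    have := hmle M' hsubG hpd'
    omega
  -- the outside set and neighborhoods
  set U : Finset ℕ := Finset.Icc 1 n \ V with hU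
  set N : ℕ → Finset ℕ := fun x => U.filter (fun u => ({x, u} : Finset ℕ) ∈ G) with hNdef
  have hUe : ∀ u ∈ U, u ∉ V := by intro u hu; rw [hU, Finset.mem_sdiff] at hu; exact hu.2
  have hNe : ∀ x u, u ∈ N x → u ∉ V ∧ ({x, u} : Finset ℕ) ∈ G := by
    intro x u hu
    rw [hNdef] at hu
    simp only [Finset.mem_filter] at hu
    exact ⟨hUe u hu.1, hu.2⟩
  -- choice of endpoints
  have hch : ∀ m : {z // z ∈ M}, ∃ p : ℕ × ℕ, p.1 ∈ m.1 ∧ p.2 ∈ m.1 ∧ p.1 ≠ p.2 ∧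
      (N p.2).card ≤ 1 := by
    intro ⟨m, hm⟩
    obtain ⟨x, y, hxy, hmxy⟩ := Finset.card_eq_two.1 (hM2 m hm)
    have hxm : x ∈ m := by rw [hmxy]; simp
    have hym : y ∈ m := by rw [hmxy]; simp
    by_cases hy1 : (N y).card ≤ 1
    · exact ⟨(x, y), hxm, hym, hxy, hy1⟩
    · refine ⟨(y, x), hym, hxm, hxy.symm, ?_⟩
      rcases (N x).eq_empty_or_nonempty with hemp | ⟨u, hu⟩
      · simp [hemp]
      · exfalso
        obtain ⟨v, hv, hvu⟩ := Finset.exists_mem_ne (s := N y) (by omega) u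
        obtain ⟨huV, huG⟩ := hNe x u hu
        obtain ⟨hvV, hvG⟩ := hNe y v hv
        exact claimA m hm x hxm y hym hxy u v huV hvV (Ne.symm hvu) huG hvG
  choose pf hc1 hc2 hc3 hc4 using hch
  set c : {z // z ∈ M} → ℕ := fun m => (pf m).1 with hcdef
  set d : {z // z ∈ M} → ℕ := fun m => (pf m).2 with hddef
  have hinj : ∀ f : {z // z ∈ M} → ℕ, (∀ m, f m ∈ m.1) → ∀ m1 m2, f m1 = f m2 → m1 = m2 := by
    intro f hf m1 m2 heq
    by_contra hne
    have hne' : m1.1 ≠ m2.1 := fun h => hne (Subtype.ext h)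
    exact (hMdisj m1.1 m1.2 m2.1 m2.2 hne').forall_ne_finset (hf m1) (heq ▸ hf m2) rfl
  have hcd_ne : ∀ m : {z // z ∈ M}, c m ≠ d m := hc3
  have hmpair : ∀ m : {z // z ∈ M}, m.1 = {c m, d m} := fun m =>
    pair_eq (hM2 m.1 m.2) (hc1 m) (hc2 m) (hc3 m)
  set R : Finset ℕ := M.attach.image c with hRdef
  set D : Finset ℕ := M.attach.image d with hDdef
  have hRcard : R.card = s := by
    rw [hRdef, Finset.card_image_of_injOn (fun m1 _ m2 _ h => hinj c hc1 m1 m2 h),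
      Finset.card_attach, hMcard]
  have hDcard : D.card = s := by
    rw [hDdef, Finset.card_image_of_injOn (fun m1 _ m2 _ h => hinj d hc2 m1 m2 h),
      Finset.card_attach, hMcard]
  have hRV : R ⊆ V := by
    intro x hx
    rw [hRdef] at hx
    obtain ⟨m, -, rfl⟩ := Finset.mem_image.1 hx
    exact hmV m.1 m.2 (hc1 m)
  have hDV : D ⊆ V := by
    intro x hx
    rw [hDdef] at hx
    obtain ⟨m, -, rfl⟩ := Finset.mem_image.1 hx
    exact hmV m.1 m.2 (hc2 m)
  have hRsub : R ⊆ Finset.Icc 1 n := hRV.trans hVsub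
  have hDR : ∀ m : {z // z ∈ M}, d m ∉ R := by
    intro m hdm
    rw [hRdef] at hdm
    obtain ⟨m2, -, heq⟩ := Finset.mem_image.1 hdm
    by_cases h : m2 = m
    · exact hc3 m (h ▸ heq)
    · have hne' : m2.1 ≠ m.1 := fun hh => h (Subtype.ext hh)
      have hcm : c m2 ∈ m.1 := by rw [heq]; exact hc2 m
      exact (hMdisj m2.1 m2.2 m.1 m.2 hne').forall_ne_finset (hc1 m2) hcm rfl
  have hsplitV : ∀ x ∈ V, ∃ m : {z // z ∈ M}, x = c m ∨ x = d m := by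
    intro x hx
    obtain ⟨m, hm, hxm⟩ := (hmemV x).1 hx
    refine ⟨⟨m, hm⟩, ?_⟩
    have := hmpair ⟨m, hm⟩
    simp only at this
    rw [this] at hxm
    simpa using hxm
  -- the set of edges avoiding R, split according to ⊆ V
  set A : Finset (Finset ℕ) := G.filter (fun e => e ∩ R = ∅) with hAdef
  have hAmem : ∀ e ∈ A, e ∈ G ∧ ∀ x ∈ e, x ∉ R := by
    intro e he
    rw [hAdef, Finset.mem_filter] at he
    refine ⟨he.1, fun x hx hxR => ?_⟩
    have : x ∈ e ∩ R := Finset.mem_inter.2 ⟨hx, hxR⟩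
    rw [he.2] at this
    exact absurd this (Finset.notMem_empty x)
  set A1 : Finset (Finset ℕ) := A.filter (fun e => e ⊆ V) with hA1def
  set A2 : Finset (Finset ℕ) := A.filter (fun e => ¬ e ⊆ V) with hA2def
  have hAsplit : A1.card + A2.card = A.card := Finset.card_filter_add_card_filter_not _
  have hA1sub : A1 ⊆ D.powersetCard 2 := by
    intro e he
    rw [hA1def, Finset.mem_filter] at he
    obtain ⟨heA, heV⟩ := he
    obtain ⟨heG, heR⟩ := hAmem e heA
    rw [Finset.mem_powersetCard]
    refine ⟨fun x hx => ?_, (hedge e heG).1⟩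
    obtain ⟨m, hcase⟩ := hsplitV x (heV hx)
    rcases hcase with rfl | rfl
    · exact absurd (Finset.mem_image.2 ⟨m, Finset.mem_attach _ _, rfl⟩) (heR _ hx)
    · exact Finset.mem_image.2 ⟨m, Finset.mem_attach _ _, rfl⟩
  have hA1card : A1.card ≤ s.choose 2 := by
    have := Finset.card_le_card hA1sub
    rwa [Finset.card_powersetCard, hDcard] at this
  -- each element of A2 determines a unique matching edge
  have hMatt : (M.attach).Nonempty := by
    rw [← Finset.card_pos, Finset.card_attach, hMcard]; omega
  obtain ⟨m₀, -⟩ := hMatt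
  set F : Finset ℕ → {z // z ∈ M} :=
    fun e => if h : ∃ m : {z // z ∈ M}, d m ∈ e then h.choose else m₀ with hFdef
  have hFd : ∀ e ∈ A, d (F e) ∈ e := by
    intro e he
    obtain ⟨heG, heR⟩ := hAmem e he
    obtain ⟨x, hx⟩ := hmeet e heG
    rw [Finset.mem_inter] at hx
    obtain ⟨m, hcase⟩ := hsplitV x hx.2
    rcases hcase with rfl | rfl
    · exact absurd (Finset.mem_image.2 ⟨m, Finset.mem_attach _ _, rfl⟩) (heR _ hx.1)
    · have hex : ∃ m : {z // z ∈ M}, d m ∈ e := ⟨m, hx.1⟩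
      rw [hFdef]
      simp only [dif_pos hex]
      exact hex.choose_spec
  have hA2e : ∀ e ∈ A2, ∃ u ∈ N (d (F e)), e = {d (F e), u} := by
    intro e he
    rw [hA2def, Finset.mem_filter] at he
    obtain ⟨heA, heV⟩ := he
    obtain ⟨heG, -⟩ := hAmem e heA
    obtain ⟨u, hue, huV⟩ := Finset.not_subset.1 heV
    have hdV : d (F e) ∈ V := hmV _ (F e).2 (hc2 (F e))
    have hne : d (F e) ≠ u := fun h => huV (h ▸ hdV)
    have heq : e = {d (F e), u} := pair_eq (hedge e heG).1 (hFd e heA) hue hne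
    refine ⟨u, ?_, heq⟩
    rw [hNdef]
    simp only [Finset.mem_filter]
    exact ⟨Finset.mem_sdiff.2 ⟨(hedge e heG).2 hue, huV⟩, heq ▸ heG⟩
  have hFinj : Set.InjOn F A2 := by
    intro e1 he1 e2 he2 heq
    rw [Finset.mem_coe] at he1 he2
    by_contra hne
    obtain ⟨u1, hu1, he1'⟩ := hA2e e1 he1
    obtain ⟨u2, hu2, he2'⟩ := hA2e e2 he2
    rw [heq] at he1' hu1
    have hu12 : u1 ≠ u2 := by
      intro h
      rw [h] at he1'
      exact hne (he1'.trans he2'.symm)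
    have : 1 < (N (d (F e2))).card := Finset.one_lt_card.2 ⟨u1, hu1, u2, hu2, hu12⟩
    have h2 : (N (d (F e2))).card ≤ 1 := hc4 (F e2)
    omega
  have hA2card : A2.card ≤ s := by
    have := Finset.card_le_card_of_injOn F (fun e _ => Finset.mem_attach _ _) hFinj
    rwa [Finset.card_attach, hMcard] at this
  have hchoosesum : s.choose 2 + s = (s + 1).choose 2 := by
    rw [Nat.choose_succ_succ]
    simp [Nat.choose_one_right]
    omega
  have hAcard : A.card ≤ (s + 1).choose 2 := by omega
  refine ⟨⟨R, hRsub, hRcard, hAcard⟩, ?_⟩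
  intro H
  -- equality analysis for R
  have hHR : (s + 1).choose 2 ≤ A.card := by
    have h0 := H R hRsub hRcard
    convert h0 using 3
  have hA1eqc : A1.card = s.choose 2 := by omega
  have hA2eqc : A2.card = s := by omega
  have hA1eq : A1 = D.powersetCard 2 := by
    refine Finset.eq_of_subset_of_card_le hA1sub ?_
    rw [Finset.card_powersetCard, hDcard, hA1eqc]
  have hDclique : ∀ p : Finset ℕ, p ⊆ D → p.card = 2 → p ∈ G := by
    intro p hpD hp2
    have : p ∈ A1 := by
      rw [hA1eq, Finset.mem_powersetCard]; exact ⟨hpD, hp2⟩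
    rw [hA1def, Finset.mem_filter] at this
    exact (hAmem p this.1).1
  -- every matching edge has exactly one pendant edge at d m
  have hFsurj : ∀ m : {z // z ∈ M}, ∃ e ∈ A2, F e = m := by
    intro m
    have himg : A2.image F = M.attach := by
      refine Finset.eq_of_subset_of_card_le (fun x _ => Finset.mem_attach _ _) ?_
      rw [Finset.card_image_of_injOn hFinj, Finset.card_attach, hMcard, hA2eqc]
    have : m ∈ A2.image F := by rw [himg]; exact Finset.mem_attach _ _
    obtain ⟨e, he, heq⟩ := Finset.mem_image.1 this
    exact ⟨e, he, heq⟩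
  have hu_ex : ∀ m : {z // z ∈ M}, ∃ u, u ∈ N (d m) := by
    intro m
    obtain ⟨e, he, rfl⟩ := hFsurj m
    obtain ⟨u, hu, -⟩ := hA2e e he
    exact ⟨u, hu⟩
  choose uf huf using hu_ex
  have hufU : ∀ m : {z // z ∈ M}, uf m ∉ V ∧ ({d m, uf m} : Finset ℕ) ∈ G :=
    fun m => hNe _ _ (huf m)
  have hNd : ∀ m : {z // z ∈ M}, N (d m) = {uf m} := by
    intro m
    refine Finset.eq_singleton_iff_unique_mem.2 ⟨huf m, fun x hx => ?_⟩
    have hle : (N (d m)).card ≤ 1 := hc4 m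
    exact Finset.card_le_one.1 hle x hx (uf m) (huf m)
  have hNc : ∀ m : {z // z ∈ M}, ∀ v ∈ N (c m), v = uf m := by
    intro m v hv
    by_contra hne
    obtain ⟨hvV, hvG⟩ := hNe _ _ hv
    exact claimA m.1 m.2 (c m) (hc1 m) (d m) (hc2 m) (hc3 m) v (uf m) hvV (hufU m).1 hne hvG (hufU m).2
  -- equality analysis for D
  have hCD : ∀ m : {z // z ∈ M}, c m ∉ D := by
    intro m hcm
    rw [hDdef] at hcm
    obtain ⟨m2, -, heq⟩ := Finset.mem_image.1 hcm
    by_cases h : m2 = m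
    · exact hc3 m (h ▸ heq).symm
    · have hne' : m2.1 ≠ m.1 := fun hh => h (Subtype.ext hh)
      have hdm : d m2 ∈ m.1 := by rw [heq]; exact hc1 m
      exact (hMdisj m2.1 m2.2 m.1 m.2 hne').forall_ne_finset (hc2 m2) hdm rfl
  set B : Finset (Finset ℕ) := G.filter (fun e => e ∩ D = ∅) with hBdef
  have hBmem : ∀ e ∈ B, e ∈ G ∧ ∀ x ∈ e, x ∉ D := by
    intro e he
    rw [hBdef, Finset.mem_filter] at he
    refine ⟨he.1, fun x hx hxD => ?_⟩
    have : x ∈ e ∩ D := Finset.mem_inter.2 ⟨hx, hxD⟩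
    rw [he.2] at this
    exact absurd this (Finset.notMem_empty x)
  set B1 : Finset (Finset ℕ) := B.filter (fun e => e ⊆ V) with hB1def
  set B2 : Finset (Finset ℕ) := B.filter (fun e => ¬ e ⊆ V) with hB2def
  have hBsplit : B1.card + B2.card = B.card := Finset.card_filter_add_card_filter_not _
  have hB1sub : B1 ⊆ R.powersetCard 2 := by
    intro e he
    rw [hB1def, Finset.mem_filter] at he
    obtain ⟨heB, heV⟩ := he
    obtain ⟨heG, heD⟩ := hBmem e heB
    rw [Finset.mem_powersetCard]
    refine ⟨fun x hx => ?_, (hedge e heG).1⟩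
    obtain ⟨m, hcase⟩ := hsplitV x (heV hx)
    rcases hcase with rfl | rfl
    · exact Finset.mem_image.2 ⟨m, Finset.mem_attach _ _, rfl⟩
    · exact absurd (Finset.mem_image.2 ⟨m, Finset.mem_attach _ _, rfl⟩) (heD _ hx)
  have hB1card : B1.card ≤ s.choose 2 := by
    have := Finset.card_le_card hB1sub
    rwa [Finset.card_powersetCard, hRcard] at this
  set img2 : Finset (Finset ℕ) := M.attach.image (fun m => ({c m, uf m} : Finset ℕ)) with himg2
  have himg2card : img2.card = s := by
    rw [himg2, Finset.card_image_of_injOn, Finset.card_attach, hMcard]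
    intro m1 _ m2 _ heq
    have heq' : ({c m1, uf m1} : Finset ℕ) = {c m2, uf m2} := heq
    have hcm : c m1 ∈ ({c m2, uf m2} : Finset ℕ) := by rw [← heq']; simp
    simp only [Finset.mem_insert, Finset.mem_singleton] at hcm
    rcases hcm with hcm | hcm
    · exact hinj c hc1 m1 m2 hcm
    · exact absurd (hcm ▸ hmV m1.1 m1.2 (hc1 m1)) (hufU m2).1
  have hB2sub : B2 ⊆ img2 := by
    intro e he
    rw [hB2def, Finset.mem_filter] at he
    obtain ⟨heB, heV⟩ := he
    obtain ⟨heG, heD⟩ := hBmem e heB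
    obtain ⟨x, hx⟩ := hmeet e heG
    rw [Finset.mem_inter] at hx
    obtain ⟨m, hcase⟩ := hsplitV x hx.2
    rcases hcase with rfl | rfl
    · -- e = {c m, u} with u ∈ N (c m), hence u = uf m
      obtain ⟨u, hue, huV⟩ := Finset.not_subset.1 heV
      have hne : c m ≠ u := fun h => huV (h ▸ hx.2)
      have heq : e = {c m, u} := pair_eq (hedge e heG).1 hx.1 hue hne
      have huN : u ∈ N (c m) := by
        rw [hNdef]
        simp only [Finset.mem_filter]
        exact ⟨Finset.mem_sdiff.2 ⟨(hedge e heG).2 hue, huV⟩, heq ▸ heG⟩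
      rw [himg2]
      exact Finset.mem_image.2 ⟨m, Finset.mem_attach _ _, by rw [← hNc m u huN, ← heq]⟩
    · exact absurd (Finset.mem_image.2 ⟨m, Finset.mem_attach _ _, rfl⟩) (heD _ hx.1)
  have hB2card : B2.card ≤ s := himg2card ▸ Finset.card_le_card hB2sub
  have hBge : (s + 1).choose 2 ≤ B.card := by
    have h0 := H D (hDV.trans hVsub) hDcard
    convert h0 using 3
  have hB2eqc : B2.card = s := by omega
  have hB2eq : B2 = img2 := Finset.eq_of_subset_of_card_le hB2sub (by omega)
  have hcuf : ∀ m : {z // z ∈ M}, ({c m, uf m} : Finset ℕ) ∈ G := by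
    intro m
    have : ({c m, uf m} : Finset ℕ) ∈ B2 := by
      rw [hB2eq, himg2]
      exact Finset.mem_image.2 ⟨m, Finset.mem_attach _ _, rfl⟩
    rw [hB2def, Finset.mem_filter] at this
    exact (hBmem _ this.1).1
  -- all pendant vertices coincide
  have huconst : ∀ m1 m2 : {z // z ∈ M}, uf m1 = uf m2 := by
    intro m1 m2
    by_contra hneu
    have hne12 : m1 ≠ m2 := fun h => hneu (h ▸ rfl)
    have hne12' : m1.1 ≠ m2.1 := fun h => hne12 (Subtype.ext h)
    have hdisj12 := hMdisj m1.1 m1.2 m2.1 m2.2 hne12'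
    have hcross : ∀ x ∈ m1.1, ∀ y ∈ m2.1, x ≠ y := by
      intro x hx y hy h
      exact hdisj12.forall_ne_finset hx hy h
    have hdd : d m1 ≠ d m2 := hcross _ (hc2 m1) _ (hc2 m2)
    set e1 : Finset ℕ := {c m1, uf m1} with he1
    set e2 : Finset ℕ := {c m2, uf m2} with he2
    set e3 : Finset ℕ := {d m1, d m2} with he3
    have he3D : e3 ⊆ D := by
      intro x hx
      rw [he3] at hx
      simp only [Finset.mem_insert, Finset.mem_singleton] at hx
      rcases hx with rfl | rfl
      · exact Finset.mem_image.2 ⟨m1, Finset.mem_attach _ _, rfl⟩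
      · exact Finset.mem_image.2 ⟨m2, Finset.mem_attach _ _, rfl⟩
    have he3card : e3.card = 2 := by
      rw [he3, Finset.card_insert_of_notMem (by simpa using hdd), Finset.card_singleton]
    have he3G : e3 ∈ G := hDclique e3 he3D he3card
    have he3V : e3 ⊆ V := he3D.trans hDV
    set base : Finset (Finset ℕ) := (M.erase m1.1).erase m2.1 with hbase
    have hbasefact : ∀ e ∈ base, e ∈ M ∧ e ≠ m1.1 ∧ e ≠ m2.1 := by
      intro e he
      rw [hbase, Finset.mem_erase, Finset.mem_erase] at he
      exact ⟨he.2.2, he.2.1, he.1⟩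
    have hbaseV : ∀ e ∈ base, e ⊆ V := fun e he => hmV e (hbasefact e he).1
    have hbase_d1 : ∀ e ∈ base, Disjoint m1.1 e := fun e he =>
      hMdisj m1.1 m1.2 e (hbasefact e he).1 (fun h => (hbasefact e he).2.1 h.symm)
    have hbase_d2 : ∀ e ∈ base, Disjoint m2.1 e := fun e he =>
      hMdisj m2.1 m2.2 e (hbasefact e he).1 (fun h => (hbasefact e he).2.2 h.symm)
    have hxu_disj : ∀ (x u : ℕ) (t : Finset ℕ), t ⊆ V → u ∉ V → x ∉ t →
        Disjoint ({x, u} : Finset ℕ) t := by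
      intro x u t htV huV hxt
      rw [Finset.disjoint_left]
      intro a ha
      simp only [Finset.mem_insert, Finset.mem_singleton] at ha
      rcases ha with rfl | rfl
      · exact hxt
      · exact fun hc => huV (htV hc)
    have hufV1 : uf m1 ∉ V := (hufU m1).1
    have hufV2 : uf m2 ∉ V := (hufU m2).1
    have hcV1 : c m1 ∈ V := hmV _ m1.2 (hc1 m1)
    have hcV2 : c m2 ∈ V := hmV _ m2.2 (hc1 m2)
    have hce3_1 : c m1 ∉ e3 := by
      rw [he3]
      simp only [Finset.mem_insert, Finset.mem_singleton]
      push_neg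
      exact ⟨hc3 m1, hcross _ (hc1 m1) _ (hc2 m2)⟩
    have hce3_2 : c m2 ∉ e3 := by
      rw [he3]
      simp only [Finset.mem_insert, Finset.mem_singleton]
      push_neg
      exact ⟨fun h => hcross _ (hc2 m1) _ (hc1 m2) h.symm, hc3 m2⟩
    have h3nb : e3 ∉ base := by
      intro h
      exact (hbase_d1 e3 h).forall_ne_finset (hc2 m1) (by rw [he3]; exact Finset.mem_insert_self _ _) rfl
    have h2nb : e2 ∉ insert e3 base := by
      simp only [Finset.mem_insert]
      rintro (heq | hmem)
      · have : uf m2 ∈ e3 := by rw [← heq, he2]; simp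
        exact hufV2 (he3V this)
      · exact hufV2 (hbaseV _ hmem (by rw [he2]; simp : uf m2 ∈ e2))
    have h1nb : e1 ∉ insert e2 (insert e3 base) := by
      simp only [Finset.mem_insert]
      rintro (heq | heq | hmem)
      · have : c m1 ∈ e2 := by rw [← heq, he1]; simp
        rw [he2] at this
        simp only [Finset.mem_insert, Finset.mem_singleton] at this
        rcases this with h | h
        · exact hcross _ (hc1 m1) _ (hc1 m2) h
        · exact hufV2 (h ▸ hcV1)
      · have : uf m1 ∈ e3 := by rw [← heq, he1]; simp
        exact hufV1 (he3V this)
      · exact hufV1 (hbaseV _ hmem (by rw [he1]; simp : uf m1 ∈ e1))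
    have hm2e : m2.1 ∈ M.erase m1.1 := Finset.mem_erase.2 ⟨hne12'.symm, m2.2⟩
    have hsge2 : 1 < M.card := Finset.one_lt_card.2 ⟨m1.1, m1.2, m2.1, m2.2, hne12'⟩
    set M' : Finset (Finset ℕ) := insert e1 (insert e2 (insert e3 base)) with hM'
    have hsubG : M' ⊆ G := by
      intro e he
      rw [hM'] at he
      simp only [Finset.mem_insert] at he
      rcases he with rfl | rfl | rfl | he
      · rw [he1]; exact hcuf m1
      · rw [he2]; exact hcuf m2
      · exact he3G
      · exact hMG (hbasefact e he).1
    have hcard' : M'.card = s + 1 := by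
      rw [hM', Finset.card_insert_of_notMem h1nb, Finset.card_insert_of_notMem h2nb,
        Finset.card_insert_of_notMem h3nb, hbase, Finset.card_erase_of_mem hm2e,
        Finset.card_erase_of_mem m1.2, hMcard]
      omega
    have hpd' : (M' : Set (Finset ℕ)).PairwiseDisjoint id := by
      rw [hM', Finset.coe_insert, Finset.coe_insert, Finset.coe_insert]
      have pd0 : ((base : Finset (Finset ℕ)) : Set (Finset ℕ)).PairwiseDisjoint id :=
        hMpd.subset (fun z hz => Finset.mem_coe.2 ((hbasefact z (Finset.mem_coe.1 hz)).1))
      refine Set.PairwiseDisjoint.insert (Set.PairwiseDisjoint.insert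
        (Set.PairwiseDisjoint.insert pd0 ?_) ?_) ?_
      · -- e3 vs base
        intro b hb _
        rw [Finset.mem_coe] at hb
        rw [Finset.disjoint_left]
        intro a ha
        rw [he3] at ha
        simp only [id_eq, Finset.mem_insert, Finset.mem_singleton] at ha
        rcases ha with rfl | rfl
        · exact Finset.disjoint_left.1 (hbase_d1 b hb) (hc2 m1)
        · exact Finset.disjoint_left.1 (hbase_d2 b hb) (hc2 m2)
      · -- e2 vs insert e3 base
        intro b hb _
        simp only [Set.mem_insert_iff, Finset.mem_coe] at hb
        rcases hb with rfl | hb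
        · rw [he2]; exact hxu_disj _ _ _ he3V hufV2 hce3_2
        · rw [he2]
          exact hxu_disj _ _ _ (hbaseV b hb) hufV2
            (Finset.disjoint_left.1 (hbase_d2 b hb) (hc1 m2))
      · -- e1 vs the rest
        intro b hb _
        simp only [Set.mem_insert_iff, Finset.mem_coe] at hb
        rcases hb with rfl | rfl | hb
        · rw [Finset.disjoint_left]
          intro a ha
          rw [he1] at ha
          simp only [id_eq, Finset.mem_insert, Finset.mem_singleton] at ha
          rw [he2]
          simp only [id_eq, Finset.mem_insert, Finset.mem_singleton]
          push_neg
          rcases ha with rfl | rfl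
          · exact ⟨hcross _ (hc1 m1) _ (hc1 m2), fun h => hufV2 (h ▸ hcV1)⟩
          · exact ⟨fun h => hufV1 (h ▸ hcV2), hneu⟩
        · rw [he1]; exact hxu_disj _ _ _ he3V hufV1 hce3_1
        · rw [he1]
          exact hxu_disj _ _ _ (hbaseV b hb) hufV1
            (Finset.disjoint_left.1 (hbase_d1 b hb) (hc1 m1))
    have := hmle M' hsubG hpd'
    omega
  -- the unique external vertex
  set u₀ : ℕ := uf m₀ with hu₀
  have hu₀U : u₀ ∈ U := by
    have := huf m₀
    rw [hNdef] at this
    exact (Finset.mem_filter.1 this).1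
  have hu₀V : u₀ ∉ V := hUe _ hu₀U
  have hUeq : U = {u₀} := by
    refine Finset.Subset.antisymm ?_ ?_
    · intro v hv
      rw [Finset.mem_singleton]
      have hvIcc : v ∈ Finset.Icc 1 n := (Finset.mem_sdiff.1 hv).1
      have hvV : v ∉ V := (Finset.mem_sdiff.1 hv).2
      obtain ⟨e, heG, hve⟩ := hiso v hvIcc
      obtain ⟨x, hx⟩ := hmeet e heG
      rw [Finset.mem_inter] at hx
      have hxv : x ≠ v := fun h => hvV (h ▸ hx.2)
      have heqe : e = {x, v} := pair_eq (hedge e heG).1 hx.1 hve hxv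
      have hvN : v ∈ N x := by
        rw [hNdef]
        simp only [Finset.mem_filter]
        exact ⟨hv, heqe ▸ heG⟩
      obtain ⟨m, hcase⟩ := hsplitV x hx.2
      rcases hcase with rfl | rfl
      · exact (hNc m v hvN).trans (huconst m m₀)
      · rw [hNd m, Finset.mem_singleton] at hvN
        exact hvN.trans (huconst m m₀)
    · intro v hv
      rw [Finset.mem_singleton] at hv
      subst hv
      exact hu₀U
  set W : Finset ℕ := insert u₀ V with hW
  have hWcard : W.card = 2 * s + 1 := by
    rw [hW, Finset.card_insert_of_notMem hu₀V, hVcard]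
  have hIccW : Finset.Icc 1 n = W := by
    refine Finset.Subset.antisymm ?_ ?_
    · intro v hv
      by_cases h : v ∈ V
      · exact Finset.mem_insert_of_mem h
      · have : v ∈ U := Finset.mem_sdiff.2 ⟨hv, h⟩
        rw [hUeq, Finset.mem_singleton] at this
        rw [this]
        exact Finset.mem_insert_self _ _
    · intro v hv
      rw [hW, Finset.mem_insert] at hv
      rcases hv with rfl | hv
      · exact (Finset.mem_sdiff.1 hu₀U).1
      · exact hVsub hv
  refine ⟨W, hWcard, ?_⟩
  refine Finset.Subset.antisymm ?_ ?_
  · intro e he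
    have := hG he
    rwa [hIccW] at this
  · intro p hp
    rw [Finset.mem_powersetCard] at hp
    have hp2 : p.card = 2 := hp.2
    obtain ⟨S, hpS, hSW, hScard⟩ :=
      Finset.exists_subsuperset_card_eq (n := s + 1) hp.1 (by omega) (by rw [hWcard]; omega)
    set R3 : Finset ℕ := W \ S with hR3
    have hR3card : R3.card = s := by
      rw [hR3, Finset.card_sdiff_of_subset hSW, hWcard, hScard]
      omega
    have hR3sub : R3 ⊆ Finset.Icc 1 n := by
      rw [hIccW, hR3]
      exact Finset.sdiff_subset
    have hge : (s + 1).choose 2 ≤ (G.filter fun e => e ∩ R3 = ∅).card := by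
      have h0 := H R3 hR3sub hR3card
      convert h0 using 3
    have hsub : (G.filter fun e => e ∩ R3 = ∅) ⊆ S.powersetCard 2 := by
      intro e he
      rw [Finset.mem_filter] at he
      rw [Finset.mem_powersetCard]
      refine ⟨?_, (hedge e he.1).1⟩
      intro x hx
      have hxW : x ∈ W := by
        have := hG he.1
        rw [hIccW, Finset.mem_powersetCard] at this
        exact this.1 hx
      by_contra hxS
      have : x ∈ e ∩ R3 := Finset.mem_inter.2 ⟨hx, by rw [hR3]; exact Finset.mem_sdiff.2 ⟨hxW, hxS⟩⟩
      rw [he.2] at this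
      exact absurd this (Finset.notMem_empty x)
    have heqS : (G.filter fun e => e ∩ R3 = ∅) = S.powersetCard 2 :=
      Finset.eq_of_subset_of_card_le hsub
        (by rw [Finset.card_powersetCard, hScard]; exact hge)
    have : p ∈ (G.filter fun e => e ∩ R3 = ∅) := by
      rw [heqS, Finset.mem_powersetCard]
      exact ⟨hpS, hp2⟩
    exact (Finset.filter_subset _ _) this
end

section
/- Let G be the edge set of a graph on n vertices with matching number ν(G) = s, where s ≥ 1, and with no isolated vertices. If G is not a subgraph of a complete graph on 2s+1 vertices (i.e., the edges of G do not all lie within some set of 2s+1 vertices), then there exists an s-element vertex set R such that the number of edges of G disjoint from R is at most C(s, 2) + 1. -/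
open Finset

namespace StmtAux


abbrev pd (M : Finset (Finset ℕ)) : Prop := (M : Set (Finset ℕ)).PairwiseDisjoint id

lemma mn_bdd (G : Finset (Finset ℕ)) : BddAbove {s | ∃ M ⊆ G, M.card = s ∧ pd M} := by
  refine ⟨G.card, ?_⟩
  rintro k ⟨M, hMG, rfl, -⟩
  exact Finset.card_le_card hMG

lemma mn_le {G M : Finset (Finset ℕ)} (hMG : M ⊆ G) (hpd : pd M) :
    M.card ≤ matchingNumber G :=
  le_csSup (mn_bdd G) ⟨M, hMG, rfl, hpd⟩

lemma mn_exists (G : Finset (Finset ℕ)) :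
    ∃ M, M ⊆ G ∧ M.card = matchingNumber G ∧ pd M := by
  have h : matchingNumber G ∈ {s | ∃ M ⊆ G, M.card = s ∧ pd M} :=
    Nat.sSup_mem ⟨0, ∅, by simp [pd]⟩ (mn_bdd G)
  obtain ⟨M, h1, h2, h3⟩ := h
  exact ⟨M, h1, h2, h3⟩

lemma pd_unique {M : Finset (Finset ℕ)} (h : pd M) {e g : Finset ℕ} (he : e ∈ M)
    (hg : g ∈ M) {x : ℕ} (hxe : x ∈ e) (hxg : x ∈ g) : e = g := by
  by_contra hne
  exact (Finset.disjoint_left.mp (h (Finset.mem_coe.2 he) (Finset.mem_coe.2 hg) hne)) hxe hxg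

lemma pd_mono {M M' : Finset (Finset ℕ)} (h : pd M) (hsub : M' ⊆ M) : pd M' :=
  h.subset (Finset.coe_subset.2 hsub)

lemma aug {G : Finset (Finset ℕ)} {s : ℕ} (hν : matchingNumber G = s)
    {M : Finset (Finset ℕ)} (hMG : M ⊆ G) (hpd : pd M) (hcard : M.card = s)
    {e : Finset ℕ} (heG : e ∈ G) (hne : e.Nonempty)
    (hdisj : ∀ f ∈ M, ∀ x ∈ e, x ∉ f) : False := by
  have heM : e ∉ M := fun h => (hdisj e h hne.choose hne.choose_spec) hne.choose_spec
  have hpd' : pd (insert e M) := by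
    unfold pd
    rw [Finset.coe_insert]
    refine Set.pairwiseDisjoint_insert.mpr ⟨hpd, fun f hf _ => ?_⟩
    exact Finset.disjoint_left.mpr (fun x hx hxf => hdisj f (Finset.mem_coe.1 hf) x hx hxf)
  have hsub : insert e M ⊆ G := by
    intro f hf; rcases Finset.mem_insert.mp hf with h|h
    · exact h ▸ heG
    · exact hMG h
  have := mn_le hsub hpd'
  rw [Finset.card_insert_of_notMem heM, hcard, hν] at this
  omega


lemma pd_insert {M : Finset (Finset ℕ)} (h : pd M) {e : Finset ℕ}
    (hd : ∀ f ∈ M, ∀ x ∈ e, x ∉ f) : pd (insert e M) := by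
  unfold pd
  rw [Finset.coe_insert]
  refine Set.pairwiseDisjoint_insert.mpr ⟨h, fun f hf _ => ?_⟩
  exact Finset.disjoint_left.mpr (fun x hx hxf => hd f (Finset.mem_coe.1 hf) x hx hxf)

/-- Berge-style switching lemma. -/
lemma sw : ∀ (n : ℕ) (M N : Finset (Finset ℕ)), M.card ≤ n →
    (∀ e ∈ M, e.card = 2) → (∀ e ∈ N, e.card = 2) → pd M → pd N →
    ∀ w : ℕ, (∃ e ∈ M, w ∈ e) → (∀ e ∈ N, w ∉ e) →
    (∃ M' z, M' ⊆ M ∪ N ∧ pd M' ∧ M'.card = M.card ∧ (∀ e ∈ M', w ∉ e) ∧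
      ∀ v : ℕ, (∃ e ∈ M', v ∈ e) → (∃ e ∈ M, v ∈ e) ∨ v = z) ∨
    (∃ N', N' ⊆ M ∪ N ∧ pd N' ∧ N'.card = N.card + 1) := by
  intro n
  induction n with
  | zero =>
    intro M N hn _ _ _ _ w hw _
    obtain ⟨e, heM, -⟩ := hw
    simp [Finset.card_eq_zero.mp (Nat.le_zero.mp hn)] at heM
  | succ n IHn =>
    intro M N hn h2M h2N hpdM hpdN w hw hwN
    obtain ⟨e, heM, hwe⟩ := hw
    -- e = {w, q}
    obtain ⟨x, y, hxy, hexy⟩ := Finset.card_eq_two.mp (h2M e heM)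
    obtain ⟨q, hq, hwq⟩ : ∃ q, e = {w, q} ∧ w ≠ q := by
      subst hexy
      rcases Finset.mem_insert.mp hwe with h | h
      · exact ⟨y, by rw [h], h ▸ hxy⟩
      · rw [Finset.mem_singleton.mp h]
        exact ⟨x, by rw [Finset.pair_comm], fun hh => hxy hh.symm⟩
    by_cases hqN : ∃ f ∈ N, q ∈ f
    · obtain ⟨f, hfN, hqf⟩ := hqN
      obtain ⟨x', y', hxy', hfxy⟩ := Finset.card_eq_two.mp (h2N f hfN)
      obtain ⟨r, hr, hqr⟩ : ∃ r, f = {q, r} ∧ q ≠ r := by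
        subst hfxy
        rcases Finset.mem_insert.mp hqf with h | h
        · exact ⟨y', by rw [h], h ▸ hxy'⟩
        · rw [Finset.mem_singleton.mp h]
          exact ⟨x', by rw [Finset.pair_comm], fun hh => hxy' hh.symm⟩
      have hwf : w ∉ f := hwN f hfN
      have hrw : r ≠ w := by rintro rfl; exact hwf (hr ▸ by simp)
      set M₁ := M.erase e with hM₁
      set N₁ := N.erase f with hN₁
      have hqe : q ∈ e := hq ▸ by simp
      have hqM₁ : ∀ g ∈ M₁, q ∉ g := by
        intro g hg hqg
        exact (Finset.ne_of_mem_erase hg)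
          (pd_unique hpdM (Finset.mem_of_mem_erase hg) heM hqg hqe)
      have hwM₁ : ∀ g ∈ M₁, w ∉ g := by
        intro g hg hwg
        exact (Finset.ne_of_mem_erase hg)
          (pd_unique hpdM (Finset.mem_of_mem_erase hg) heM hwg hwe)
      have hqN₁ : ∀ g ∈ N₁, q ∉ g := by
        intro g hg hqg
        exact (Finset.ne_of_mem_erase hg)
          (pd_unique hpdN (Finset.mem_of_mem_erase hg) hfN hqg hqf)
      have hrf : r ∈ f := hr ▸ by simp
      have hrN₁ : ∀ g ∈ N₁, r ∉ g := by
        intro g hg hrg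
        exact (Finset.ne_of_mem_erase hg)
          (pd_unique hpdN (Finset.mem_of_mem_erase hg) hfN hrg hrf)
      have hM₁card : M₁.card = M.card - 1 := Finset.card_erase_of_mem heM
      have hM₁n : M₁.card ≤ n := by
        have := Finset.card_pos.mpr ⟨e, heM⟩; omega
      have hsubM₁ : M₁ ⊆ M := Finset.erase_subset _ _
      have hsubN₁ : N₁ ⊆ N := Finset.erase_subset _ _
      by_cases hrM₁ : ∃ g ∈ M₁, r ∈ g
      · -- recurse
        rcases IHn M₁ N₁ hM₁n (fun g hg => h2M g (hsubM₁ hg)) (fun g hg => h2N g (hsubN₁ hg))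
          (pd_mono hpdM hsubM₁) (pd_mono hpdN hsubN₁) r hrM₁ hrN₁ with
          ⟨M₁', z₁, hsub', hpd', hcard', hrM₁', hcov⟩ | ⟨N₁', hsub', hpd', hcard'⟩
        · -- lift left
          left
          have hqM₁' : ∀ g ∈ M₁', q ∉ g := by
            intro g hg
            rcases Finset.mem_union.mp (hsub' hg) with h | h
            exacts [hqM₁ g h, hqN₁ g h]
          have hwM₁' : ∀ g ∈ M₁', w ∉ g := by
            intro g hg
            rcases Finset.mem_union.mp (hsub' hg) with h | h
            exacts [hwM₁ g h, hwN g (hsubN₁ h)]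
          have hfd : ∀ g ∈ M₁', ∀ x ∈ f, x ∉ g := by
            intro g hg x hx
            rcases Finset.mem_insert.mp (hr ▸ hx) with h | h
            · exact h ▸ hqM₁' g hg
            · exact (Finset.mem_singleton.mp h) ▸ hrM₁' g hg
          have hfM₁' : f ∉ M₁' := fun h => hfd f h q hqf hqf
          refine ⟨insert f M₁', z₁, ?_, ?_, ?_, ?_, ?_⟩
          · intro g hg
            rcases Finset.mem_insert.mp hg with h | h
            · exact Finset.mem_union_right _ (h ▸ hfN)
            · rcases Finset.mem_union.mp (hsub' h) with h' | h'
              exacts [Finset.mem_union_left _ (hsubM₁ h'), Finset.mem_union_right _ (hsubN₁ h')]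
          · exact pd_insert hpd' (fun g hg x hx hxg => hfd g hg x hx hxg)
          · rw [Finset.card_insert_of_notMem hfM₁', hcard', hM₁card]
            have := Finset.card_pos.mpr ⟨e, heM⟩; omega
          · intro g hg
            rcases Finset.mem_insert.mp hg with h | h
            · exact h ▸ hwf
            · exact hwM₁' g h
          · intro v hv
            obtain ⟨g, hg, hvg⟩ := hv
            rcases Finset.mem_insert.mp hg with h | h
            · subst h
              rcases Finset.mem_insert.mp (hr ▸ hvg) with h | h
              · exact Or.inl ⟨e, heM, h ▸ hqe⟩
              · rw [Finset.mem_singleton.mp h]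
                obtain ⟨g', hg', hrg'⟩ := hrM₁
                exact Or.inl ⟨g', hsubM₁ hg', hrg'⟩
            · rcases hcov v ⟨g, h, hvg⟩ with h' | h'
              · obtain ⟨g', hg', hvg'⟩ := h'
                exact Or.inl ⟨g', hsubM₁ hg', hvg'⟩
              · exact Or.inr h'
        · -- lift right
          right
          have hwN₁' : ∀ g ∈ N₁', w ∉ g := by
            intro g hg
            rcases Finset.mem_union.mp (hsub' hg) with h | h
            exacts [hwM₁ g h, hwN g (hsubN₁ h)]
          have hqN₁' : ∀ g ∈ N₁', q ∉ g := by
            intro g hg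
            rcases Finset.mem_union.mp (hsub' hg) with h | h
            exacts [hqM₁ g h, hqN₁ g h]
          have hed : ∀ g ∈ N₁', ∀ x ∈ e, x ∉ g := by
            intro g hg x hx
            rcases Finset.mem_insert.mp (hq ▸ hx) with h | h
            · exact h ▸ hwN₁' g hg
            · exact (Finset.mem_singleton.mp h) ▸ hqN₁' g hg
          have heN₁' : e ∉ N₁' := fun h => hed e h w hwe hwe
          refine ⟨insert e N₁', ?_, ?_, ?_⟩
          · intro g hg
            rcases Finset.mem_insert.mp hg with h | h
            · exact Finset.mem_union_left _ (h ▸ heM)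
            · rcases Finset.mem_union.mp (hsub' h) with h' | h'
              exacts [Finset.mem_union_left _ (hsubM₁ h'), Finset.mem_union_right _ (hsubN₁ h')]
          · exact pd_insert hpd' (fun g hg x hx hxg => hed g hg x hx hxg)
          · rw [Finset.card_insert_of_notMem heN₁', hcard', Finset.card_erase_of_mem hfN]
            have := Finset.card_pos.mpr ⟨f, hfN⟩; omega
      · -- r not covered by M₁ : direct switch
        left
        push_neg at hrM₁
        have hfd : ∀ g ∈ M₁, ∀ x ∈ f, x ∉ g := by
          intro g hg x hx
          rcases Finset.mem_insert.mp (hr ▸ hx) with h | h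
          · exact h ▸ hqM₁ g hg
          · rw [Finset.mem_singleton.mp h]; exact fun hxg => hrM₁ g hg hxg
        have hfM₁ : f ∉ M₁ := fun h => hfd f h q hqf hqf
        refine ⟨insert f M₁, r, ?_, ?_, ?_, ?_, ?_⟩
        · intro g hg
          rcases Finset.mem_insert.mp hg with h | h
          · exact Finset.mem_union_right _ (h ▸ hfN)
          · exact Finset.mem_union_left _ (hsubM₁ h)
        · exact pd_insert (pd_mono hpdM hsubM₁) hfd
        · rw [Finset.card_insert_of_notMem hfM₁, hM₁card]
          have := Finset.card_pos.mpr ⟨e, heM⟩; omega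
        · intro g hg
          rcases Finset.mem_insert.mp hg with h | h
          · exact h ▸ hwf
          · exact hwM₁ g h
        · intro v hv
          obtain ⟨g, hg, hvg⟩ := hv
          rcases Finset.mem_insert.mp hg with h | h
          · subst h
            rcases Finset.mem_insert.mp (hr ▸ hvg) with h | h
            · exact Or.inl ⟨e, heM, h ▸ hqe⟩
            · exact Or.inr (Finset.mem_singleton.mp h)
          · exact Or.inl ⟨g, hsubM₁ h, hvg⟩
    · -- q not covered by N : augment
      right
      push_neg at hqN
      have hed : ∀ g ∈ N, ∀ x ∈ e, x ∉ g := by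
        intro g hg x hx
        rcases Finset.mem_insert.mp (hq ▸ hx) with h | h
        · exact h ▸ hwN g hg
        · exact (Finset.mem_singleton.mp h) ▸ hqN g hg
      have heN : e ∉ N := fun h => hed e h w hwe hwe
      refine ⟨insert e N, ?_, ?_, ?_⟩
      · intro g hg
        rcases Finset.mem_insert.mp hg with h | h
        · exact Finset.mem_union_left _ (h ▸ heM)
        · exact Finset.mem_union_right _ h
      · exact pd_insert hpdN hed
      · rw [Finset.card_insert_of_notMem heN]


/-- adjacency relation of the edge family -/
def adjG (G : Finset (Finset ℕ)) (x y : ℕ) : Prop :=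
  x ≠ y ∧ ∃ e ∈ G, x ∈ e ∧ y ∈ e

lemma gallai {G : Finset (Finset ℕ)} {s : ℕ} (h2 : ∀ e ∈ G, e.card = 2)
    (hν : matchingNumber G = s)
    (hAll : ∀ v : ℕ, ∃ N, N ⊆ G ∧ pd N ∧ N.card = s ∧ ∀ e ∈ N, v ∉ e)
    {u u' : ℕ} (hreach : Relation.ReflTransGen (adjG G) u u') :
    ∀ M, M ⊆ G → pd M → M.card = s → (∀ e ∈ M, u ∉ e) → (∀ e ∈ M, u' ∉ e) → u = u' := by
  induction hreach using Relation.ReflTransGen.head_induction_on with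
  | refl => intro _ _ _ _ _ _; rfl
  | head hac hcb IH =>
    rename_i a c
    intro M hMG hpdM hMcard haM hu'M
    by_cases hau' : a = u'
    · exact hau'
    exfalso
    obtain ⟨hane, e, heG, hae, hce⟩ := hac
    have he2 := h2 e heG
    have heac : ∀ x ∈ e, x = a ∨ x = c := by
      intro x hx
      have hsub : ({a, c} : Finset ℕ) ⊆ e := by
        intro y hy; rcases Finset.mem_insert.mp hy with h|h
        · exact h ▸ hae
        · exact (Finset.mem_singleton.mp h) ▸ hce
      have hcard2 : ({a, c} : Finset ℕ).card = 2 := Finset.card_pair hane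
      have : e = {a, c} := (Finset.eq_of_subset_of_card_le hsub (by omega)).symm
      rw [this] at hx
      rcases Finset.mem_insert.mp hx with h|h
      · exact Or.inl h
      · exact Or.inr (Finset.mem_singleton.mp h)
    by_cases hcM : ∃ g ∈ M, c ∈ g
    · -- c covered by M; use inessential c and switch
      obtain ⟨N, hNG, hpdN, hNcard, hcN⟩ := hAll c
      rcases sw M.card M N le_rfl (fun g hg => h2 g (hMG hg)) (fun g hg => h2 g (hNG hg))
        hpdM hpdN c hcM hcN with
        ⟨M', z, hsub', hpd', hcard', hcM', hcov⟩ | ⟨N', hsub', hpd', hcard'⟩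
      · have hM'G : M' ⊆ G := fun g hg => by
          rcases Finset.mem_union.mp (hsub' hg) with h|h
          exacts [hMG h, hNG h]
        have hM'card : M'.card = s := by rw [hcard', hMcard]
        by_cases haM' : ∃ g ∈ M', a ∈ g
        · -- a = z, so u' not covered by M'
          have haz : a = z := by
            rcases hcov a haM' with h|h
            · obtain ⟨g, hg, hag⟩ := h; exact absurd hag (haM g hg)
            · exact h
          have hu'M' : ∀ g ∈ M', u' ∉ g := by
            intro g hg hu'g
            rcases hcov u' ⟨g, hg, hu'g⟩ with h|h
            · obtain ⟨g', hg', h'⟩ := h; exact hu'M g' hg' h'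
            · exact hau' (haz ▸ h.symm ▸ rfl)
          -- M' misses c and u', and c reaches u'
          have hcu' : c = u' := IH M' hM'G hpd' hM'card hcM' hu'M'
          obtain ⟨g, hg, hcg⟩ := hcM
          exact hu'M g hg (hcu' ▸ hcg)
        · -- a and c both missed by M' : augment with e
          push_neg at haM'
          refine aug hν hM'G hpd' hM'card heG ⟨a, hae⟩ ?_
          intro g hg x hx
          rcases heac x hx with h|h
          · exact h ▸ haM' g hg
          · exact h ▸ hcM' g hg
      · have hN'G : N' ⊆ G := fun g hg => by
          rcases Finset.mem_union.mp (hsub' hg) with h|h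
          exacts [hMG h, hNG h]
        have := mn_le hN'G hpd'
        rw [hcard', hNcard, hν] at this
        omega
    · -- c missed by M too: augment with e
      push_neg at hcM
      refine aug hν hMG hpdM hMcard heG ⟨a, hae⟩ ?_
      intro g hg x hx
      rcases heac x hx with h|h
      · exact h ▸ haM g hg
      · exact h ▸ hcM g hg


lemma mn_mono {G H : Finset (Finset ℕ)} (h : H ⊆ G) :
    matchingNumber H ≤ matchingNumber G := by
  obtain ⟨M, hMH, hcard, hpd⟩ := mn_exists H
  exact hcard ▸ mn_le (hMH.trans h) hpd

lemma edge_subset_sup {G : Finset (Finset ℕ)} {e : Finset ℕ} (he : e ∈ G) :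
    e ⊆ G.sup id := Finset.le_sup (f := id) he

lemma count_pairs {H : Finset (Finset ℕ)} (h2 : ∀ e ∈ H, e.card = 2) {U : Finset ℕ}
    {p : Finset ℕ → Prop} [DecidablePred p] (hU : ∀ e ∈ H, p e → e ⊆ U) :
    (H.filter p).card ≤ U.card.choose 2 := by
  have hsub : H.filter p ⊆ U.powersetCard 2 := by
    intro e he
    obtain ⟨heH, hpe⟩ := Finset.mem_filter.mp he
    exact Finset.mem_powersetCard.mpr ⟨hU e heH hpe, h2 e heH⟩
  calc (H.filter p).card ≤ (U.powersetCard 2).card := Finset.card_le_card hsub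
    _ = U.card.choose 2 := Finset.card_powersetCard 2 U

lemma choose2_succ (n : ℕ) : (n+1).choose 2 = n.choose 2 + n := by
  rw [Nat.choose_succ_succ]
  simp [Nat.choose_one_right]
  omega

lemma choose2_add (p q : ℕ) : (p+q).choose 2 = p.choose 2 + q.choose 2 + p*q := by
  induction q with
  | zero => simp
  | succ q ih =>
    have : p + (q+1) = (p+q) + 1 := by ring
    rw [this, choose2_succ, ih, choose2_succ, Nat.mul_succ]
    ring

lemma parts_ineq {p q : ℕ} (hp : 1 ≤ p) (hq : 1 ≤ q) :
    (p+1).choose 2 + (q+1).choose 2 ≤ (p+q).choose 2 + 1 := by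
  rw [choose2_succ, choose2_succ, choose2_add]
  obtain ⟨p', rfl⟩ : ∃ p', p = p' + 1 := ⟨p - 1, by omega⟩
  obtain ⟨q', rfl⟩ : ∃ q', q = q' + 1 := ⟨q - 1, by omega⟩
  have h : (p'+1)*(q'+1) = p'*q' + p' + q' + 1 := by ring
  omega

/-- bound for a part with small support -/
lemma small_part {H : Finset (Finset ℕ)} {t : ℕ} (h2 : ∀ e ∈ H, e.card = 2)
    (hνH : matchingNumber H = t) (hsm : (H.sup id).card ≤ 2*t+1) :
    ∃ R, R ⊆ H.sup id ∧ R.card ≤ t ∧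
      (H.filter fun e => e ∩ R = ∅).card ≤ (t+1).choose 2 := by
  obtain ⟨X, hXU, hXcard⟩ :=
    Finset.exists_subset_card_eq (s := H.sup id) (n := min t (H.sup id).card) (min_le_right _ _)
  have hXt : X.card ≤ t := by
    have := min_le_left t (H.sup id).card
    omega
  refine ⟨X, hXU, hXt, ?_⟩
  have hcount : (H.filter fun e => e ∩ X = ∅).card ≤ ((H.sup id) \ X).card.choose 2 := by
    refine count_pairs h2 ?_
    intro e heH hpe
    intro x hx
    refine Finset.mem_sdiff.mpr ⟨edge_subset_sup heH hx, ?_⟩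
    intro hxX
    exact (Finset.eq_empty_iff_forall_notMem.mp hpe x) (Finset.mem_inter.mpr ⟨hx, hxX⟩)
  refine hcount.trans (Nat.choose_le_choose 2 ?_)
  rw [Finset.card_sdiff_of_subset hXU, hXcard]
  have := min_le_left t (H.sup id).card
  have := min_le_right t (H.sup id).card
  rcases le_total t (H.sup id).card with h | h
  · rw [min_eq_left h]; omega
  · rw [min_eq_right h]; omega


lemma main : ∀ s : ℕ, 1 ≤ s → ∀ G : Finset (Finset ℕ), (∀ e ∈ G, e.card = 2) →
    matchingNumber G = s → 2*s+2 ≤ (G.sup id).card →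
    ∃ R, R ⊆ G.sup id ∧ R.card ≤ s ∧
      (G.filter fun e => e ∩ R = ∅).card ≤ s.choose 2 + 1 := by
  intro s
  induction s using Nat.strong_induction_on with
  | _ s IH =>
  intro hs G h2 hν hsupp
  classical
  by_cases hess : ∃ v : ℕ, ∀ N, N ⊆ G → pd N → N.card = s → ∃ e ∈ N, v ∈ e
  · -- Case 1 : an essential vertex v exists
    obtain ⟨v, hv⟩ := hess
    set G' := G.filter (fun e => v ∉ e) with hG'def
    have hG'G : G' ⊆ G := Finset.filter_subset _ _
    have h2' : ∀ e ∈ G', e.card = 2 := fun e he => h2 e (hG'G he)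
    have hvG : ∃ e ∈ G, v ∈ e := by
      by_contra hno
      push_neg at hno
      obtain ⟨M, hMG, hMcard, hpdM⟩ := mn_exists G
      obtain ⟨e, heM, hve⟩ := hv M hMG hpdM (by rw [hMcard, hν])
      exact hno e (hMG heM) hve
    have hvsup : v ∈ G.sup id := by
      obtain ⟨e, he, hve⟩ := hvG; exact edge_subset_sup he hve
    have hsup'sub : G'.sup id ⊆ G.sup id := Finset.sup_mono hG'G
    have hνG' : matchingNumber G' = s - 1 := by
      have hle : matchingNumber G' ≤ s := hν ▸ mn_mono hG'G
      have hlt : matchingNumber G' ≠ s := by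
        intro heq
        obtain ⟨M, hMG', hMcard, hpdM⟩ := mn_exists G'
        obtain ⟨e, heM, hve⟩ := hv M (hMG'.trans hG'G) hpdM (by rw [hMcard, heq])
        exact (Finset.mem_filter.mp (hMG' heM)).2 hve
      have hge : s - 1 ≤ matchingNumber G' := by
        obtain ⟨M, hMG, hMcard, hpdM⟩ := mn_exists G
        have hv1 : (M.filter (fun e => v ∈ e)).card ≤ 1 := by
          refine Finset.card_le_one.mpr ?_
          intro e he f hf
          exact pd_unique hpdM (Finset.mem_of_mem_filter e he) (Finset.mem_of_mem_filter f hf)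
            (Finset.mem_filter.mp he).2 (Finset.mem_filter.mp hf).2
        have hsplit := Finset.card_filter_add_card_filter_not (s := M)
          (p := fun e => v ∈ e)
        have hsub : M.filter (fun e => ¬ v ∈ e) ⊆ G' := by
          intro e he
          exact Finset.mem_filter.mpr ⟨hMG (Finset.mem_of_mem_filter e he),
            (Finset.mem_filter.mp he).2⟩
        have hmn := mn_le hsub (pd_mono hpdM (Finset.filter_subset _ _))
        rw [hMcard, hν] at hsplit
        omega
      omega
    by_cases hsm : (G'.sup id).card ≤ 2*s - 1
    · -- 1a : support of G' is small
      obtain ⟨X, hXU, hXcard⟩ := Finset.exists_subset_card_eq (s := G'.sup id)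
        (n := min (s-1) (G'.sup id).card) (min_le_right _ _)
      have hXle : X.card ≤ s - 1 := by
        have := min_le_left (s-1) (G'.sup id).card; omega
      refine ⟨insert v X, ?_, ?_, ?_⟩
      · intro x hx
        rcases Finset.mem_insert.mp hx with h | h
        · exact h ▸ hvsup
        · exact hsup'sub (hXU h)
      · calc (insert v X).card ≤ X.card + 1 := Finset.card_insert_le _ _
          _ ≤ s := by omega
      · have hcount : (G.filter fun e => e ∩ insert v X = ∅).card ≤
            ((G'.sup id) \ X).card.choose 2 := by
          refine count_pairs h2 ?_
          intro e heG hpe x hx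
          have hnR : ∀ y ∈ insert v X, y ∉ e := by
            intro y hy hye
            exact (Finset.eq_empty_iff_forall_notMem.mp hpe y)
              (Finset.mem_inter.mpr ⟨hye, hy⟩)
          have heG' : e ∈ G' := Finset.mem_filter.mpr
            ⟨heG, hnR v (Finset.mem_insert_self _ _)⟩
          refine Finset.mem_sdiff.mpr ⟨edge_subset_sup heG' hx, ?_⟩
          intro hxX
          exact hnR x (Finset.mem_insert_of_mem hxX) hx
        refine hcount.trans ?_
        have hcardU : ((G'.sup id) \ X).card ≤ s := by
          rw [Finset.card_sdiff_of_subset hXU, hXcard]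
          rcases le_total (s-1) (G'.sup id).card with h | h
          · rw [min_eq_left h]; omega
          · rw [min_eq_right h]; omega
        exact (Nat.choose_le_choose 2 hcardU).trans (by omega)
    · -- 1b : support of G' is large, use IH at s-1
      have hb : 2*s ≤ (G'.sup id).card := by omega
      have hs1 : 1 ≤ s - 1 := by
        rcases Nat.lt_or_ge 0 (matchingNumber G') with h | h
        · omega
        · exfalso
          -- mn G' = 0 yet supp G' nonempty : contradiction
          have hne : (G'.sup id).Nonempty := Finset.card_pos.mp (by omega)
          obtain ⟨x, hx⟩ := hne
          obtain ⟨e, heG', hxe⟩ := Finset.mem_sup.mp hx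
          have h1 : ({e} : Finset (Finset ℕ)).card ≤ matchingNumber G' := by
            refine mn_le ?_ ?_
            · intro f hf; rw [Finset.mem_singleton.mp hf]; exact heG'
            · simp [pd]
          simp at h1
          omega
      obtain ⟨R', hsub', hcard', hcount'⟩ := IH (s-1) (by omega) hs1 G' h2' hνG'
        (by omega)
      refine ⟨insert v R', ?_, ?_, ?_⟩
      · intro x hx
        rcases Finset.mem_insert.mp hx with h | h
        · exact h ▸ hvsup
        · exact hsup'sub (hsub' h)
      · calc (insert v R').card ≤ R'.card + 1 := Finset.card_insert_le _ _
          _ ≤ s := by omega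
      · have hsub2 : (G.filter fun e => e ∩ insert v R' = ∅) ⊆
            (G'.filter fun e => e ∩ R' = ∅) := by
          intro e he
          obtain ⟨heG, hpe⟩ := Finset.mem_filter.mp he
          have hnR : ∀ y ∈ insert v R', y ∉ e := by
            intro y hy hye
            exact (Finset.eq_empty_iff_forall_notMem.mp hpe y)
              (Finset.mem_inter.mpr ⟨hye, hy⟩)
          refine Finset.mem_filter.mpr ⟨Finset.mem_filter.mpr
            ⟨heG, hnR v (Finset.mem_insert_self _ _)⟩, ?_⟩
          refine Finset.eq_empty_iff_forall_notMem.mpr ?_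
          intro x hx
          obtain ⟨hxe, hxR⟩ := Finset.mem_inter.mp hx
          exact hnR x (Finset.mem_insert_of_mem hxR) hxe
        have h1 := Finset.card_le_card hsub2
        have h2le : (s-1).choose 2 ≤ s.choose 2 := Nat.choose_le_choose 2 (by omega)
        omega
  · -- Case 2 : no essential vertex
    push_neg at hess
    obtain ⟨M, hMG, hMcard', hpdM⟩ := mn_exists G
    have hMcard : M.card = s := by rw [hMcard', hν]
    have hVcard : (M.sup id).card ≤ 2*s := by
      rw [Finset.sup_eq_biUnion]
      calc (M.biUnion id).card ≤ ∑ e ∈ M, e.card := Finset.card_biUnion_le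
        _ = ∑ _e ∈ M, 2 := Finset.sum_congr rfl (fun e he => h2 e (hMG he))
        _ = 2*s := by rw [Finset.sum_const, hMcard]; ring
    have h2le : 2 ≤ ((G.sup id) \ (M.sup id)).card := by
      have := Finset.le_card_sdiff (M.sup id) (G.sup id)
      omega
    obtain ⟨u, hu, u', hu', huu'⟩ := Finset.one_lt_card.mp (show 1 < ((G.sup id) \ (M.sup id)).card by omega)
    obtain ⟨husup, huV⟩ := Finset.mem_sdiff.mp hu
    obtain ⟨hu'sup, hu'V⟩ := Finset.mem_sdiff.mp hu'
    have humiss : ∀ e ∈ M, u ∉ e := by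
      intro e he hue; exact huV (Finset.mem_sup.mpr ⟨e, he, hue⟩)
    have hu'miss : ∀ e ∈ M, u' ∉ e := by
      intro e he hue; exact hu'V (Finset.mem_sup.mpr ⟨e, he, hue⟩)
    set A := (G.sup id).filter (Relation.ReflTransGen (adjG G) u) with hAdef
    have hclose : ∀ e ∈ G, ∀ x ∈ e, x ∈ A → e ⊆ A := by
      intro e he x hxe hxA y hye
      obtain ⟨hxsup, hreach⟩ := Finset.mem_filter.mp hxA
      refine Finset.mem_filter.mpr ⟨edge_subset_sup he hye, ?_⟩
      by_cases hxy : x = y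
      · exact hxy ▸ hreach
      · exact hreach.tail ⟨hxy, e, he, hxe, hye⟩
    have huA : u ∈ A := Finset.mem_filter.mpr ⟨husup, Relation.ReflTransGen.refl⟩
    have hu'A : u' ∉ A := by
      intro h
      obtain ⟨-, hreach⟩ := Finset.mem_filter.mp h
      exact huu' (gallai h2 hν hess hreach M hMG hpdM hMcard humiss hu'miss)
    set GA := G.filter (fun e => e ⊆ A) with hGAdef
    set GB := G.filter (fun e => ¬ e ⊆ A) with hGBdef
    have hGAG : GA ⊆ G := Finset.filter_subset _ _
    have hGBG : GB ⊆ G := Finset.filter_subset _ _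
    have hGBA : ∀ e ∈ GB, ∀ x ∈ e, x ∉ A := by
      intro e he x hxe hxA
      exact (Finset.mem_filter.mp he).2 (hclose e (hGBG he) x hxe hxA)
    set tA := matchingNumber GA with htAdef
    set tB := matchingNumber GB with htBdef
    -- s ≤ tA + tB
    have hle1 : s ≤ tA + tB := by
      have hMA : M.filter (fun e => e ⊆ A) ⊆ GA := by
        intro e he
        exact Finset.mem_filter.mpr ⟨hMG (Finset.mem_of_mem_filter e he),
          (Finset.mem_filter.mp he).2⟩
      have hMB : M.filter (fun e => ¬ e ⊆ A) ⊆ GB := by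
        intro e he
        exact Finset.mem_filter.mpr ⟨hMG (Finset.mem_of_mem_filter e he),
          (Finset.mem_filter.mp he).2⟩
      have h1 := mn_le hMA (pd_mono hpdM (Finset.filter_subset _ _))
      have h2' := mn_le hMB (pd_mono hpdM (Finset.filter_subset _ _))
      have hsplit := Finset.card_filter_add_card_filter_not (s := M)
        (p := fun e => e ⊆ A)
      omega
    -- tA + tB ≤ s
    have hle2 : tA + tB ≤ s := by
      obtain ⟨NA, hNAG, hNAcard, hpdNA⟩ := mn_exists GA
      obtain ⟨NB, hNBG, hNBcard, hpdNB⟩ := mn_exists GB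
      have hdisjAB : ∀ e ∈ NA, ∀ f ∈ NB, Disjoint e f := by
        intro e he f hf
        refine Finset.disjoint_left.mpr ?_
        intro x hxe hxf
        have hxA : x ∈ A := (Finset.mem_filter.mp (hNAG he)).2 hxe
        exact hGBA f (hNBG hf) x hxf hxA
      have hNANB : Disjoint NA NB := by
        refine Finset.disjoint_left.mpr ?_
        intro e heA heB
        have : e.card = 2 := h2 e (hGAG (hNAG heA))
        have hne : e.Nonempty := Finset.card_pos.mp (by omega)
        exact Finset.disjoint_left.mp (hdisjAB e heA e heB) hne.choose_spec hne.choose_spec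
      have hpdU : pd (NA ∪ NB) := by
        unfold pd
        rw [Finset.coe_union]
        refine Set.pairwiseDisjoint_union.mpr ⟨hpdNA, hpdNB, ?_⟩
        intro e he f hf _
        exact hdisjAB e (Finset.mem_coe.mp he) f (Finset.mem_coe.mp hf)
      have hsubU : NA ∪ NB ⊆ G := by
        intro e he
        rcases Finset.mem_union.mp he with h | h
        exacts [hGAG (hNAG h), hGBG (hNBG h)]
      have := mn_le hsubU hpdU
      rw [Finset.card_union_of_disjoint hNANB, hNAcard, hNBcard, hν] at this
      exact this
    have htA1 : 1 ≤ tA := by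
      obtain ⟨e, heG, hue⟩ := Finset.mem_sup.mp husup
      have heGA : e ∈ GA := Finset.mem_filter.mpr ⟨heG, hclose e heG u hue huA⟩
      have h1 : ({e} : Finset (Finset ℕ)).card ≤ tA := by
        refine mn_le ?_ ?_
        · intro f hf; rw [Finset.mem_singleton.mp hf]; exact heGA
        · simp [pd]
      simpa using h1
    have htB1 : 1 ≤ tB := by
      obtain ⟨e, heG, hue⟩ := Finset.mem_sup.mp hu'sup
      have heGB : e ∈ GB := by
        refine Finset.mem_filter.mpr ⟨heG, ?_⟩
        intro hsub
        exact hu'A (hsub hue)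
      have h1 : ({e} : Finset (Finset ℕ)).card ≤ tB := by
        refine mn_le ?_ ?_
        · intro f hf; rw [Finset.mem_singleton.mp hf]; exact heGB
        · simp [pd]
      simpa using h1
    -- bound for each part
    have part : ∀ H : Finset (Finset ℕ), H ⊆ G → 1 ≤ matchingNumber H →
        matchingNumber H < s →
        ∃ R, R ⊆ H.sup id ∧ R.card ≤ matchingNumber H ∧
          (H.filter fun e => e ∩ R = ∅).card ≤ (matchingNumber H + 1).choose 2 := by
      intro H hHG ht1 htlt
      by_cases hsm : (H.sup id).card ≤ 2*(matchingNumber H)+1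
      · exact small_part (fun e he => h2 e (hHG he)) rfl hsm
      · obtain ⟨R, h1, h2', h3⟩ := IH (matchingNumber H) htlt ht1 H
          (fun e he => h2 e (hHG he)) rfl (by omega)
        refine ⟨R, h1, h2', h3.trans ?_⟩
        rw [choose2_succ]
        omega
    obtain ⟨RA, hRAsub, hRAcard, hRAcount⟩ := part GA hGAG htA1 (by omega)
    obtain ⟨RB, hRBsub, hRBcard, hRBcount⟩ := part GB hGBG htB1 (by omega)
    rw [← htAdef] at hRAcard hRAcount
    rw [← htBdef] at hRBcard hRBcount
    refine ⟨RA ∪ RB, ?_, ?_, ?_⟩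
    · intro x hx
      rcases Finset.mem_union.mp hx with h | h
      · exact Finset.le_iff_subset.mp (Finset.sup_mono hGAG) (hRAsub h)
      · exact Finset.le_iff_subset.mp (Finset.sup_mono hGBG) (hRBsub h)
    · calc (RA ∪ RB).card ≤ RA.card + RB.card := Finset.card_union_le _ _
        _ ≤ s := by omega
    · have hsubU : (G.filter fun e => e ∩ (RA ∪ RB) = ∅) ⊆
          (GA.filter fun e => e ∩ RA = ∅) ∪ (GB.filter fun e => e ∩ RB = ∅) := by
        intro e he
        obtain ⟨heG, hpe⟩ := Finset.mem_filter.mp he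
        have hA : e ∩ RA = ∅ := by
          refine Finset.eq_empty_iff_forall_notMem.mpr ?_
          intro x hx
          obtain ⟨h1, h2'⟩ := Finset.mem_inter.mp hx
          exact (Finset.eq_empty_iff_forall_notMem.mp hpe x)
            (Finset.mem_inter.mpr ⟨h1, Finset.mem_union_left _ h2'⟩)
        have hB : e ∩ RB = ∅ := by
          refine Finset.eq_empty_iff_forall_notMem.mpr ?_
          intro x hx
          obtain ⟨h1, h2'⟩ := Finset.mem_inter.mp hx
          exact (Finset.eq_empty_iff_forall_notMem.mp hpe x)
            (Finset.mem_inter.mpr ⟨h1, Finset.mem_union_right _ h2'⟩)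
        by_cases hsubA : e ⊆ A
        · exact Finset.mem_union_left _ (Finset.mem_filter.mpr
            ⟨Finset.mem_filter.mpr ⟨heG, hsubA⟩, hA⟩)
        · exact Finset.mem_union_right _ (Finset.mem_filter.mpr
            ⟨Finset.mem_filter.mpr ⟨heG, hsubA⟩, hB⟩)
      have h1 := Finset.card_le_card hsubU
      have h2' := Finset.card_union_le (GA.filter fun e => e ∩ RA = ∅)
        (GB.filter fun e => e ∩ RB = ∅)
      have h3 := parts_ineq htA1 htB1
      have hsum : tA + tB = s := by omega
      rw [hsum] at h3
      omega



end StmtAux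

open StmtAux in
theorem stmt_19 (n s : ℕ) (hs : 1 ≤ s)
    (G : Finset (Finset ℕ)) (hG : G ⊆ (Finset.Icc 1 n).powersetCard 2)
    (hν : matchingNumber G = s)
    (hiso : ∀ v ∈ Finset.Icc 1 n, ∃ e ∈ G, v ∈ e)
    (hnot : ¬ ∃ W : Finset ℕ, W.card = 2 * s + 1 ∧ ∀ e ∈ G, e ⊆ W) :
    ∃ R ⊆ Finset.Icc 1 n, R.card = s ∧
      (G.filter fun e => e ∩ R = ∅).card ≤ s.choose 2 + 1 := by
  classical
  have h2 : ∀ e ∈ G, e.card = 2 := fun e he => (Finset.mem_powersetCard.mp (hG he)).2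
  have hsupp : G.sup id = Finset.Icc 1 n := by
    apply Finset.Subset.antisymm
    · intro x hx
      obtain ⟨e, he, hxe⟩ := Finset.mem_sup.mp hx
      exact (Finset.mem_powersetCard.mp (hG he)).1 hxe
    · intro v hv
      obtain ⟨e, he, hve⟩ := hiso v hv
      exact Finset.mem_sup.mpr ⟨e, he, hve⟩
  have hn : 2*s+2 ≤ n := by
    by_contra hcon
    push_neg at hcon
    refine hnot ⟨Finset.Icc 1 (2*s+1), ?_, ?_⟩
    · rw [Nat.card_Icc]; omega
    · intro e he
      exact ((Finset.mem_powersetCard.mp (hG he)).1).trans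
        (Finset.Icc_subset_Icc_right (by omega))
  have hsupcard : 2*s+2 ≤ (G.sup id).card := by
    rw [hsupp, Nat.card_Icc]; omega
  obtain ⟨R, hRsub, hRcard, hRcount⟩ := main s hs G h2 hν hsupcard
  have hRIcc : R ⊆ Finset.Icc 1 n := by rw [← hsupp]; exact hRsub
  obtain ⟨R', hRR', hR'sub, hR'card⟩ :=
    Finset.exists_subsuperset_card_eq hRIcc hRcard (by rw [Nat.card_Icc]; omega)
  refine ⟨R', hR'sub, hR'card, ?_⟩
  have hmono : (G.filter fun e => e ∩ R' = ∅) ⊆ (G.filter fun e => e ∩ R = ∅) := by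
    intro e he
    obtain ⟨heG, hpe⟩ := Finset.mem_filter.mp he
    refine Finset.mem_filter.mpr ⟨heG, ?_⟩
    refine Finset.eq_empty_iff_forall_notMem.mpr ?_
    intro x hx
    obtain ⟨h1, h2'⟩ := Finset.mem_inter.mp hx
    exact (Finset.eq_empty_iff_forall_notMem.mp hpe x)
      (Finset.mem_inter.mpr ⟨h1, hRR' h2'⟩)
  exact (Finset.card_le_card hmono).trans hRcount
end
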